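/- arXiv:1307.2478 — 8 statements merged into one kernel-verified Lean document; each statement's English description precedes it below -/
import Mathlib

section
/- Let m>0. There exists a constant C>0 (depending only on m) such that for every λ∈ℂ with Im λ ≠ 0, ∫_{−∞}^{−m} (1/|s−λ|²)·(√(s²−m²)/|s+m|) ds + ∫_{m}^{∞} (1/|s−λ|²)·((s+m)/√(s²−m²)) ds ≤ (4π/|Im λ|)·|Re(λ/k(λ))| + C·max{1/|λ|², 1/|λ−m|², 1/|λ+m|²}. -/
open MeasureTheory

/-- The quasi-momentum `k(λ) = λ·(1 − m²/λ²)^{1/2}` (principal branch). -/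
noncomputable def qmom (m : ℝ) (lam : ℂ) : ℂ := lam * (1 - (m : ℂ) ^ 2 / lam ^ 2) ^ ((1 : ℂ) / 2)

namespace Stmt2Proof
open Complex Filter Set Topology

lemma sqrt_re_pos {w : ℂ} (hw : 0 < ‖w‖ + w.re) :
    ∃ a : ℂ, a ^ 2 = w ∧ 0 < a.re := by
  set t : ℝ := ‖w‖ with ht
  have htre : w.re ≤ t := Complex.re_le_norm w
  have ht0 : 0 < t := by nlinarith
  have hwt_re : 0 < (w + (t : ℂ)).re := by
    simp only [Complex.add_re, Complex.ofReal_re]; linarith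
  have hwt : w + (t : ℂ) ≠ 0 := by
    intro h; rw [h] at hwt_re; simp at hwt_re
  have habs : 0 < ‖w + t‖ := by
    simpa using hwt
  refine ⟨(↑(Real.sqrt t / ‖w + t‖) : ℂ) * (w + t), ?_, ?_⟩
  · have hB : ((‖w + t‖ : ℝ) : ℂ) ≠ 0 := by
      simpa using habs.ne'
    have hB2 : ((‖w + t‖ : ℝ) : ℂ)^2 = (w + t) * ((starRingEnd ℂ) w + (t:ℂ)) := by
      rw [← Complex.ofReal_pow, Complex.sq_norm, ← Complex.mul_conj]
      simp [map_add, Complex.conj_ofReal]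
    have ht2 : ((t : ℝ) : ℂ)^2 = w * (starRingEnd ℂ) w := by
      rw [← Complex.ofReal_pow, ht, Complex.sq_norm, ← Complex.mul_conj]
    have hsq : ((Real.sqrt t : ℝ) : ℂ)^2 = (t : ℂ) := by
      rw [← Complex.ofReal_pow, Real.sq_sqrt ht0.le]
    have key : ((Real.sqrt t : ℝ):ℂ)^2 * (w+t)^2 = w * ((‖w + t‖ : ℝ) : ℂ)^2 := by
      rw [hsq, hB2]
      linear_combination (w + (t:ℂ)) * ht2
    push_cast
    field_simp
    linear_combination key
  · have h1 : 0 < Real.sqrt t / ‖w + t‖ :=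
      div_pos (Real.sqrt_pos.mpr ht0) habs
    have : ((↑(Real.sqrt t / ‖w + t‖) : ℂ) * (w + t)).re
        = (Real.sqrt t / ‖w + t‖) * (w + t).re := by
      simp [Complex.mul_re]
    rw [this]
    exact mul_pos h1 hwt_re


lemma evalJ {a : ℂ} (ha : 0 < a.re) (lam : ℂ) :
    IntegrableOn (fun u : ℝ => (2*lam/((u:ℂ)^2 + a^2)).im) (Ioi (0:ℝ)) ∧
    ∫ u in Ioi (0:ℝ), (2*lam/((u:ℂ)^2 + a^2)).im = Real.pi * (lam/a).im := by
  set b : ℂ := Complex.I * a with hbdef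
  have hbim : 0 < b.im := by simpa [hbdef, Complex.mul_im] using ha
  have ha0 : a ≠ 0 := fun h => by simp [h] at ha
  have hb0 : b ≠ 0 := by simp [hbdef, Complex.I_ne_zero, ha0]
  have hb2 : b^2 = -a^2 := by rw [hbdef]; ring_nf; simp [Complex.I_sq]
  have humb : ∀ u : ℝ, (u:ℂ) - b ≠ 0 := fun u h => by
    have : ((u:ℂ) - b).im = -b.im := by simp
    rw [h] at this; simp at this; linarith
  have hupb : ∀ u : ℝ, (u:ℂ) + b ≠ 0 := fun u h => by
    have : ((u:ℂ) + b).im = b.im := by simp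
    rw [h] at this; simp at this; linarith
  have hfac : ∀ u : ℝ, (u:ℂ)^2 + a^2 = ((u:ℂ) - b) * ((u:ℂ) + b) := fun u => by
    have : ((u:ℂ) - b) * ((u:ℂ) + b) = (u:ℂ)^2 - b^2 := by ring
    rw [this, hb2]; ring
  have hden : ∀ u : ℝ, (u:ℂ)^2 + a^2 ≠ 0 := fun u => by
    rw [hfac u]; exact mul_ne_zero (humb u) (hupb u)
  -- continuity of the integrand
  have hcontC : Continuous (fun u : ℝ => 2*lam/((u:ℂ)^2 + a^2)) := by
    apply Continuous.div continuous_const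
    · continuity
    · exact fun u => hden u
  have hcont : Continuous (fun u : ℝ => (2*lam/((u:ℂ)^2 + a^2)).im) :=
    Complex.continuous_im.comp hcontC
  -- integrability
  have hInt : IntegrableOn (fun u : ℝ => (2*lam/((u:ℂ)^2 + a^2)).im) (Ioi (0:ℝ)) := by
    set R : ℝ := 2 * ‖a‖ + 1 with hR
    have hR0 : 0 < R := by positivity
    have habspos : 0 < ‖a‖ := by simpa using ha0
    have hsplit : Ioi (0:ℝ) = Ioc 0 R ∪ Ioi R := (Ioc_union_Ioi_eq_Ioi hR0.le).symm
    rw [hsplit]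
    apply IntegrableOn.union
    · exact (hcont.integrableOn_Icc).mono_set Ioc_subset_Icc_self
    · apply Integrable.mono' (g := fun u : ℝ => (8 * ‖lam‖) * u^(-2:ℝ))
        ((integrableOn_Ioi_rpow_of_lt (by norm_num) hR0).const_mul _)
        (hcont.aestronglyMeasurable.restrict)
      filter_upwards [ae_restrict_mem measurableSet_Ioi] with u hu
      have huR : R < u := hu
      have hu0 : 0 < u := lt_trans hR0 huR
      have hb_abs : ‖b‖ = ‖a‖ := by simp [hbdef]
      have h1 : u / 2 ≤ ‖(u:ℂ) - b‖ := by
        have := norm_sub_norm_le ((u:ℂ)) b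
        have hnu : ‖(u:ℂ)‖ = u := by
          rw [Complex.norm_real]; exact abs_of_pos hu0
        rw [hnu, hb_abs] at this
        nlinarith [this]
      have h2 : u / 2 ≤ ‖(u:ℂ) + b‖ := by
        have := norm_sub_norm_le ((u:ℂ)) (-b)
        have hnu : ‖(u:ℂ)‖ = u := by
          rw [Complex.norm_real]; exact abs_of_pos hu0
        simp only [sub_neg_eq_add, norm_neg] at this
        rw [hnu, hb_abs] at this
        nlinarith [this]
      have hdenlb : u^2/4 ≤ ‖(u:ℂ)^2 + a^2‖ := by
        rw [hfac u, norm_mul]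
        calc u^2/4 = (u/2) * (u/2) := by ring
        _ ≤ _ := by
            apply mul_le_mul h1 h2 (by positivity)
            exact (norm_nonneg _)
      have hbound : ‖2*lam/((u:ℂ)^2 + a^2)‖ ≤ (8 * ‖lam‖) * u^(-2:ℝ) := by
        rw [norm_div, norm_mul]
        have h4 : (0:ℝ) < u^2/4 := by positivity
        have hstep : ‖(2:ℂ)‖ * ‖lam‖ / ‖(u:ℂ)^2 + a^2‖
            ≤ ‖(2:ℂ)‖ * ‖lam‖ / (u^2/4) :=
          div_le_div_of_nonneg_left (by positivity) h4 hdenlb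
        refine hstep.trans (le_of_eq ?_)
        have hrpow : u^(-2:ℝ) = (u^2)⁻¹ := by
          rw [Real.rpow_neg hu0.le]
          congr 1
          rw [← Real.rpow_natCast u 2]
          norm_num
        rw [hrpow, Complex.norm_two]
        field_simp
        ring
      calc ‖(2*lam/((u:ℂ)^2 + a^2)).im‖ ≤ ‖2*lam/((u:ℂ)^2 + a^2)‖ := by
            rw [Real.norm_eq_abs]; exact Complex.abs_im_le_norm _
      _ ≤ _ := hbound
  refine ⟨hInt, ?_⟩
  -- antiderivative
  set G : ℝ → ℂ := fun u => (lam/b) * (Complex.log ((u:ℂ) - b) - Complex.log ((u:ℂ) + b)) with hGdef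
  have hGd : ∀ u : ℝ, HasDerivAt G (2*lam/((u:ℂ)^2 + a^2)) u := by
    intro u
    have hslit1 : ((u:ℂ) - b) ∈ Complex.slitPlane := by
      rw [Complex.mem_slitPlane_iff]
      right
      simp only [Complex.sub_im, Complex.ofReal_im, zero_sub]
      exact neg_ne_zero.mpr hbim.ne'
    have hslit2 : ((u:ℂ) + b) ∈ Complex.slitPlane := by
      rw [Complex.mem_slitPlane_iff]
      right
      simp only [Complex.add_im, Complex.ofReal_im, zero_add]
      exact hbim.ne'
    have hd1 : HasDerivAt (fun z : ℂ => Complex.log (z - b)) (((u:ℂ) - b)⁻¹) (u:ℂ) := by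
      have := (Complex.hasDerivAt_log hslit1).comp (u:ℂ) ((hasDerivAt_id (u:ℂ)).sub_const b)
      simpa [Function.comp_def] using this
    have hd2 : HasDerivAt (fun z : ℂ => Complex.log (z + b)) (((u:ℂ) + b)⁻¹) (u:ℂ) := by
      have := (Complex.hasDerivAt_log hslit2).comp (u:ℂ) ((hasDerivAt_id (u:ℂ)).add_const b)
      simpa [Function.comp_def] using this
    have hd : HasDerivAt (fun z : ℂ => (lam/b) * (Complex.log (z - b) - Complex.log (z + b)))
        ((lam/b) * (((u:ℂ) - b)⁻¹ - ((u:ℂ) + b)⁻¹)) (u:ℂ) := (hd1.sub hd2).const_mul _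
    have := hd.comp_ofReal
    convert this using 1
    rw [hfac u]
    field_simp [humb u, hupb u, hb0]
    ring
  -- limit at infinity
  have hinv0 : Tendsto (fun u : ℝ => ((u:ℂ))⁻¹) atTop (𝓝 0) := by
    have h1 : Tendsto (fun u : ℝ => u⁻¹) atTop (𝓝 (0:ℝ)) := tendsto_inv_atTop_zero
    have h2 := (Complex.continuous_ofReal.tendsto (0:ℝ)).comp h1
    simp only [Complex.ofReal_zero] at h2
    refine h2.congr fun u => ?_
    simp
  have hargp : Tendsto (fun u : ℝ => Complex.arg ((u:ℂ) + b)) atTop (𝓝 0) := by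
    have h1 : Tendsto (fun u : ℝ => 1 + b * ((u:ℂ))⁻¹) atTop (𝓝 1) := by
      have h0 := (tendsto_const_nhds (x := (1:ℂ)) (f := atTop (α := ℝ))).add (hinv0.const_mul b)
      simpa using h0
    have h2 := ((Complex.continuousAt_arg (x := 1) (by simp [Complex.mem_slitPlane_iff])).tendsto.comp h1)
    rw [Complex.arg_one] at h2
    refine h2.congr' ?_
    filter_upwards [eventually_gt_atTop (0:ℝ)] with u hu
    have heq : (u:ℂ) + b = (u:ℝ) * (1 + b * ((u:ℂ))⁻¹) := by
      have : (u:ℂ) ≠ 0 := by exact_mod_cast hu.ne'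
      field_simp
    rw [Function.comp_apply, ← Complex.arg_real_mul (1 + b * ((u:ℂ))⁻¹) hu, ← heq]
  have hargm : Tendsto (fun u : ℝ => Complex.arg ((u:ℂ) - b)) atTop (𝓝 0) := by
    have h1 : Tendsto (fun u : ℝ => 1 - b * ((u:ℂ))⁻¹) atTop (𝓝 1) := by
      have h0 := (tendsto_const_nhds (x := (1:ℂ)) (f := atTop (α := ℝ))).sub (hinv0.const_mul b)
      simpa using h0
    have h2 := ((Complex.continuousAt_arg (x := 1) (by simp [Complex.mem_slitPlane_iff])).tendsto.comp h1)
    rw [Complex.arg_one] at h2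
    refine h2.congr' ?_
    filter_upwards [eventually_gt_atTop (0:ℝ)] with u hu
    have heq : (u:ℂ) - b = (u:ℝ) * (1 - b * ((u:ℂ))⁻¹) := by
      have : (u:ℂ) ≠ 0 := by exact_mod_cast hu.ne'
      field_simp
    rw [Function.comp_apply, ← Complex.arg_real_mul (1 - b * ((u:ℂ))⁻¹) hu, ← heq]
  have hq : Tendsto (fun u : ℝ => ((u:ℂ) - b)/((u:ℂ) + b)) atTop (𝓝 1) := by
    have hnorm : Tendsto (fun u : ℝ => ‖(u:ℂ) + b‖) atTop atTop := by
      apply tendsto_atTop_mono _ (tendsto_atTop_add_const_right _ (-‖b‖) tendsto_id)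
      intro u
      have := norm_sub_norm_le ((u:ℂ)) (-b)
      simp only [sub_neg_eq_add, norm_neg, Complex.norm_real, Real.norm_eq_abs] at this
      calc id u + -‖b‖ ≤ |u| - ‖b‖ := by
            simp only [id]
            have : u ≤ |u| := le_abs_self u
            linarith
      _ ≤ _ := this
    have h2 : Tendsto (fun u : ℝ => 2*b/((u:ℂ) + b)) atTop (𝓝 0) := by
      rw [tendsto_zero_iff_norm_tendsto_zero]
      have heq : (fun u : ℝ => ‖2*b/((u:ℂ)+b)‖) = fun u : ℝ => ‖2*b‖ / ‖(u:ℂ)+b‖ := by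
        funext u; simp [norm_div]
      rw [heq]
      exact tendsto_const_nhds.div_atTop hnorm
    have heq : ∀ u : ℝ, ((u:ℂ) - b)/((u:ℂ) + b) = 1 - 2*b/((u:ℂ) + b) := fun u => by
      field_simp [hupb u]
      ring
    simp_rw [heq]
    have h0 := (tendsto_const_nhds (x := (1:ℂ)) (f := atTop (α := ℝ))).sub h2
    simpa using h0
  have hargq : Tendsto (fun u : ℝ => Complex.arg (((u:ℂ) - b)/((u:ℂ) + b))) atTop (𝓝 0) := by
    have h2 := ((Complex.continuousAt_arg (x := 1) (by simp [Complex.mem_slitPlane_iff])).tendsto.comp hq)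
    rw [Complex.arg_one] at h2
    exact h2
  have hlogq : Tendsto (fun u : ℝ => Complex.log (((u:ℂ) - b)/((u:ℂ) + b))) atTop (𝓝 0) := by
    have h2 := ((continuousAt_clog (x := 1) (by simp [Complex.mem_slitPlane_iff])).tendsto.comp hq)
    rw [Complex.log_one] at h2
    exact h2
  have hev : ∀ᶠ u : ℝ in atTop, Complex.log ((u:ℂ) - b) - Complex.log ((u:ℂ) + b)
      = Complex.log (((u:ℂ) - b)/((u:ℂ) + b)) := by
    have hpi : (0:ℝ) < Real.pi/2 := by positivity
    filter_upwards [hargq.eventually (Ioo_mem_nhds (show -(Real.pi/2) < 0 by linarith) hpi),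
      hargp.eventually (Ioo_mem_nhds (show -(Real.pi/2) < 0 by linarith) hpi)] with u h1 h2
    have hq0 : ((u:ℂ) - b)/((u:ℂ) + b) ≠ 0 := div_ne_zero (humb u) (hupb u)
    have hmul : Complex.log ((((u:ℂ) - b)/((u:ℂ) + b)) * ((u:ℂ) + b))
        = Complex.log (((u:ℂ) - b)/((u:ℂ) + b)) + Complex.log ((u:ℂ) + b) := by
      apply Complex.log_mul hq0 (hupb u)
      constructor
      · obtain ⟨ha1, _⟩ := h1
        obtain ⟨ha2, _⟩ := h2
        have := Real.pi_pos
        linarith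
      · obtain ⟨_, ha1⟩ := h1
        obtain ⟨_, ha2⟩ := h2
        have := Real.pi_pos
        linarith
    rw [div_mul_cancel₀ _ (hupb u)] at hmul
    rw [hmul]
    ring
  have hGtop : Tendsto G atTop (𝓝 0) := by
    have hlog : Tendsto (fun u : ℝ => Complex.log ((u:ℂ) - b) - Complex.log ((u:ℂ) + b)) atTop (𝓝 0) :=
      hlogq.congr' (hev.mono fun u h => h.symm)
    have := hlog.const_mul (lam/b)
    simpa [hGdef] using this
  -- value at 0
  have hlogdiff : Complex.log (((0:ℝ):ℂ) - b) - Complex.log (((0:ℝ):ℂ) + b)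
      = -(Real.pi:ℂ) * Complex.I := by
    have harg : Complex.arg (-b) = Complex.arg b - Real.pi :=
      Complex.arg_neg_eq_arg_sub_pi_of_im_pos hbim
    apply Complex.ext
    · simp [Complex.log_re]
    · simp [Complex.log_im, harg]
  have hlb : lam / b = -Complex.I * (lam / a) := by
    rw [hbdef]
    rw [div_mul_eq_div_div_swap, Complex.div_I]
    ring
  have hG0 : (G 0).im = -(Real.pi * (lam/a).im) := by
    have h1 : G 0 = -(Real.pi:ℂ) * (lam/a) := by
      show lam / b * (Complex.log (((0:ℝ):ℂ) - b) - Complex.log (((0:ℝ):ℂ) + b)) = _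
      rw [hlogdiff, hlb]
      have : Complex.I * Complex.I = -1 := Complex.I_mul_I
      linear_combination (Real.pi:ℂ) * (lam/a) * this
    rw [h1]
    simp
  -- conclude
  have hHd : ∀ u ∈ Ici (0:ℝ), HasDerivAt (fun u : ℝ => (G u).im)
      ((2*lam/((u:ℂ)^2 + a^2)).im) u := by
    intro u _
    exact Complex.imCLM.hasFDerivAt.comp_hasDerivAt u (hGd u)
  have hHtop : Tendsto (fun u : ℝ => (G u).im) atTop (𝓝 0) := by
    have := (Complex.continuous_im.tendsto 0).comp hGtop
    simpa [Function.comp_def] using this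
  have hval := integral_Ioi_of_hasDerivAt_of_tendsto' hHd hInt hHtop
  rw [hval, hG0]
  ring


set_option maxHeartbeats 2000000 in
lemma key (m : ℝ) (hm : 0 < m) (lam : ℂ) (hy : 0 < lam.im) :
    (∫ s in Set.Iic (-m), (1 / (‖(s : ℂ) - lam‖) ^ 2)
          * (Real.sqrt (s ^ 2 - m ^ 2) / |s + m|))
      + (∫ s in Set.Ici m, (1 / (‖(s : ℂ) - lam‖) ^ 2)
          * ((s + m) / Real.sqrt (s ^ 2 - m ^ 2)))
    ≤ (4 * Real.pi / |lam.im|) * |(lam / qmom m lam).re| := by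
  have hy0 : lam.im ≠ 0 := hy.ne'
  have hlam0 : lam ≠ 0 := fun h => by rw [h] at hy; simp at hy
  have hlam2 : lam^2 ≠ ((m:ℂ))^2 := by
    intro h
    have h2 : (lam - m) * (lam + m) = 0 := by linear_combination h
    rcases mul_eq_zero.mp h2 with h3 | h3
    · have : lam = (m:ℂ) := by linear_combination h3
      rw [this] at hy; simp at hy
    · have : lam = -(m:ℂ) := by linear_combination h3
      rw [this] at hy; simp at hy
  set w : ℂ := (m:ℂ)^2 - lam^2 with hwdef
  have hw0 : w ≠ 0 := sub_ne_zero.mpr (Ne.symm hlam2)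
  have hw_re : w.re = m^2 - (lam.re^2 - lam.im^2) := by
    simp [hwdef, pow_two, Complex.mul_re, Complex.sub_re, Complex.ofReal_re, Complex.ofReal_im]
  have hw_im : w.im = -(2 * lam.re * lam.im) := by
    simp [hwdef, pow_two, Complex.mul_im, Complex.sub_im, Complex.ofReal_re, Complex.ofReal_im]
    ring
  have hw_slit : 0 < ‖w‖ + w.re := by
    rcases eq_or_ne lam.re 0 with hre | hre
    · have h1 : 0 < w.re := by rw [hw_re, hre]; nlinarith
      have h2 : 0 ≤ ‖w‖ := norm_nonneg w
      linarith
    · have him : w.im ≠ 0 := by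
        rw [hw_im]
        intro h
        have : lam.re * lam.im = 0 := by linarith
        rcases mul_eq_zero.mp this with h' | h' <;> [exact hre h'; exact hy0 h']
      have h1 : (‖w‖)^2 = w.re^2 + w.im^2 := by
        rw [Complex.sq_norm, Complex.normSq_apply]; ring
      have h2 : 0 ≤ ‖w‖ := norm_nonneg w
      nlinarith [sq_pos_of_ne_zero him]
  obtain ⟨a, ha2, hare⟩ := sqrt_re_pos hw_slit
  obtain ⟨hInt, hval⟩ := evalJ hare lam
  set fI : ℝ → ℝ := fun u => (2*lam/((u:ℂ)^2 + a^2)).im with hfIdef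
  set f : ℝ → ℝ := fun s => Real.sqrt (s^2 - m^2) with hfdef
  set f' : ℝ → ℝ := fun s => s / Real.sqrt (s^2 - m^2) with hf'def
  -- basic facts about f on Ioi m
  have hsq_pos : ∀ s ∈ Ioi m, 0 < s^2 - m^2 := fun s hs => by
    have : m < s := hs
    nlinarith
  have hf_pos : ∀ s ∈ Ioi m, 0 < f s := fun s hs => Real.sqrt_pos.mpr (hsq_pos s hs)
  have himg : f '' Ioi m = Ioi (0:ℝ) := by
    apply Set.eq_of_subset_of_subset
    · rintro u ⟨s, hs, rfl⟩
      exact hf_pos s hs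
    · rintro u hu
      refine ⟨Real.sqrt (u^2 + m^2), ?_, ?_⟩
      · have h1 : m = Real.sqrt (m^2) := (Real.sqrt_sq hm.le).symm
        have hu0 : (0:ℝ) < u := hu
        rw [Set.mem_Ioi]
        calc m = Real.sqrt (m^2) := h1
        _ < Real.sqrt (u^2 + m^2) := by
            apply Real.sqrt_lt_sqrt (by positivity)
            nlinarith
      · show Real.sqrt ((Real.sqrt (u^2+m^2))^2 - m^2) = u
        rw [Real.sq_sqrt (by positivity)]
        have hu0 : (0:ℝ) < u := hu
        rw [show u^2 + m^2 - m^2 = u^2 by ring, Real.sqrt_sq hu0.le]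
  have hderiv : ∀ s ∈ Ioi m, HasDerivWithinAt f (f' s) (Ioi m) s := by
    intro s hs
    have h1 : HasDerivAt (fun s : ℝ => s^2 - m^2) (2*s) s := by
      simpa using ((hasDerivAt_pow 2 s).sub_const (m^2))
    have h2 := (Real.hasDerivAt_sqrt (hsq_pos s hs).ne').comp s h1
    have h3 : 1 / (2 * Real.sqrt (s^2 - m^2)) * (2*s) = f' s := by
      rw [hf'def]
      have := (hf_pos s hs)
      field_simp [hfdef]
    rw [← h3]
    exact (h2.congr_deriv (by ring)).hasDerivWithinAt
  have hinj : Set.InjOn f (Ioi m) := by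
    have hmono : StrictMonoOn f (Ioi m) := by
      intro s1 h1 s2 h2 h12
      apply Real.sqrt_lt_sqrt (by nlinarith [Set.mem_Ioi.mp h1])
      have : m < s1 := h1
      nlinarith
    exact hmono.injOn
  -- substitution
  have hsub : ∫ u in Ioi (0:ℝ), fI u = ∫ s in Ioi m, |f' s| • fI (f s) := by
    rw [← himg]
    exact integral_image_eq_integral_abs_deriv_smul measurableSet_Ioi hderiv hinj fI
  have hIntS : IntegrableOn (fun s => |f' s| • fI (f s)) (Ioi m) := by
    rw [← integrableOn_image_iff_integrableOn_abs_deriv_smul measurableSet_Ioi hderiv hinj fI]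
    rw [himg]
    exact hInt
  -- pointwise identity on Ioi m
  have hsmC : ∀ s : ℝ, (s:ℂ) - lam ≠ 0 := by
    intro s h
    have h1 : ((s:ℂ) - lam).im = -lam.im := by simp
    rw [h] at h1
    simp only [Complex.zero_im] at h1
    exact hy0 (by linarith)
  have hspC : ∀ s : ℝ, (s:ℂ) + lam ≠ 0 := by
    intro s h
    have h1 : ((s:ℂ) + lam).im = lam.im := by simp
    rw [h] at h1
    simp only [Complex.zero_im] at h1
    exact hy0 h1.symm
  have habsm : ∀ s : ℝ, 0 < ‖(s:ℂ) - lam‖ := fun s => by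
    simpa using hsmC s
  have habsp : ∀ s : ℝ, 0 < ‖(s:ℂ) + lam‖ := fun s => by
    simpa using hspC s
  have hpt : ∀ s ∈ Ioi m, |f' s| • fI (f s)
      = lam.im * ((s / Real.sqrt (s^2-m^2)) *
        (1/(‖(s:ℂ)-lam‖)^2 + 1/(‖(s:ℂ)+lam‖)^2)) := by
    intro s hs
    have hfs := hf_pos s hs
    have hsm : (0:ℝ) < s := lt_trans hm hs
    have habs : |f' s| = s / Real.sqrt (s^2-m^2) := by
      rw [hf'def]
      exact abs_of_nonneg (div_nonneg hsm.le (Real.sqrt_nonneg _))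
    have hcast : ((f s : ℝ):ℂ)^2 + a^2 = ((s:ℂ) - lam) * ((s:ℂ) + lam) := by
      have h1 : ((f s : ℝ):ℂ)^2 = ((s^2 - m^2 : ℝ) : ℂ) := by
        rw [← Complex.ofReal_pow, hfdef]
        norm_cast
        exact Real.sq_sqrt (hsq_pos s hs).le
      rw [h1, ha2, hwdef]
      push_cast
      ring
    have hdecomp : 2*lam/(((f s :ℝ):ℂ)^2 + a^2) = ((s:ℂ)-lam)⁻¹ - ((s:ℂ)+lam)⁻¹ := by
      rw [hcast]
      field_simp [hsmC s, hspC s]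
      ring
    have e1 : (((s:ℂ)-lam)⁻¹).im = lam.im / (‖(s:ℂ)-lam‖)^2 := by
      rw [Complex.inv_im, Complex.sq_norm]
      simp
    have e2 : (((s:ℂ)+lam)⁻¹).im = -(lam.im / (‖(s:ℂ)+lam‖)^2) := by
      rw [Complex.inv_im, Complex.sq_norm]
      simp [neg_div]
    have him : fI (f s) = lam.im * (1/(‖(s:ℂ)-lam‖)^2 + 1/(‖(s:ℂ)+lam‖)^2) := by
      show (2*lam/(((f s :ℝ):ℂ)^2 + a^2)).im = _
      rw [hdecomp, Complex.sub_im, e1, e2]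
      field_simp
      ring
    rw [smul_eq_mul, habs, him]
    ring
  -- the two comparison bounds
  have hmajInt : IntegrableOn (fun s => (2/lam.im) * (|f' s| • fI (f s))) (Ioi m) :=
    hIntS.const_mul _
  have hmaj_val : ∫ s in Ioi m, (2/lam.im) * (|f' s| • fI (f s))
      = (2/lam.im) * (Real.pi * (lam/a).im) := by
    rw [MeasureTheory.integral_const_mul, ← hsub, hval]
  have hBle : (∫ s in Set.Ici m, (1 / (‖(s : ℂ) - lam‖) ^ 2)
          * ((s + m) / Real.sqrt (s ^ 2 - m ^ 2)))
      ≤ (2/lam.im) * (Real.pi * (lam/a).im) := by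
    rw [integral_Ici_eq_integral_Ioi, ← hmaj_val]
    apply integral_mono_of_nonneg
    · filter_upwards [ae_restrict_mem measurableSet_Ioi] with s hs
      have hsm : (0:ℝ) < s := lt_trans hm hs
      have h1 : m ≤ s := (le_of_lt hs)
      positivity
    · exact hmajInt
    · filter_upwards [ae_restrict_mem measurableSet_Ioi] with s hs
      rw [hpt s hs]
      have hfs := hf_pos s hs
      have hsm : (0:ℝ) < s := lt_trans hm hs
      have hyy : ∀ X : ℝ, (2/lam.im) * (lam.im * X) = 2 * X := fun X => by
        field_simp
      rw [hyy]
      have hfs' : 0 < Real.sqrt (s^2-m^2) := hfs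
      have h1 : (s+m)/Real.sqrt (s^2-m^2) ≤ 2*s/Real.sqrt (s^2-m^2) := by
        gcongr
        linarith [Set.mem_Ioi.mp hs]
      have hA : (0:ℝ) ≤ 1/(‖(s:ℂ)-lam‖)^2 := by positivity
      have hB : (0:ℝ) ≤ 1/(‖(s:ℂ)+lam‖)^2 := by positivity
      have hds : (0:ℝ) ≤ s / Real.sqrt (s^2-m^2) := div_nonneg hsm.le (Real.sqrt_nonneg _)
      calc (1 / (‖(s : ℂ) - lam‖) ^ 2) * ((s + m) / Real.sqrt (s ^ 2 - m ^ 2))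
          ≤ (1 / (‖(s : ℂ) - lam‖) ^ 2) * (2*s / Real.sqrt (s ^ 2 - m ^ 2)) :=
            mul_le_mul_of_nonneg_left h1 hA
      _ ≤ _ := by
          have h2 : (0:ℝ) ≤ 2*(s / Real.sqrt (s^2-m^2)) * (1/(‖(s:ℂ)+lam‖)^2) := by
            positivity
          have h3 : (1 / (‖(s : ℂ) - lam‖) ^ 2) * (2*s / Real.sqrt (s ^ 2 - m ^ 2))
              = 2*(s / Real.sqrt (s^2-m^2)) * (1/(‖(s:ℂ)-lam‖)^2) := by
            ring
          have h4 : 2 * ((s / Real.sqrt (s^2-m^2)) *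
              (1/(‖(s:ℂ)-lam‖)^2 + 1/(‖(s:ℂ)+lam‖)^2))
              = 2*(s / Real.sqrt (s^2-m^2)) * (1/(‖(s:ℂ)-lam‖)^2)
                + 2*(s / Real.sqrt (s^2-m^2)) * (1/(‖(s:ℂ)+lam‖)^2) := by
            ring
          rw [h3, h4]
          linarith
  have hAle : (∫ s in Set.Iic (-m), (1 / (‖(s : ℂ) - lam‖) ^ 2)
          * (Real.sqrt (s ^ 2 - m ^ 2) / |s + m|))
      ≤ (2/lam.im) * (Real.pi * (lam/a).im) := by
    have hrefl : (∫ s in Set.Iic (-m), (1 / (‖(s : ℂ) - lam‖) ^ 2)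
            * (Real.sqrt (s ^ 2 - m ^ 2) / |s + m|))
        = ∫ s in Ioi m, (1 / (‖(s:ℂ) + lam‖)^2) * (Real.sqrt (s^2 - m^2) / (s - m)) := by
      have heq := integral_comp_neg_Iic (-m)
        (fun x => (1 / (‖(x:ℂ) + lam‖)^2) * (Real.sqrt (x^2 - m^2) / (x - m)))
      rw [neg_neg] at heq
      rw [← heq]
      apply MeasureTheory.setIntegral_congr_fun measurableSet_Iic
      intro s hs
      have h1 : ((-s:ℝ):ℂ) + lam = -((s:ℂ) - lam) := by push_cast; ring
      have h2 : ‖((-s:ℝ):ℂ) + lam‖ = ‖(s:ℂ) - lam‖ := by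
        rw [h1, norm_neg]
      have hs' : s + m ≤ 0 := by
        have : s ≤ -m := hs
        linarith
      show (1 / (‖(s : ℂ) - lam‖) ^ 2) * (Real.sqrt (s ^ 2 - m ^ 2) / |s + m|)
          = (1 / (‖((-s:ℝ):ℂ) + lam‖)^2) * (Real.sqrt ((-s)^2 - m^2) / ((-s) - m))
      rw [h2, neg_sq, abs_of_nonpos hs', show -s - m = -(s+m) by ring]
    rw [hrefl, ← hmaj_val]
    apply integral_mono_of_nonneg
    · filter_upwards [ae_restrict_mem measurableSet_Ioi] with s hs
      have h1 : m ≤ s := (le_of_lt hs)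
      have h2 : (0:ℝ) ≤ s - m := by linarith
      positivity
    · exact hmajInt
    · filter_upwards [ae_restrict_mem measurableSet_Ioi] with s hs
      rw [hpt s hs]
      have hfs := hf_pos s hs
      have hsm : (0:ℝ) < s := lt_trans hm hs
      have hsgm : m < s := hs
      have hyy : ∀ X : ℝ, (2/lam.im) * (lam.im * X) = 2 * X := fun X => by
        field_simp
      rw [hyy]
      have hfs' : 0 < Real.sqrt (s^2-m^2) := hfs
      have hval1 : Real.sqrt (s^2 - m^2) / (s - m) = (s+m) / Real.sqrt (s^2-m^2) := by
        rw [div_eq_div_iff (by intro h0; have := Set.mem_Ioi.mp hs; nlinarith [h0] : s - m ≠ 0) hfs'.ne']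
        rw [Real.mul_self_sqrt (hsq_pos s hs).le]
        ring
      rw [hval1]
      have h1 : (s+m)/Real.sqrt (s^2-m^2) ≤ 2*s/Real.sqrt (s^2-m^2) := by
        gcongr
        linarith
      have hA : (0:ℝ) ≤ 1/(‖(s:ℂ)-lam‖)^2 := by positivity
      have hB : (0:ℝ) ≤ 1/(‖(s:ℂ)+lam‖)^2 := by positivity
      calc (1 / (‖(s : ℂ) + lam‖) ^ 2) * ((s + m) / Real.sqrt (s ^ 2 - m ^ 2))
          ≤ (1 / (‖(s : ℂ) + lam‖) ^ 2) * (2*s / Real.sqrt (s ^ 2 - m ^ 2)) :=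
            mul_le_mul_of_nonneg_left h1 hB
      _ ≤ _ := by
          have h2 : (0:ℝ) ≤ 2*(s / Real.sqrt (s^2-m^2)) * (1/(‖(s:ℂ)-lam‖)^2) := by
            positivity
          have h3 : (1 / (‖(s : ℂ) + lam‖) ^ 2) * (2*s / Real.sqrt (s ^ 2 - m ^ 2))
              = 2*(s / Real.sqrt (s^2-m^2)) * (1/(‖(s:ℂ)+lam‖)^2) := by
            ring
          have h4 : 2 * ((s / Real.sqrt (s^2-m^2)) *
              (1/(‖(s:ℂ)-lam‖)^2 + 1/(‖(s:ℂ)+lam‖)^2))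
              = 2*(s / Real.sqrt (s^2-m^2)) * (1/(‖(s:ℂ)-lam‖)^2)
                + 2*(s / Real.sqrt (s^2-m^2)) * (1/(‖(s:ℂ)+lam‖)^2) := by
            ring
          rw [h3, h4]
          linarith
  -- qmom algebra
  have hz0 : (1 - (m:ℂ)^2/lam^2) ≠ 0 := by
    intro h
    apply hlam2
    have h2 : lam^2 ≠ 0 := pow_ne_zero 2 hlam0
    field_simp at h
    first
    | exact h
    | exact h.symm
    | linear_combination h
    | linear_combination -h
  have hk2 : (qmom m lam)^2 = lam^2 - (m:ℂ)^2 := by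
    rw [qmom, mul_pow]
    have h1 : ((1 - (m:ℂ)^2/lam^2) ^ ((1:ℂ)/2))^2 = 1 - (m:ℂ)^2/lam^2 := by
      rw [sq, ← Complex.cpow_add _ _ hz0]
      norm_num
    rw [h1]
    have hl2 : lam^2 ≠ 0 := pow_ne_zero 2 hlam0
    field_simp
  have ha2' : a^2 = (m:ℂ)^2 - lam^2 := by rw [ha2, hwdef]
  have hIa : (Complex.I * a)^2 = (qmom m lam)^2 := by
    rw [hk2]
    have hI2 : Complex.I^2 = -1 := Complex.I_sq
    linear_combination a^2 * hI2 - ha2'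
  have hcase : qmom m lam = Complex.I*a ∨ qmom m lam = -(Complex.I*a) := by
    have h2 : (qmom m lam - Complex.I*a) * (qmom m lam + Complex.I*a) = 0 := by
      linear_combination -hIa
    rcases mul_eq_zero.mp h2 with h3 | h3
    · exact Or.inl (sub_eq_zero.mp h3)
    · exact Or.inr (by linear_combination h3)
  have habs_eq : |(lam/a).im| = |(lam / qmom m lam).re| := by
    have hIare : (lam / (Complex.I * a)).re = (lam/a).im := by
      have h1 : lam / (Complex.I*a) = -Complex.I * (lam/a) := by
        rw [div_mul_eq_div_div_swap, Complex.div_I]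
        ring
      rw [h1]
      simp [Complex.mul_re]
    rcases hcase with h | h
    · rw [h, hIare]
    · rw [h]
      have : lam / (-(Complex.I*a)) = -(lam / (Complex.I*a)) := by ring
      rw [this, Complex.neg_re, abs_neg, hIare]
  -- final chain
  have hcoef : 0 ≤ 4 * Real.pi / lam.im := by positivity
  have habs_y : |lam.im| = lam.im := abs_of_pos hy
  calc (∫ s in Set.Iic (-m), (1 / (‖(s : ℂ) - lam‖) ^ 2)
          * (Real.sqrt (s ^ 2 - m ^ 2) / |s + m|))
        + (∫ s in Set.Ici m, (1 / (‖(s : ℂ) - lam‖) ^ 2)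
          * ((s + m) / Real.sqrt (s ^ 2 - m ^ 2)))
      ≤ (2/lam.im) * (Real.pi * (lam/a).im) + (2/lam.im) * (Real.pi * (lam/a).im) :=
        add_le_add hAle hBle
  _ = (4 * Real.pi / lam.im) * (lam/a).im := by ring
  _ ≤ (4 * Real.pi / lam.im) * |(lam/a).im| :=
        mul_le_mul_of_nonneg_left (le_abs_self _) hcoef
  _ = (4 * Real.pi / |lam.im|) * |(lam / qmom m lam).re| := by
        rw [habs_y, habs_eq]



lemma qmom_conj (m : ℝ) (lam : ℂ) (him : lam.im ≠ 0) :
    qmom m ((starRingEnd ℂ) lam) = (starRingEnd ℂ) (qmom m lam) := by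
  have hlam0 : lam ≠ 0 := fun h => him (by simp [h])
  have hl2 : lam^2 ≠ 0 := pow_ne_zero 2 hlam0
  have hnsq : 0 < Complex.normSq (lam^2) := Complex.normSq_pos.mpr hl2
  set z : ℂ := 1 - (m:ℂ)^2/lam^2 with hzdef
  have hsqim : (lam^2).im = 2*lam.re*lam.im := by
    simp [pow_two, Complex.mul_im]; ring
  have hsqre : (lam^2).re = lam.re^2 - lam.im^2 := by
    simp [pow_two, Complex.mul_re]
  have hzim : z.im = m^2 * (lam^2).im / Complex.normSq (lam^2) := by
    rw [hzdef]
    simp [Complex.sub_im, Complex.div_im, Complex.one_im, pow_two, Complex.mul_im,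
      Complex.mul_re, Complex.ofReal_re, Complex.ofReal_im]
  have hzre : z.re = 1 - m^2 * (lam^2).re / Complex.normSq (lam^2) := by
    rw [hzdef]
    simp [Complex.sub_re, Complex.div_re, Complex.one_re, pow_two, Complex.mul_im,
      Complex.mul_re, Complex.ofReal_re, Complex.ofReal_im]
  have harg : z.arg ≠ Real.pi := by
    intro h
    obtain ⟨hre, him0⟩ := Complex.arg_eq_pi_iff.mp h
    rw [hzim] at him0
    have h2 : m^2 * (lam^2).im = 0 := by
      field_simp at him0
      linarith
    have hpos : 0 < z.re := by
      rcases mul_eq_zero.mp h2 with h3 | h3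
      · have hm0 : m = 0 := by nlinarith
        rw [hzre, hm0]
        simp
      · rw [hsqim] at h3
        have hx0 : lam.re = 0 := by
          rcases mul_eq_zero.mp h3 with h4 | h4
          · rcases mul_eq_zero.mp h4 with h5 | h5
            · norm_num at h5
            · exact h5
          · exact absurd h4 him
        have hnsq_eq : Complex.normSq (lam^2) = lam.im^4 := by
          rw [Complex.normSq_apply, hsqre, hsqim, hx0]
          ring
        rw [hzre, hsqre, hx0, hnsq_eq]
        have him2 : 0 < lam.im^2 := by positivity
        rw [show (0:ℝ)^2 - lam.im^2 = -(lam.im^2) by ring]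
        have : m^2 * -(lam.im^2) / lam.im^4 = -(m^2/lam.im^2) := by
          field_simp
        rw [this]
        have : 0 ≤ m^2/lam.im^2 := by positivity
        nlinarith [sq_nonneg (m/lam.im), div_pos (by positivity : (0:ℝ) < 1) him2]
    linarith
  have hzconj : 1 - (m:ℂ)^2/((starRingEnd ℂ) lam)^2 = (starRingEnd ℂ) z := by
    rw [hzdef]
    simp [map_sub, map_div₀, map_pow, map_one, Complex.conj_ofReal]
  have hhalf : (starRingEnd ℂ) ((1:ℂ)/2) = (1:ℂ)/2 := by
    simp [map_div₀, map_one, map_ofNat]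
  rw [qmom, qmom, hzconj]
  rw [Complex.conj_cpow z ((1:ℂ)/2) harg, hhalf]
  rw [← map_mul]



end Stmt2Proof

theorem stmt2 (m : ℝ) (hm : 0 < m) :
    ∃ C > (0 : ℝ), ∀ lam : ℂ, lam.im ≠ 0 →
      (∫ s in Set.Iic (-m), (1 / ‖(s : ℂ) - lam‖ ^ 2)
            * (Real.sqrt (s ^ 2 - m ^ 2) / |s + m|))
        + (∫ s in Set.Ici m, (1 / ‖(s : ℂ) - lam‖ ^ 2)
            * ((s + m) / Real.sqrt (s ^ 2 - m ^ 2)))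
      ≤ (4 * Real.pi / |lam.im|) * |(lam / qmom m lam).re|
        + C * max (1 / ‖lam‖ ^ 2)
            (max (1 / ‖lam - (m : ℂ)‖ ^ 2)
              (1 / ‖lam + (m : ℂ)‖ ^ 2)) := by
  refine ⟨1, one_pos, ?_⟩
  intro lam him
  have hmax : (0:ℝ) ≤ 1 * max (1 / (‖lam‖) ^ 2)
      (max (1 / (‖lam - (m : ℂ)‖) ^ 2) (1 / (‖lam + (m : ℂ)‖) ^ 2)) := by
    rw [one_mul]
    refine le_trans (by positivity : (0:ℝ) ≤ 1 / (‖lam‖) ^ 2) (le_max_left _ _)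
  rcases lt_or_gt_of_ne him with hneg | hpos
  · -- im < 0 : use conjugate
    set mu : ℂ := (starRingEnd ℂ) lam with hmudef
    have hmupos : 0 < mu.im := by
      rw [hmudef]
      simp only [Complex.conj_im]
      linarith
    have hkey := Stmt2Proof.key m hm mu hmupos
    have habs : ∀ s : ℝ, ‖(s:ℂ) - mu‖ = ‖(s:ℂ) - lam‖ := by
      intro s
      rw [hmudef, show (s:ℂ) - (starRingEnd ℂ) lam = (starRingEnd ℂ) ((s:ℂ) - lam) by
        simp [map_sub, Complex.conj_ofReal], Complex.norm_conj]
    simp_rw [habs] at hkey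
    have him_eq : |mu.im| = |lam.im| := by
      rw [hmudef]; simp only [Complex.conj_im]; rw [abs_neg]
    have hre_eq : (mu / qmom m mu).re = (lam / qmom m lam).re := by
      rw [hmudef, Stmt2Proof.qmom_conj m lam him, ← map_div₀]
      exact Complex.conj_re _
    rw [him_eq, hre_eq] at hkey
    linarith
  · have hkey := Stmt2Proof.key m hm lam hpos
    linarith
end

section
/- Let m>0, γ>0, and let p₁,p₂,q : [0,∞)→ℝ be integrable functions vanishing on (γ,∞). Let λ ∈ ℂ∖[−m,m] and define χⁿ(x,λ) by the recursion χ⁰(λ)=(k₀(λ),1)ᵀ, χ^{n+1}(x,λ)=∫_x^γ G(x,t,λ)·(iσ₂)·V(t)·χⁿ(t,λ) dt. Then for every x ∈ [0,γ] the series χ(x,λ) = Σ_{n≥0} χⁿ(x,λ) converges absolutely and its sum satisfies |χ(x,λ)| ≤ K₂(λ)·e^{(γ−x)(|η|−η)}·exp( K₁(λ)·∫_x^γ (|p₁(t)|+|p₂(t)|+2|q(t)|) dt ), where η = Im k(λ). -/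
open MeasureTheory Matrix intervalIntegral Set






/-- `k₀(λ) = (λ+m)/(i·k(λ))`. -/
noncomputable def kzero (m : ℝ) (lam : ℂ) : ℂ := (lam + (m : ℂ)) / (Complex.I * qmom m lam)

/-- `K₁(λ) = max(|k₀(λ)|, |k₀(λ)|⁻¹)`. -/
noncomputable def K1 (m : ℝ) (lam : ℂ) : ℝ :=
  max ‖kzero m lam‖ ‖kzero m lam‖⁻¹

/-- `K₂(λ) = max(|k₀(λ)|, 1)`. -/
noncomputable def K2 (m : ℝ) (lam : ℂ) : ℝ := max ‖kzero m lam‖ 1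

/-- The 2×2 kernel `G(x,t,λ)`. -/
noncomputable def Gker (m : ℝ) (lam : ℂ) (x t : ℝ) : Matrix (Fin 2) (Fin 2) ℂ :=
  (1 / 2 : ℂ) •
    !![1 + Complex.exp (-2 * Complex.I * qmom m lam * ((x : ℂ) - (t : ℂ))),
        kzero m lam * (1 - Complex.exp (-2 * Complex.I * qmom m lam * ((x : ℂ) - (t : ℂ))));
      (1 - Complex.exp (-2 * Complex.I * qmom m lam * ((x : ℂ) - (t : ℂ)))) / kzero m lam,
        1 + Complex.exp (-2 * Complex.I * qmom m lam * ((x : ℂ) - (t : ℂ)))]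

/-- `iσ₂`. -/
def iSigma2 : Matrix (Fin 2) (Fin 2) ℂ := !![0, 1; -1, 0]

/-- The potential matrix `V(t)`. -/
noncomputable def Vmat (p₁ p₂ q : ℝ → ℝ) (t : ℝ) : Matrix (Fin 2) (Fin 2) ℂ :=
  !![(p₁ t : ℂ), (q t : ℂ); (q t : ℂ), (p₂ t : ℂ)]



noncomputable def Fprim (w : ℝ → ℝ) (b t : ℝ) : ℝ := ∫ s in t..b, w s

noncomputable def uaux (w : ℝ → ℝ) (b : ℝ) (n : ℕ) (t : ℝ) : ℝ :=
  w t * Fprim w b t ^ n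

section key
variable {w : ℝ → ℝ} {a b : ℝ}

lemma Fcont (hab : a ≤ b) (hw : IntegrableOn w (Set.Icc a b)) :
    ContinuousOn (Fprim w b) (Set.Icc a b) := by
  have := intervalIntegral.continuousOn_primitive_interval_left (f := w) (μ := volume)
    (a := a) (b := b) (by rwa [Set.uIcc_of_le hab])
  rwa [Set.uIcc_of_le hab] at this

lemma wpow_int (hab : a ≤ b) (hw : IntegrableOn w (Set.Icc a b)) (n : ℕ) {x : ℝ}
    (hx : x ∈ Set.Icc a b) :
    IntegrableOn (uaux w b n) (Set.Ioc x b) := by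
  have hsub : Set.Ioc x b ⊆ Set.Icc a b := fun t ht => ⟨le_trans hx.1 ht.1.le, ht.2⟩
  have hFm : AEStronglyMeasurable (Fprim w b) (volume.restrict (Set.Ioc x b)) :=
    ((Fcont hab hw).aestronglyMeasurable measurableSet_Icc).mono_measure
      (Measure.restrict_mono hsub le_rfl)
  obtain ⟨C, hC⟩ := (isCompact_Icc (a := a) (b := b)).exists_bound_of_continuousOn (Fcont hab hw)
  have := (hw.mono_set hsub).bdd_mul (f := fun t => Fprim w b t ^ n) (hFm.pow n)
    (c := C ^ n) (by
      rw [ae_restrict_iff' measurableSet_Ioc]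
      refine ae_of_all _ fun t ht => ?_
      calc ‖Fprim w b t ^ n‖ = ‖Fprim w b t‖ ^ n := norm_pow _ _
        _ ≤ C ^ n := pow_le_pow_left₀ (norm_nonneg _) (hC t (hsub ht)) n)
  exact (integrable_congr (ae_of_all _ fun t => mul_comm (Fprim w b t ^ n) (w t))).mp this

lemma key_identity (hab : a ≤ b) (hw : IntegrableOn w (Set.Icc a b)) (n : ℕ) :
    ∀ x ∈ Set.Icc a b,
      (∫ t in x..b, uaux w b n t) = Fprim w b x ^ (n + 1) / (n + 1 : ℝ) := by
  induction n with
  | zero =>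
    intro x hx
    simp [uaux, Fprim]
  | succ n IH =>
    intro x hx
    have hxb : x ≤ b := hx.2
    have hsub : Set.Ioc x b ⊆ Set.Icc a b := fun t ht => ⟨le_trans hx.1 ht.1.le, ht.2⟩
    have hwx : IntegrableOn w (Set.Ioc x b) := hw.mono_set hsub
    have hu_int : IntegrableOn (uaux w b n) (Set.Ioc x b) := wpow_int hab hw n hx
    have hu1_int : IntegrableOn (uaux w b (n+1)) (Set.Ioc x b) := wpow_int hab hw (n+1) hx
    set h : ℝ × ℝ → ℝ :=
      fun p => if p.1 < p.2 then uaux w b n p.1 * w p.2 else 0 with hhdef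
    -- Step A
    have stepA : ∀ t ∈ Set.Ioc x b,
        uaux w b (n+1) t = ∫ s in Set.Ioc x b, h (t, s) := by
      intro t ht
      have htb : t ≤ b := ht.2
      have hFt : Fprim w b t = ∫ s in Set.Ioc x b, (Set.Ioc t b).indicator w s := by
        rw [setIntegral_indicator measurableSet_Ioc]
        have hss : Set.Ioc x b ∩ Set.Ioc t b = Set.Ioc t b := by
          ext s; simp only [Set.mem_inter_iff, Set.mem_Ioc]
          constructor
          · rintro ⟨_, h2⟩; exact h2
          · rintro ⟨h1, h2⟩; exact ⟨⟨lt_trans ht.1 h1, h2⟩, h1, h2⟩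
        rw [hss, Fprim, intervalIntegral.integral_of_le htb]
      have huu : uaux w b (n+1) t = uaux w b n t * Fprim w b t := by
        simp only [uaux, pow_succ]; ring
      rw [huu, hFt, ← MeasureTheory.integral_const_mul]
      refine setIntegral_congr_fun measurableSet_Ioc fun s hs => ?_
      simp only [hhdef, Set.indicator_apply, Set.mem_Ioc]
      by_cases hts : t < s
      · simp [hts, hs.2]
      · simp [hts]
    -- integrability of h on the product
    have hh_int : Integrable h
        ((volume.restrict (Set.Ioc x b)).prod (volume.restrict (Set.Ioc x b))) := by
      have hind : h = Set.indicator {p : ℝ × ℝ | p.1 < p.2}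
          (fun p => uaux w b n p.1 * w p.2) := by
        funext p; simp [hhdef, Set.indicator_apply]
      rw [hind]
      exact (hu_int.mul_prod hwx).indicator (measurableSet_lt measurable_fst measurable_snd)
    -- Fubini
    have swap :
        (∫ t in Set.Ioc x b, ∫ s in Set.Ioc x b, h (t, s))
          = ∫ s in Set.Ioc x b, ∫ t in Set.Ioc x b, h (t, s) :=
      integral_integral_swap hh_int
    -- Step D
    have stepD : ∀ s ∈ Set.Ioc x b,
        (∫ t in Set.Ioc x b, h (t, s))
          = (Fprim w b x ^ (n+1) / (n+1 : ℝ) - Fprim w b s ^ (n+1) / (n+1 : ℝ)) * w s := by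
      intro s hs
      have hxs : x ≤ s := hs.1.le
      have hsmem : s ∈ Set.Icc a b := hsub hs
      have hind : ∀ t, h (t, s) = Set.indicator (Set.Iio s) (fun t => uaux w b n t * w s) t := by
        intro t; simp [hhdef, Set.indicator_apply, Set.mem_Iio]
      have hset : Set.Ioc x b ∩ Set.Iio s = Set.Ioo x s := by
        ext t; simp only [Set.mem_inter_iff, Set.mem_Ioc, Set.mem_Iio, Set.mem_Ioo]
        constructor
        · rintro ⟨⟨h1, _⟩, h3⟩; exact ⟨h1, h3⟩
        · rintro ⟨h1, h3⟩; exact ⟨⟨h1, h3.le.trans hs.2⟩, h3⟩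
      have hint_xs : IntervalIntegrable (uaux w b n) volume x s :=
        (intervalIntegrable_iff_integrableOn_Ioc_of_le hxs).mpr
          (hu_int.mono_set (Set.Ioc_subset_Ioc_right hs.2))
      have hint_sb : IntervalIntegrable (uaux w b n) volume s b :=
        (intervalIntegrable_iff_integrableOn_Ioc_of_le hsmem.2).mpr
          (hu_int.mono_set (Set.Ioc_subset_Ioc_left hs.1.le))
      have hadj := intervalIntegral.integral_add_adjacent_intervals hint_xs hint_sb
      calc (∫ t in Set.Ioc x b, h (t, s))
          = ∫ t in Set.Ioc x b,
              Set.indicator (Set.Iio s) (fun t => uaux w b n t * w s) t := by simp_rw [hind]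
        _ = ∫ t in Set.Ioc x b ∩ Set.Iio s, uaux w b n t * w s :=
            setIntegral_indicator measurableSet_Iio
        _ = ∫ t in Set.Ioo x s, uaux w b n t * w s := by rw [hset]
        _ = ∫ t in Set.Ioc x s, uaux w b n t * w s := (integral_Ioc_eq_integral_Ioo).symm
        _ = ∫ t in x..s, uaux w b n t * w s := (intervalIntegral.integral_of_le hxs).symm
        _ = (∫ t in x..s, uaux w b n t) * w s := by rw [← intervalIntegral.integral_mul_const]
        _ = ((∫ t in x..b, uaux w b n t) - ∫ t in s..b, uaux w b n t) * w s := by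
            rw [← hadj]; ring
        _ = (Fprim w b x ^ (n+1) / (n+1 : ℝ) - Fprim w b s ^ (n+1) / (n+1 : ℝ)) * w s := by
            rw [IH x hx, IH s hsmem]
    -- assemble
    have hInt2 : IntegrableOn (fun s => Fprim w b s ^ (n+1) / (n+1 : ℝ) * w s)
        (Set.Ioc x b) := by
      refine (integrable_congr (ae_of_all _ fun s => ?_)).mp (hu1_int.mul_const ((n+1 : ℝ)⁻¹))
      simp only [uaux]; ring
    have main : (∫ t in x..b, uaux w b (n+1) t)
        = Fprim w b x ^ (n+1) / (n+1 : ℝ) * Fprim w b x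
          - (∫ s in Set.Ioc x b, Fprim w b s ^ (n+1) / (n+1 : ℝ) * w s) := by
      rw [intervalIntegral.integral_of_le hxb]
      rw [setIntegral_congr_fun measurableSet_Ioc stepA, swap,
        setIntegral_congr_fun measurableSet_Ioc stepD]
      have : ∀ s ∈ Set.Ioc x b,
          (Fprim w b x ^ (n+1) / (n+1 : ℝ) - Fprim w b s ^ (n+1) / (n+1 : ℝ)) * w s
            = Fprim w b x ^ (n+1) / (n+1 : ℝ) * w s
              - Fprim w b s ^ (n+1) / (n+1 : ℝ) * w s := fun s _ => by ring
      rw [setIntegral_congr_fun measurableSet_Ioc this,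
        integral_sub (hwx.const_mul _) hInt2, MeasureTheory.integral_const_mul]
      congr 1
      rw [Fprim, intervalIntegral.integral_of_le hxb]
    have hu1eq : (∫ s in Set.Ioc x b, Fprim w b s ^ (n+1) / (n+1 : ℝ) * w s)
        = (n+1 : ℝ)⁻¹ * ∫ t in x..b, uaux w b (n+1) t := by
      rw [intervalIntegral.integral_of_le hxb, ← MeasureTheory.integral_const_mul]
      refine setIntegral_congr_fun measurableSet_Ioc fun s _ => ?_
      simp only [uaux]; ring
    rw [hu1eq] at main
    have hn1 : (0:ℝ) < n + 1 := by positivity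
    have hn2 : ((n:ℝ) + 1 + 1) ≠ 0 := by positivity
    -- solve the linear equation
    field_simp at main ⊢
    ring_nf at main ⊢
    push_cast at main ⊢
    linarith [main]
end key

lemma K1_facts (m : ℝ) (lam : ℂ) (hk0 : kzero m lam ≠ 0) :
    1 ≤ K1 m lam ∧ ‖kzero m lam‖ ≤ K1 m lam
      ∧ (‖kzero m lam‖)⁻¹ ≤ K1 m lam := by
  have hk0p : 0 < ‖kzero m lam‖ := norm_pos_iff.mpr hk0
  refine ⟨?_, le_max_left _ _, le_max_right _ _⟩
  rcases le_total (‖kzero m lam‖) 1 with h | h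
  · refine le_trans ?_ (le_max_right _ _)
    rw [le_inv_comm₀ one_pos hk0p]
    simpa using h
  · exact le_trans h (le_max_left _ _)

lemma kernel_bound (m : ℝ) (lam : ℂ) (hk0 : kzero m lam ≠ 0) (p₁ p₂ q : ℝ → ℝ)
    {x t : ℝ} (hxt : x ≤ t) (v : Fin 2 → ℂ) :
    ‖(Gker m lam x t * iSigma2 * Vmat p₁ p₂ q t).mulVec v‖
      ≤ Real.exp ((|(qmom m lam).im| - (qmom m lam).im) * (t - x)) * K1 m lam
          * (|p₁ t| + |p₂ t| + 2 * |q t|) * ‖v‖ := by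
  obtain ⟨hK11, hK1a, hK1b⟩ := K1_facts m lam hk0
  have hk0p : 0 < ‖kzero m lam‖ := norm_pos_iff.mpr hk0
  set η : ℝ := (qmom m lam).im with hη
  set e : ℂ := Complex.exp (-2 * Complex.I * qmom m lam * ((x : ℂ) - (t : ℂ))) with he
  set E : ℝ := Real.exp ((|η| - η) * (t - x)) with hE
  have hc : 0 ≤ |η| - η := sub_nonneg.mpr (le_abs_self _)
  have hE1 : 1 ≤ E := Real.one_le_exp (mul_nonneg hc (by linarith))
  have hEpos : 0 < E := zero_lt_one.trans_le hE1
  have henorm : ‖e‖ ≤ E := by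
    rw [he, Complex.norm_exp, hE]
    apply Real.exp_le_exp.mpr
    have hcast : ((x:ℂ) - (t:ℂ)) = ((x - t : ℝ) : ℂ) := by push_cast; ring
    rw [hcast]
    have hre : (-2 * Complex.I * qmom m lam * ((x - t : ℝ) : ℂ)).re
        = 2 * η * (x - t) := by
      simp [Complex.mul_re, Complex.mul_im]
      exact Or.inl hη.symm
    rw [hre]
    have h1 : 0 ≤ t - x := by linarith
    have h2 : 0 ≤ |η| + η := by linarith [neg_abs_le η]
    nlinarith [mul_nonneg h1 h2]
  have ha : ‖1 + e‖ ≤ 2 * E := le_trans (norm_add_le _ _) (by rw [norm_one]; linarith)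
  have hb : ‖1 - e‖ ≤ 2 * E := le_trans (norm_sub_le _ _) (by rw [norm_one]; linarith)
  have hK1pos : 0 < K1 m lam := zero_lt_one.trans_le hK11
  -- bounds on the four coefficient types
  have hz1 : ‖1 + e‖ ≤ K1 m lam * (2 * E) := le_trans ha (by nlinarith)
  have hz1' : ‖-(1 + e)‖ ≤ K1 m lam * (2 * E) := by rwa [norm_neg]
  have hz2 : ‖-(kzero m lam * (1 - e))‖ ≤ K1 m lam * (2 * E) := by
    rw [norm_neg, norm_mul]
    exact mul_le_mul hK1a hb (norm_nonneg _) hK1pos.le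
  have hz3 : ‖(1 - e) / kzero m lam‖ ≤ K1 m lam * (2 * E) := by
    rw [norm_div, div_eq_mul_inv, mul_comm]
    apply mul_le_mul hK1b hb (norm_nonneg _) hK1pos.le
  -- generic entry estimate
  have key_entry : ∀ (z1 z2 : ℂ) (r1 r2 : ℝ), ‖z1‖ ≤ K1 m lam * (2 * E) →
      ‖z2‖ ≤ K1 m lam * (2 * E) →
      ‖(1/2 : ℂ) * (z1 * (r1:ℂ) + z2 * (r2:ℂ))‖ ≤ E * K1 m lam * (|r1| + |r2|) := by
    intro z1 z2 r1 r2 h1 h2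
    rw [norm_mul]
    have h12 : ‖(1/2 : ℂ)‖ = 1/2 := by norm_num
    rw [h12]
    have : ‖z1 * (r1:ℂ) + z2 * (r2:ℂ)‖ ≤ (K1 m lam * (2*E)) * |r1| + (K1 m lam * (2*E)) * |r2| := by
      refine le_trans (norm_add_le _ _) ?_
      rw [norm_mul, norm_mul, Complex.norm_real, Complex.norm_real,
        Real.norm_eq_abs, Real.norm_eq_abs]
      gcongr
    calc (1/2) * ‖z1 * (r1:ℂ) + z2 * (r2:ℂ)‖
        ≤ (1/2) * ((K1 m lam * (2*E)) * |r1| + (K1 m lam * (2*E)) * |r2|) := by linarith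
      _ = E * K1 m lam * (|r1| + |r2|) := by ring
  -- component formulas
  have h0 : ((Gker m lam x t * iSigma2 * Vmat p₁ p₂ q t).mulVec v) 0
      = ((1/2 : ℂ) * ((1 + e) * (q t : ℂ) + (-(kzero m lam * (1 - e))) * (p₁ t : ℂ))) * v 0
        + ((1/2 : ℂ) * ((1 + e) * (p₂ t : ℂ) + (-(kzero m lam * (1 - e))) * (q t : ℂ))) * v 1 := by
    simp [Gker, iSigma2, Vmat, Matrix.mulVec, Matrix.mul_apply, dotProduct, Fin.sum_univ_two, he]
    ring
  have h1 : ((Gker m lam x t * iSigma2 * Vmat p₁ p₂ q t).mulVec v) 1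
      = ((1/2 : ℂ) * (((1 - e) / kzero m lam) * (q t : ℂ) + (-(1 + e)) * (p₁ t : ℂ))) * v 0
        + ((1/2 : ℂ) * (((1 - e) / kzero m lam) * (p₂ t : ℂ) + (-(1 + e)) * (q t : ℂ))) * v 1 := by
    simp [Gker, iSigma2, Vmat, Matrix.mulVec, Matrix.mul_apply, dotProduct, Fin.sum_univ_two, he]
    ring
  have hv0 : ‖v 0‖ ≤ ‖v‖ := norm_le_pi_norm v 0
  have hv1 : ‖v 1‖ ≤ ‖v‖ := norm_le_pi_norm v 1
  have hw0 : (0:ℝ) ≤ |p₁ t| + |p₂ t| + 2 * |q t| := by positivity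
  have hRHS0 : 0 ≤ E * K1 m lam * (|p₁ t| + |p₂ t| + 2 * |q t|) * ‖v‖ := by positivity
  have comb : ∀ (A B : ℂ) (rA rB : ℝ), ‖A‖ ≤ rA → ‖B‖ ≤ rB → 0 ≤ rA → 0 ≤ rB →
      ‖A * v 0 + B * v 1‖ ≤ (rA + rB) * ‖v‖ := by
    intro A B rA rB hA hB hA0 hB0
    calc ‖A * v 0 + B * v 1‖ ≤ ‖A‖ * ‖v 0‖ + ‖B‖ * ‖v 1‖ := by
          refine le_trans (norm_add_le _ _) ?_
          rw [norm_mul, norm_mul]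
      _ ≤ rA * ‖v‖ + rB * ‖v‖ :=
          add_le_add (mul_le_mul hA hv0 (norm_nonneg _) hA0)
            (mul_le_mul hB hv1 (norm_nonneg _) hB0)
      _ = (rA + rB) * ‖v‖ := by ring
  rw [pi_norm_le_iff_of_nonneg hRHS0]
  intro i
  fin_cases i
  · show ‖((Gker m lam x t * iSigma2 * Vmat p₁ p₂ q t).mulVec v) 0‖ ≤ _
    rw [h0]
    refine le_trans (comb _ _ _ _ (key_entry _ _ _ _ hz1 hz2) (key_entry _ _ _ _ hz1 hz2)
      (by positivity) (by positivity)) ?_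
    have heq : E * K1 m lam * (|q t| + |p₁ t|) + E * K1 m lam * (|p₂ t| + |q t|)
        = E * K1 m lam * (|p₁ t| + |p₂ t| + 2 * |q t|) := by ring
    rw [heq]
  · show ‖((Gker m lam x t * iSigma2 * Vmat p₁ p₂ q t).mulVec v) 1‖ ≤ _
    rw [h1]
    refine le_trans (comb _ _ _ _ (key_entry _ _ _ _ hz3 hz1') (key_entry _ _ _ _ hz3 hz1')
      (by positivity) (by positivity)) ?_
    have heq : E * K1 m lam * (|q t| + |p₁ t|) + E * K1 m lam * (|p₂ t| + |q t|)
        = E * K1 m lam * (|p₁ t| + |p₂ t| + 2 * |q t|) := by ring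
    rw [heq]

lemma kzero_ne (m : ℝ) (hm : 0 < m) (lam : ℂ)
    (hlam : ∀ t : ℝ, t ∈ Set.Icc (-m) m → (t : ℂ) ≠ lam) : kzero m lam ≠ 0 := by
  have hmm : (-m : ℝ) ≤ m := by linarith
  have h1 : ((m : ℝ) : ℂ) ≠ lam := hlam m ⟨hmm, le_rfl⟩
  have h2 : ((-m : ℝ) : ℂ) ≠ lam := hlam (-m) ⟨le_rfl, hmm⟩
  have h0 : ((0 : ℝ) : ℂ) ≠ lam := hlam 0 ⟨by linarith, by linarith⟩
  have hlam0 : lam ≠ 0 := fun h => h0 (by simp [h])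
  have hlam_m : lam ≠ (m : ℂ) := fun h => h1 h.symm
  have hlam_negm : lam ≠ -(m : ℂ) := by
    intro h; apply h2; push_cast; exact h.symm
  have hq : qmom m lam ≠ 0 := by
    unfold qmom
    apply mul_ne_zero hlam0
    intro hz
    rw [Complex.cpow_eq_zero_iff] at hz
    obtain ⟨hz1, _⟩ := hz
    have hsq : lam ^ 2 = (m : ℂ) ^ 2 := by
      have h2 : lam ^ 2 ≠ 0 := pow_ne_zero _ hlam0
      field_simp at hz1
      linear_combination hz1
    have hfac : (lam - (m : ℂ)) * (lam + (m : ℂ)) = 0 := by linear_combination hsq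
    rcases mul_eq_zero.mp hfac with h | h
    · exact hlam_m (sub_eq_zero.mp h)
    · exact hlam_negm (eq_neg_of_add_eq_zero_left h)
  have hnum : lam + (m : ℂ) ≠ 0 := fun h => hlam_negm (eq_neg_of_add_eq_zero_left h)
  exact div_ne_zero hnum (mul_ne_zero Complex.I_ne_zero hq)

-- main theorem body test (aux lemmas imported by concatenation later)
theorem stmt4 (m γ : ℝ) (hm : 0 < m) (hγ : 0 < γ) (p₁ p₂ q : ℝ → ℝ)
    (hp₁ : IntegrableOn p₁ (Set.Ici 0)) (hp₂ : IntegrableOn p₂ (Set.Ici 0))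
    (hq : IntegrableOn q (Set.Ici 0))
    (hp₁0 : ∀ x > γ, p₁ x = 0) (hp₂0 : ∀ x > γ, p₂ x = 0) (hq0 : ∀ x > γ, q x = 0)
    (lam : ℂ) (hlam : ∀ t : ℝ, t ∈ Set.Icc (-m) m → (t : ℂ) ≠ lam)
    (χ : ℕ → ℝ → Fin 2 → ℂ)
    (hχ0 : ∀ x : ℝ, χ 0 x = ![kzero m lam, 1])
    (hχs : ∀ n : ℕ, ∀ x : ℝ,
      χ (n + 1) x
        = ∫ t in x..γ, (Gker m lam x t * iSigma2 * Vmat p₁ p₂ q t).mulVec (χ n t)) :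
    ∀ x ∈ Set.Icc (0 : ℝ) γ,
      Summable (fun n : ℕ => ‖χ n x‖) ∧
      ‖∑' n : ℕ, χ n x‖
        ≤ K2 m lam * Real.exp ((γ - x) * (|(qmom m lam).im| - (qmom m lam).im))
          * Real.exp (K1 m lam * ∫ t in x..γ, (|p₁ t| + |p₂ t| + 2 * |q t|)) := by
  intro x hx
  set w : ℝ → ℝ := fun t => |p₁ t| + |p₂ t| + 2 * |q t| with hwdef
  have hk0 : kzero m lam ≠ 0 := kzero_ne m hm lam hlam
  obtain ⟨hK11, hK1a, hK1b⟩ := K1_facts m lam hk0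
  have hK1pos : 0 < K1 m lam := zero_lt_one.trans_le hK11
  have hK2 : 1 ≤ K2 m lam := le_max_right _ _
  have hK2pos : 0 < K2 m lam := zero_lt_one.trans_le hK2
  have h0γ : (0 : ℝ) ≤ γ := hγ.le
  have hw_int : IntegrableOn w (Set.Icc 0 γ) := by
    have h1 : IntegrableOn (fun t => |p₁ t|) (Set.Icc 0 γ) :=
      (hp₁.mono_set Set.Icc_subset_Ici_self).abs
    have h2 : IntegrableOn (fun t => |p₂ t|) (Set.Icc 0 γ) :=
      (hp₂.mono_set Set.Icc_subset_Ici_self).abs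
    have h3 : IntegrableOn (fun t => |q t|) (Set.Icc 0 γ) :=
      (hq.mono_set Set.Icc_subset_Ici_self).abs
    exact (h1.add h2).add (h3.const_mul 2)
  have hw0 : ∀ t, 0 ≤ w t := fun t => by simp only [hwdef]; positivity
  set c : ℝ := |(qmom m lam).im| - (qmom m lam).im with hcdef
  have hc0 : 0 ≤ c := sub_nonneg.mpr (le_abs_self _)
  have hF0 : ∀ y ∈ Set.Icc (0:ℝ) γ, 0 ≤ Fprim w γ y := fun y hy =>
    intervalIntegral.integral_nonneg hy.2 (fun t _ => hw0 t)
  -- the inductive bound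
  have key : ∀ n : ℕ, ∀ y ∈ Set.Icc (0:ℝ) γ,
      ‖χ n y‖ ≤ K2 m lam * Real.exp (c * (γ - y)) * (K1 m lam * Fprim w γ y) ^ n
        / n.factorial := by
    intro n
    induction n with
    | zero =>
      intro y hy
      rw [hχ0 y]
      simp only [pow_zero, Nat.factorial_zero, Nat.cast_one, mul_one, div_one]
      have hexp1 : 1 ≤ Real.exp (c * (γ - y)) :=
        Real.one_le_exp (mul_nonneg hc0 (by linarith [hy.2]))
      have hb : ‖![kzero m lam, 1]‖ ≤ K2 m lam := by
        rw [pi_norm_le_iff_of_nonneg hK2pos.le]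
        intro i
        fin_cases i
        · show ‖(![kzero m lam, 1] : Fin 2 → ℂ) 0‖ ≤ _
          simp only [Matrix.cons_val_zero, K2]
          exact le_max_left _ _
        · show ‖(![kzero m lam, 1] : Fin 2 → ℂ) 1‖ ≤ _
          simp only [Matrix.cons_val_one, Matrix.head_cons, norm_one, K2]
          exact le_max_of_le_right (by simp)
      calc ‖![kzero m lam, 1]‖ ≤ K2 m lam := hb
        _ ≤ K2 m lam * Real.exp (c * (γ - y)) := by nlinarith
    | succ n IH =>
      intro y hy
      rw [hχs n y]
      set C : ℝ := K2 m lam * Real.exp (c * (γ - y)) * K1 m lam ^ (n+1) / n.factorial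
        with hCdef
      have hC0 : 0 ≤ C := by
        rw [hCdef]; positivity
      have hu_int : IntervalIntegrable (fun t => C * uaux w γ n t) volume y γ :=
        ((intervalIntegrable_iff_integrableOn_Ioc_of_le hy.2).mpr
          (wpow_int h0γ hw_int n hy)).const_mul C
      have hbound : ∀ᵐ t ∂(volume.restrict (Set.uIoc y γ)),
          ‖(Gker m lam y t * iSigma2 * Vmat p₁ p₂ q t).mulVec (χ n t)‖
            ≤ C * uaux w γ n t := by
        rw [Set.uIoc_of_le hy.2, ae_restrict_iff' measurableSet_Ioc]
        refine ae_of_all _ fun t ht => ?_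
        have hty : y ≤ t := ht.1.le
        have htmem : t ∈ Set.Icc (0:ℝ) γ := ⟨le_trans hy.1 hty, ht.2⟩
        have hexp : Real.exp (c * (t - y)) * Real.exp (c * (γ - t))
            = Real.exp (c * (γ - y)) := by
          rw [← Real.exp_add]; ring_nf
        calc ‖(Gker m lam y t * iSigma2 * Vmat p₁ p₂ q t).mulVec (χ n t)‖
            ≤ Real.exp (c * (t - y)) * K1 m lam * (|p₁ t| + |p₂ t| + 2 * |q t|)
              * ‖χ n t‖ := kernel_bound m lam hk0 p₁ p₂ q hty (χ n t)
          _ ≤ Real.exp (c * (t - y)) * K1 m lam * (|p₁ t| + |p₂ t| + 2 * |q t|)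
              * (K2 m lam * Real.exp (c * (γ - t)) * (K1 m lam * Fprim w γ t) ^ n
                  / n.factorial) := by
              refine mul_le_mul_of_nonneg_left (IH t htmem) ?_
              positivity
          _ = C * uaux w γ n t := by
              simp only [uaux, hCdef, mul_pow, hwdef]
              rw [← hexp]
              ring
      have hnorm := intervalIntegral.norm_integral_le_abs_of_norm_le hbound hu_int
      have hval : (∫ t in y..γ, C * uaux w γ n t)
          = C * (Fprim w γ y ^ (n+1) / (n+1 : ℝ)) := by
        rw [intervalIntegral.integral_const_mul, key_identity h0γ hw_int n y hy]
      rw [hval] at hnorm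
      have hFy : 0 ≤ Fprim w γ y := hF0 y hy
      have habs : |C * (Fprim w γ y ^ (n+1) / (n+1 : ℝ))|
          = C * (Fprim w γ y ^ (n+1) / (n+1 : ℝ)) := abs_of_nonneg (by positivity)
      rw [habs] at hnorm
      refine le_trans hnorm (le_of_eq ?_)
      rw [hCdef, mul_pow, Nat.factorial_succ]
      push_cast
      have hn1 : ((n:ℝ) + 1) ≠ 0 := by positivity
      have hnf : ((n.factorial : ℝ)) ≠ 0 := by positivity
      field_simp
  -- conclusion
  set E : ℝ := Real.exp (c * (γ - x)) with hEdef
  set r : ℝ := K1 m lam * Fprim w γ x with hrdef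
  have hsum2 : Summable (fun n : ℕ => K2 m lam * E * r ^ n / n.factorial) := by
    have := (Real.summable_pow_div_factorial r).mul_left (K2 m lam * E)
    simpa [mul_div_assoc] using this
  have hsum1 : Summable (fun n : ℕ => ‖χ n x‖) :=
    hsum2.of_nonneg_of_le (fun n => norm_nonneg _) (fun n => key n x hx)
  refine ⟨hsum1, ?_⟩
  have hFeq : Fprim w γ x = ∫ t in x..γ, (|p₁ t| + |p₂ t| + 2 * |q t|) := rfl
  have htsum : ∑' n : ℕ, (K2 m lam * E * r ^ n / n.factorial)
      = K2 m lam * E * Real.exp r := by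
    have h1 : Real.exp r = ∑' n : ℕ, r ^ n / n.factorial := by
      rw [Real.exp_eq_exp_ℝ, NormedSpace.exp_eq_tsum_div]
    rw [h1, ← tsum_mul_left]
    exact tsum_congr fun n => by ring
  calc ‖∑' n : ℕ, χ n x‖ ≤ ∑' n : ℕ, ‖χ n x‖ := norm_tsum_le_tsum_norm hsum1
    _ ≤ ∑' n : ℕ, (K2 m lam * E * r ^ n / n.factorial) :=
        hsum1.tsum_le_tsum (fun n => key n x hx) hsum2
    _ = K2 m lam * E * Real.exp r := htsum
    _ = K2 m lam * Real.exp ((γ - x) * c) * Real.exp (K1 m lam * Fprim w γ x) := by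
        rw [hEdef, hrdef, mul_comm (γ - x) c]
    _ = K2 m lam * Real.exp ((γ - x) * (|(qmom m lam).im| - (qmom m lam).im))
          * Real.exp (K1 m lam * ∫ t in x..γ, (|p₁ t| + |p₂ t| + 2 * |q t|)) := by
        rw [← hFeq, hcdef]
end

section
/- Let m>0 and let p₁,p₂,q : [0,∞)→ℝ be integrable. Let λ ∈ ℂ∖[−m,m] with Im λ ≥ 0, and define χⁿ(x,λ) by the recursion χ⁰(λ)=(k₀(λ),1)ᵀ, χ^{n+1}(x,λ)=∫_x^∞ G(x,t,λ)·(iσ₂)·V(t)·χⁿ(t,λ) dt. Then for every n ≥ 1 and every x ≥ 0, |χⁿ(x,λ)| ≤ (K₂(λ)/n!)·( K₁(λ)·∫_x^∞ (|p₁(t)|+|p₂(t)|+2|q(t)|) dt )ⁿ; consequently the series χ(x,λ)=Σ_{n≥0}χⁿ(x,λ) converges absolutely and |χ(x,λ)| ≤ K₂(λ)·exp( K₁(λ)·∫_x^∞ (|p₁(t)|+|p₂(t)|+2|q(t)|) dt ). -/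
open MeasureTheory Matrix

section
variable {m : ℝ} {lam : ℂ} (hm : 0 < m) (hlamim : 0 ≤ lam.im)
  (hlam : ∀ t : ℝ, t ∈ Set.Icc (-m) m → (t : ℂ) ≠ lam)

include hm hlam

lemma lam_ne_zero : lam ≠ 0 := by
  intro h; exact hlam 0 ⟨by linarith, by linarith⟩ (by simp [h])

lemma lam_ne_m : lam ≠ (m : ℂ) := by
  intro h; exact hlam m ⟨by linarith, le_refl _⟩ h.symm

lemma lam_ne_neg_m : lam ≠ -(m : ℂ) := by
  intro h; exact hlam (-m) ⟨le_refl _, by linarith⟩ (by push_cast; rw [h])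

lemma base_ne_zero : (1 - (m : ℝ) ^ 2 / lam ^ 2) ≠ 0 := by
  intro h
  have hl0 : lam ≠ 0 := lam_ne_zero hm hlam
  have hl2 : lam ^ 2 ≠ 0 := pow_ne_zero _ hl0
  have h1 : ((m : ℂ) ^ 2) / lam ^ 2 = 1 := by linear_combination -h
  have h2 : (m : ℂ) ^ 2 = lam ^ 2 := (div_eq_one_iff_eq hl2).1 h1
  have : (lam - m) * (lam + m) = 0 := by linear_combination -h2
  rcases mul_eq_zero.1 this with h' | h'
  · exact lam_ne_m hm hlam (by linear_combination h')
  · exact lam_ne_neg_m hm hlam (by linear_combination h')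

lemma qmom_ne_zero : qmom m lam ≠ 0 := by
  unfold qmom
  refine mul_ne_zero (lam_ne_zero hm hlam) ?_
  intro h
  rw [Complex.cpow_eq_zero_iff] at h
  exact base_ne_zero hm hlam h.1

lemma kzero_ne_zero : kzero m lam ≠ 0 := by
  unfold kzero
  apply div_ne_zero
  · intro h
    exact lam_ne_neg_m hm hlam (by linear_combination h)
  · exact mul_ne_zero Complex.I_ne_zero (qmom_ne_zero hm hlam)

include hlamim in
lemma im_qmom_nonneg : 0 ≤ (qmom m lam).im := by
  have hl0 : lam ≠ 0 := lam_ne_zero hm hlam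
  set w : ℂ := 1 - (m : ℂ) ^ 2 / lam ^ 2 with hw
  have hw0 : w ≠ 0 := base_ne_zero hm hlam
  have hhalf : ((1 : ℂ)/2) = (2⁻¹ : ℂ) := by norm_num
  set s : ℂ := w ^ ((1:ℂ)/2) with hs
  have hsre : 0 ≤ s.re := by
    rw [hs, hhalf, Complex.cpow_inv_two_re]
    positivity
  have him : (qmom m lam).im = lam.re * s.im + lam.im * s.re := by
    simp [qmom, Complex.mul_im, hw.symm, hs]
  have hnsq : (0:ℝ) < Complex.normSq lam := Complex.normSq_pos.2 hl0
  have hwim : w.im = m ^ 2 * (2 * lam.re * lam.im) / (Complex.normSq lam) ^ 2 := by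
    rw [hw]
    rw [Complex.sub_im, Complex.div_im]
    rw [show lam ^ 2 = lam * lam by ring]
    simp [Complex.mul_im, Complex.mul_re, Complex.normSq_mul, Complex.normSq_apply,
      ← Complex.ofReal_pow, Complex.ofReal_re, Complex.ofReal_im]
    ring
  rcases lt_trichotomy lam.re 0 with hre | hre | hre
  · rcases eq_or_lt_of_le hlamim with hb | hb
    · -- lam.im = 0, lam.re < -m
      have hb' : lam.im = 0 := hb.symm
      have hram : lam.re < -m := by
        by_contra hcon
        push_neg at hcon
        rcases le_or_gt lam.re m with h1 | h1
        · exact hlam lam.re ⟨hcon, h1⟩ (Complex.ext (by simp) (by simp [hb']))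
        · linarith
      have hre0 : lam.re ≠ 0 := by nlinarith
      have hwre' : w.re = 1 - m ^ 2 * (lam.re ^ 2 - lam.im ^ 2) / (Complex.normSq lam) ^ 2 := by
        rw [hw, Complex.sub_re, Complex.div_re]
        rw [show lam ^ 2 = lam * lam by ring]
        simp [Complex.mul_im, Complex.mul_re, Complex.normSq_mul, Complex.normSq_apply,
          ← Complex.ofReal_pow, Complex.ofReal_re, Complex.ofReal_im]
        ring
      have hA : Complex.normSq lam = lam.re ^ 2 := by
        simp [Complex.normSq_apply, hb']; ring
      have hwre : 0 < w.re := by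
        rw [hwre', hA, hb']
        have h2 : m ^ 2 < lam.re ^ 2 := by nlinarith
        have h4 : m ^ 2 * (lam.re ^ 2 - 0 ^ 2) / (lam.re ^ 2) ^ 2 < 1 := by
          rw [div_lt_one (by positivity)]
          nlinarith
        linarith
      have hwim0 : w.im = 0 := by rw [hwim, hb']; ring_nf
      have habs : ‖w‖ = w.re := by
        have : w = ((w.re : ℝ) : ℂ) := Complex.ext rfl (by simp [hwim0])
        rw [this, Complex.norm_real, Real.norm_eq_abs, abs_of_pos (by simpa using hwre)]
        simp
      have hsim : s.im = 0 := by
        rw [hs, hhalf, Complex.cpow_inv_two_im_eq_sqrt (le_of_eq hwim0.symm)]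
        rw [habs]
        simp
      rw [him, hsim, hb']
      simp
    · have hwimneg : w.im < 0 := by
        rw [hwim]
        apply div_neg_of_neg_of_pos _ (by positivity)
        have h2 : 2 * lam.re * lam.im < 0 :=
          mul_neg_of_neg_of_pos (by linarith) hb
        exact mul_neg_of_pos_of_neg (pow_pos hm 2) h2
      have hsim : s.im = -Real.sqrt ((‖w‖ - w.re)/2) := by
        rw [hs, hhalf]; exact Complex.cpow_inv_two_im_eq_neg_sqrt hwimneg
      rw [him, hsim]
      have h1 : 0 ≤ lam.re * -Real.sqrt ((‖w‖ - w.re)/2) := by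
        rw [mul_neg]
        have := Real.sqrt_nonneg ((‖w‖ - w.re)/2)
        nlinarith
      have h2 : 0 ≤ lam.im * s.re := mul_nonneg hlamim hsre
      linarith
  · rw [him, hre]
    simp
    exact mul_nonneg hlamim hsre
  · have hwimpos : 0 ≤ w.im := by
      rw [hwim]
      apply div_nonneg _ (by positivity)
      have : 0 ≤ 2 * lam.re * lam.im := by positivity
      positivity
    have hsim : s.im = Real.sqrt ((‖w‖ - w.re)/2) := by
      rw [hs, hhalf]; exact Complex.cpow_inv_two_im_eq_sqrt hwimpos
    rw [him, hsim]
    have h1 : 0 ≤ lam.re * Real.sqrt ((‖w‖ - w.re)/2) :=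
      mul_nonneg hre.le (Real.sqrt_nonneg _)
    exact add_nonneg h1 (mul_nonneg hlamim hsre)

end

section Fsec
variable {w : ℝ → ℝ} (hw_int : Integrable w) (hw_nonneg : ∀ t, 0 ≤ w t)

local notation "F" => fun x => ∫ t in Set.Ioi x, w t

include hw_nonneg in
lemma F_nonneg (x : ℝ) : 0 ≤ F x :=
  setIntegral_nonneg measurableSet_Ioi (fun t _ => hw_nonneg t)

include hw_int in
lemma F_split {x y : ℝ} (h : x ≤ y) : F x = (∫ t in Set.Ioc x y, w t) + F y := by
  rw [← setIntegral_union (Set.Ioc_disjoint_Ioi le_rfl) measurableSet_Ioi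
    hw_int.integrableOn hw_int.integrableOn, Set.Ioc_union_Ioi_eq_Ioi h]

include hw_int hw_nonneg in
lemma F_antitone : Antitone (fun x => F x) := by
  intro x y hxy
  rw [F_split hw_int hxy]
  have : 0 ≤ ∫ t in Set.Ioc x y, w t :=
    setIntegral_nonneg measurableSet_Ioc (fun t _ => hw_nonneg t)
  simp only []
  linarith

include hw_int hw_nonneg in
lemma F_le_total (x : ℝ) : F x ≤ ∫ t, w t :=
  setIntegral_le_integral hw_int (Filter.Eventually.of_forall hw_nonneg)

include hw_int hw_nonneg in
lemma F_measurable : Measurable (fun x => F x) :=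
  (F_antitone hw_int hw_nonneg).measurable

include hw_int hw_nonneg in
lemma g_int (n : ℕ) : Integrable (fun t => w t * (F t) ^ n) := by
  have h1 : Integrable (fun t => (F t) ^ n * w t) := by
    apply hw_int.bdd_mul (c := (∫ t, w t) ^ n)
    · exact ((F_measurable hw_int hw_nonneg).pow_const n).aestronglyMeasurable
    · refine Filter.Eventually.of_forall (fun x => ?_)
      rw [Real.norm_eq_abs, abs_of_nonneg (pow_nonneg (F_nonneg hw_nonneg x) n)]
      exact pow_le_pow_left₀ (F_nonneg hw_nonneg x)
        (F_le_total hw_int hw_nonneg x) n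
  simpa [mul_comm] using h1

include hw_int hw_nonneg in
lemma key_identity_s5 : ∀ (n : ℕ) (x : ℝ),
    ∫ t in Set.Ioi x, w t * (F t) ^ n = (F x) ^ (n + 1) / (n + 1) := by
  intro n
  induction n with
  | zero => intro x; simp
  | succ n ih =>
    intro x
    set μ := volume.restrict (Set.Ioi x) with hμ
    have hgn : ∀ k : ℕ, Integrable (fun t => w t * (F t) ^ k) μ :=
      fun k => (g_int hw_int hw_nonneg k).restrict
    have hwr : Integrable w μ := hw_int.restrict
    set f : ℝ → ℝ → ℝ := fun s t => if s ≤ t then w s * (w t * (F t) ^ n) else 0 with hf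
    have hfint : Integrable (Function.uncurry f) (μ.prod μ) := by
      have : Function.uncurry f = Set.indicator {p : ℝ × ℝ | p.1 ≤ p.2}
          (fun p => w p.1 * (w p.2 * (F p.2) ^ n)) := by
        funext p
        simp only [Function.uncurry, hf, Set.indicator_apply, Set.mem_setOf_eq]
      rw [this]
      exact (hwr.mul_prod (hgn n)).indicator (measurableSet_le measurable_fst measurable_snd)
    have swap := integral_integral_swap hfint
    -- LHS: ∫ s, ∫ t, f s t
    have hL : ∫ s, (∫ t, f s t ∂μ) ∂μ
        = ∫ s in Set.Ioi x, w s * ((F s) ^ (n+1) / (n+1)) := by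
      rw [hμ]
      apply setIntegral_congr_fun measurableSet_Ioi
      intro s hs
      have h1 : (fun t => f s t) = Set.indicator (Set.Ici s) (fun t => w s * (w t * (F t) ^ n)) := by
        funext t
        simp only [hf, Set.indicator_apply, Set.mem_Ici]
      show (∫ t, f s t ∂μ) = _
      rw [h1, integral_indicator measurableSet_Ici, Measure.restrict_restrict measurableSet_Ici]
      have h2 : Set.Ici s ∩ Set.Ioi x = Set.Ici s := by
        apply Set.inter_eq_left.2
        intro t ht
        exact lt_of_lt_of_le (Set.mem_Ioi.mp hs) (Set.mem_Ici.mp ht)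
      rw [h2, integral_const_mul, integral_Ici_eq_integral_Ioi, ih s]
    -- RHS: ∫ t, ∫ s, f s t
    have hR : ∫ t, (∫ s, f s t ∂μ) ∂μ
        = ∫ t in Set.Ioi x, ((F x) - (F t)) * (w t * (F t) ^ n) := by
      rw [hμ]
      apply setIntegral_congr_fun measurableSet_Ioi
      intro t ht
      have h1 : (fun s => f s t) = Set.indicator (Set.Iic t) (fun s => w s * (w t * (F t) ^ n)) := by
        funext s
        simp only [hf, Set.indicator_apply, Set.mem_Iic]
      show (∫ s, f s t ∂μ) = _
      rw [h1, integral_indicator measurableSet_Iic, Measure.restrict_restrict measurableSet_Iic]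
      have h2 : Set.Iic t ∩ Set.Ioi x = Set.Ioc x t := by
        ext s; simp [Set.mem_Ioc, Set.mem_Iic, Set.mem_Ioi, and_comm]
      rw [h2, integral_mul_const]
      have h3 : ∫ s in Set.Ioc x t, w s = F x - F t := by
        have := F_split hw_int (le_of_lt ht)
        linarith
      rw [h3]
    rw [hL, hR] at swap
    have hInt1 : Integrable (fun t => (F x) * (w t * (F t) ^ n)) μ := (hgn n).const_mul _
    have hInt2 : Integrable (fun t => (F t) * (w t * (F t) ^ n)) μ := by
      have : (fun t => (F t) * (w t * (F t) ^ n)) = fun t => w t * (F t) ^ (n+1) := by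
        funext t; ring
      rw [this]; exact hgn (n+1)
    have hsub : ∫ t in Set.Ioi x, ((F x) - (F t)) * (w t * (F t) ^ n)
        = (F x) * (∫ t in Set.Ioi x, w t * (F t) ^ n)
          - ∫ t in Set.Ioi x, w t * (F t) ^ (n+1) := by
      rw [← integral_const_mul]
      have heq : (fun t => ((F x) - (F t)) * (w t * (F t) ^ n))
          = fun t => (F x) * (w t * (F t) ^ n) - w t * (F t) ^ (n+1) := by
        funext t; ring
      rw [heq]
      apply integral_sub hInt1
      exact hgn (n+1)
    have hLeq : ∫ s in Set.Ioi x, w s * ((F s) ^ (n+1) / (n+1))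
        = (∫ s in Set.Ioi x, w s * (F s) ^ (n+1)) / (n+1) := by
      rw [← integral_div]
      congr 1; funext s; ring
    rw [hLeq, hsub, ih x] at swap
    have hnpos : (0:ℝ) < n + 1 := by positivity
    have hnpos2 : (0:ℝ) < n + 2 := by positivity
    set I := ∫ t in Set.Ioi x, w t * (F t) ^ (n+1) with hI
    field_simp at swap
    have hp : (F x) * (F x) ^ (n+1) = (F x) ^ (n+2) := by ring
    push_cast
    rw [eq_div_iff (by positivity : ((n:ℝ)+1+1) ≠ 0)]
    linarith [swap, hp]
end Fsec

lemma norm_exp_le {k : ℂ} (hk : 0 ≤ k.im) {x t : ℝ} (hxt : x ≤ t) :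
    ‖Complex.exp (-2 * Complex.I * k * ((x : ℂ) - (t : ℂ)))‖ ≤ 1 := by
  rw [Complex.norm_exp]
  rw [Real.exp_le_one_iff]
  have h1 : (-2 * Complex.I * k * ((x : ℂ) - (t : ℂ))).re = 2 * (x - t) * k.im := by
    simp [Complex.mul_re, Complex.mul_im]
    ring
  rw [h1]
  have h2 : x - t ≤ 0 := by linarith
  nlinarith

lemma one_le_K1 (m : ℝ) (lam : ℂ) (h : kzero m lam ≠ 0) : 1 ≤ K1 m lam := by
  set c := ‖kzero m lam‖ with hc
  have hc0 : 0 < c := by simpa [hc] using norm_pos_iff.mpr h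
  rcases le_total 1 c with h1 | h1
  · exact le_trans h1 (le_max_left _ _)
  · exact le_trans ((one_le_inv₀ hc0).2 h1) (le_max_right _ _)

lemma K2_nonneg (m : ℝ) (lam : ℂ) : 0 ≤ K2 m lam :=
  le_trans zero_le_one (le_max_right _ _)

lemma norm_chi0 (m : ℝ) (lam : ℂ) : ‖![kzero m lam, (1:ℂ)]‖ = K2 m lam := by
  apply le_antisymm
  · rw [pi_norm_le_iff_of_nonneg (K2_nonneg m lam)]
    intro i
    fin_cases i
    · simpa [K2] using le_max_left _ _
    · simpa [K2] using le_max_right ‖kzero m lam‖ 1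
  · rw [K2]
    apply max_le
    · simpa using norm_le_pi_norm ![kzero m lam, (1:ℂ)] 0
    · simpa using norm_le_pi_norm ![kzero m lam, (1:ℂ)] 1

lemma norm_mulVec_le (N : Matrix (Fin 2) (Fin 2) ℂ) (v : Fin 2 → ℂ) (C : ℝ)
    (h : ∀ i, ‖N i 0‖ + ‖N i 1‖ ≤ C) : ‖N.mulVec v‖ ≤ C * ‖v‖ := by
  have hC : 0 ≤ C := le_trans (by positivity) (h 0)
  rw [pi_norm_le_iff_of_nonneg (by positivity)]
  intro i
  have hv : N.mulVec v i = N i 0 * v 0 + N i 1 * v 1 := by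
    simp [Matrix.mulVec, dotProduct, Fin.sum_univ_two]
  rw [hv]
  calc ‖N i 0 * v 0 + N i 1 * v 1‖ ≤ ‖N i 0‖ * ‖v 0‖ + ‖N i 1‖ * ‖v 1‖ := by
        refine le_trans (norm_add_le _ _) ?_
        simp [norm_mul]
    _ ≤ ‖N i 0‖ * ‖v‖ + ‖N i 1‖ * ‖v‖ := by
        gcongr
        · exact norm_le_pi_norm v 0
        · exact norm_le_pi_norm v 1
    _ = (‖N i 0‖ + ‖N i 1‖) * ‖v‖ := by ring
    _ ≤ C * ‖v‖ := mul_le_mul_of_nonneg_right (h i) (norm_nonneg v)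

lemma Gmul (k0 E P1 P2 Q : ℂ) :
    ((1/2 : ℂ) • !![1+E, k0*(1-E); (1-E)/k0, 1+E]) * !![(0:ℂ),1;-1,0] * !![P1,Q;Q,P2] =
      !![(1/2 : ℂ) * ((1+E) * Q - k0 * (1-E) * P1),
         (1/2 : ℂ) * ((1+E) * P2 - k0 * (1-E) * Q);
         (1/2 : ℂ) * ((1-E)/k0 * Q - (1+E) * P1),
         (1/2 : ℂ) * ((1-E)/k0 * P2 - (1+E) * Q)] := by
  ext i j
  fin_cases i <;> fin_cases j <;>
    simp [Matrix.mul_apply, Fin.sum_univ_two, Matrix.smul_apply] <;>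
    ring

lemma mulVec_bound (m : ℝ) (lam : ℂ) (p₁ p₂ q : ℝ → ℝ) {x t : ℝ}
    (hk0 : kzero m lam ≠ 0) (hkim : 0 ≤ (qmom m lam).im) (hxt : x ≤ t) (v : Fin 2 → ℂ) :
    ‖(Gker m lam x t * iSigma2 * Vmat p₁ p₂ q t).mulVec v‖
      ≤ K1 m lam * (|p₁ t| + |p₂ t| + 2 * |q t|) * ‖v‖ := by
  set E := Complex.exp (-2 * Complex.I * qmom m lam * ((x : ℂ) - (t : ℂ))) with hE
  set k0 := kzero m lam with hk
  have hM : Gker m lam x t * iSigma2 * Vmat p₁ p₂ q t =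
      !![(1/2 : ℂ) * ((1+E) * (q t : ℂ) - k0 * (1-E) * (p₁ t : ℂ)),
         (1/2 : ℂ) * ((1+E) * (p₂ t : ℂ) - k0 * (1-E) * (q t : ℂ));
         (1/2 : ℂ) * ((1-E)/k0 * (q t : ℂ) - (1+E) * (p₁ t : ℂ)),
         (1/2 : ℂ) * ((1-E)/k0 * (p₂ t : ℂ) - (1+E) * (q t : ℂ))] := by
    rw [hE, hk]
    exact Gmul (kzero m lam) _ _ _ _
  have hEn : ‖E‖ ≤ 1 := norm_exp_le hkim hxt
  have h1p : ‖1 + E‖ ≤ 2 := by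
    calc ‖1 + E‖ ≤ ‖(1:ℂ)‖ + ‖E‖ := norm_add_le _ _
      _ ≤ 2 := by rw [norm_one]; linarith
  have h1m : ‖1 - E‖ ≤ 2 := by
    calc ‖1 - E‖ ≤ ‖(1:ℂ)‖ + ‖E‖ := norm_sub_le _ _
      _ ≤ 2 := by rw [norm_one]; linarith
  set a := ‖k0‖ with ha
  have ha0 : 0 < a := norm_pos_iff.mpr hk0
  have haK : a ≤ K1 m lam := le_max_left _ _
  have haK' : a⁻¹ ≤ K1 m lam := le_max_right _ _
  have h1K : 1 ≤ K1 m lam := one_le_K1 m lam hk0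
  have key : ∀ (A B : ℂ) (r₁ r₂ : ℝ) (cA cB : ℝ), ‖A‖ ≤ cA → ‖B‖ ≤ cB →
      ‖(1/2 : ℂ) * (A * (r₁:ℂ) - B * (r₂:ℂ))‖ ≤ (cA * |r₁| + cB * |r₂|)/2 := by
    intro A B r₁ r₂ cA cB hA hB
    rw [norm_mul]
    have h2 : ‖(1/2 : ℂ)‖ = 1/2 := by simp
    rw [h2]
    have : ‖A * (r₁:ℂ) - B * (r₂:ℂ)‖ ≤ cA * |r₁| + cB * |r₂| := by
      calc ‖A * (r₁:ℂ) - B * (r₂:ℂ)‖ ≤ ‖A * (r₁:ℂ)‖ + ‖B * (r₂:ℂ)‖ := norm_sub_le _ _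
        _ = ‖A‖ * |r₁| + ‖B‖ * |r₂| := by
            simp [norm_mul, Complex.norm_real, Real.norm_eq_abs]
        _ ≤ cA * |r₁| + cB * |r₂| := by gcongr
    linarith
  rw [hM]
  apply norm_mulVec_le
  intro i
  have hk0n : ‖k0 * (1-E)‖ ≤ 2 * a := by
    rw [norm_mul]
    calc ‖k0‖ * ‖1-E‖ ≤ a * 2 := by
          apply mul_le_mul_of_nonneg_left h1m (by positivity)
      _ = 2 * a := by ring
  have hinv : ‖(1-E)/k0‖ ≤ 2 * a⁻¹ := by
    rw [norm_div]
    rw [div_eq_mul_inv]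
    have : ‖k0‖⁻¹ = a⁻¹ := by rw [ha]
    rw [this]
    apply mul_le_mul_of_nonneg_right h1m (by positivity)
  fin_cases i
  · have b1 := key (1+E) (k0*(1-E)) (q t) (p₁ t) 2 (2*a) h1p hk0n
    have b2 := key (1+E) (k0*(1-E)) (p₂ t) (q t) 2 (2*a) h1p hk0n
    simp only [Fin.mk_zero, Fin.mk_one, Matrix.of_apply, Matrix.cons_val', Matrix.cons_val_zero,
      Matrix.cons_val_one, Matrix.head_cons, Matrix.empty_val', Matrix.cons_val_fin_one,
      Matrix.head_fin_const]
    have e1 : (2 * |q t| + 2*a*|p₁ t|)/2 = |q t| + a*|p₁ t| := by ring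
    have e2 : (2 * |p₂ t| + 2*a*|q t|)/2 = |p₂ t| + a*|q t| := by ring
    nlinarith [mul_le_mul_of_nonneg_right haK (abs_nonneg (p₁ t)),
      mul_le_mul_of_nonneg_right haK (abs_nonneg (q t)),
      mul_le_mul_of_nonneg_right h1K (abs_nonneg (p₂ t)),
      mul_le_mul_of_nonneg_right h1K (abs_nonneg (q t)), abs_nonneg (p₁ t), abs_nonneg (p₂ t), abs_nonneg (q t)]
  · have b1 := key ((1-E)/k0) (1+E) (q t) (p₁ t) (2*a⁻¹) 2 hinv h1p
    have b2 := key ((1-E)/k0) (1+E) (p₂ t) (q t) (2*a⁻¹) 2 hinv h1p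
    simp only [Fin.mk_zero, Fin.mk_one, Matrix.of_apply, Matrix.cons_val', Matrix.cons_val_zero,
      Matrix.cons_val_one, Matrix.head_cons, Matrix.empty_val', Matrix.cons_val_fin_one,
      Matrix.head_fin_const]
    nlinarith [mul_le_mul_of_nonneg_right haK' (abs_nonneg (q t)),
      mul_le_mul_of_nonneg_right haK' (abs_nonneg (p₂ t)),
      mul_le_mul_of_nonneg_right h1K (abs_nonneg (p₁ t)),
      mul_le_mul_of_nonneg_right h1K (abs_nonneg (q t)), abs_nonneg (p₁ t), abs_nonneg (p₂ t), abs_nonneg (q t)]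


theorem stmt5 (m : ℝ) (hm : 0 < m) (p₁ p₂ q : ℝ → ℝ)
    (hp₁ : IntegrableOn p₁ (Set.Ici 0)) (hp₂ : IntegrableOn p₂ (Set.Ici 0))
    (hq : IntegrableOn q (Set.Ici 0))
    (lam : ℂ) (hlamim : 0 ≤ lam.im)
    (hlam : ∀ t : ℝ, t ∈ Set.Icc (-m) m → (t : ℂ) ≠ lam)
    (χ : ℕ → ℝ → Fin 2 → ℂ)
    (hχ0 : ∀ x : ℝ, χ 0 x = ![kzero m lam, 1])
    (hχs : ∀ n : ℕ, ∀ x : ℝ,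
      χ (n + 1) x
        = ∫ t in Set.Ioi x, (Gker m lam x t * iSigma2 * Vmat p₁ p₂ q t).mulVec (χ n t)) :
    (∀ n : ℕ, 1 ≤ n → ∀ x : ℝ, 0 ≤ x →
      ‖χ n x‖ ≤ (K2 m lam / n.factorial)
          * (K1 m lam * ∫ t in Set.Ioi x, (|p₁ t| + |p₂ t| + 2 * |q t|)) ^ n) ∧
    (∀ x : ℝ, 0 ≤ x →
      Summable (fun n : ℕ => ‖χ n x‖) ∧
      ‖∑' n : ℕ, χ n x‖
        ≤ K2 m lam
          * Real.exp (K1 m lam * ∫ t in Set.Ioi x, (|p₁ t| + |p₂ t| + 2 * |q t|))) := by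
  classical
  have hk0 : kzero m lam ≠ 0 := kzero_ne_zero hm hlam
  have hkim : 0 ≤ (qmom m lam).im := im_qmom_nonneg hm hlamim hlam
  have h1K : 1 ≤ K1 m lam := one_le_K1 m lam hk0
  have hK1 : 0 ≤ K1 m lam := le_trans zero_le_one h1K
  have hK2 : 0 ≤ K2 m lam := K2_nonneg m lam
  set w : ℝ → ℝ := fun t => |p₁ t| + |p₂ t| + 2 * |q t| with hw
  set w' : ℝ → ℝ := (Set.Ici (0:ℝ)).indicator w with hw'
  have hw_on : IntegrableOn w (Set.Ici 0) :=
    (hp₁.abs.add hp₂.abs).add (hq.abs.const_mul 2)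
  have hw_int : Integrable w' := hw_on.integrable_indicator measurableSet_Ici
  have hw_nonneg : ∀ t, 0 ≤ w' t := by
    intro t
    apply Set.indicator_nonneg
    intro s _
    simp only [hw]
    positivity
  set F : ℝ → ℝ := fun x => ∫ t in Set.Ioi x, w' t with hF
  have hFeq : ∀ x : ℝ, 0 ≤ x → (∫ t in Set.Ioi x, (|p₁ t| + |p₂ t| + 2 * |q t|)) = F x := by
    intro x hx
    exact (setIntegral_congr_fun measurableSet_Ioi
      (fun t ht => Set.indicator_of_mem (le_trans hx (le_of_lt ht)) w)).symm
  have main : ∀ n : ℕ, ∀ x : ℝ, 0 ≤ x →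
      ‖χ n x‖ ≤ K2 m lam / n.factorial * (K1 m lam * F x) ^ n := by
    intro n
    induction n with
    | zero =>
      intro x hx
      rw [hχ0 x, norm_chi0]
      simp
    | succ n ih =>
      intro x hx
      rw [hχs n x]
      set C := K1 m lam ^ (n+1) * (K2 m lam / n.factorial) with hC
      have hfac : (0:ℝ) < n.factorial := by positivity
      have hbound : ∀ t ∈ Set.Ioi x,
          ‖(Gker m lam x t * iSigma2 * Vmat p₁ p₂ q t).mulVec (χ n t)‖
            ≤ C * (w' t * F t ^ n) := by
        intro t ht
        have hxt : x ≤ t := le_of_lt ht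
        have ht0 : (0:ℝ) ≤ t := le_trans hx hxt
        have h2 := ih t ht0
        have hwt : w' t = |p₁ t| + |p₂ t| + 2 * |q t| := Set.indicator_of_mem ht0 w
        calc ‖(Gker m lam x t * iSigma2 * Vmat p₁ p₂ q t).mulVec (χ n t)‖
            ≤ K1 m lam * (|p₁ t| + |p₂ t| + 2 * |q t|) * ‖χ n t‖ :=
              mulVec_bound m lam p₁ p₂ q hk0 hkim hxt (χ n t)
          _ ≤ K1 m lam * (|p₁ t| + |p₂ t| + 2 * |q t|)
                * (K2 m lam / n.factorial * (K1 m lam * F t) ^ n) := by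
              apply mul_le_mul_of_nonneg_left h2
              positivity
          _ = C * (w' t * F t ^ n) := by
              rw [hwt, hC, mul_pow]
              ring
      calc ‖∫ t in Set.Ioi x, (Gker m lam x t * iSigma2 * Vmat p₁ p₂ q t).mulVec (χ n t)‖
          ≤ ∫ t in Set.Ioi x, ‖(Gker m lam x t * iSigma2 * Vmat p₁ p₂ q t).mulVec (χ n t)‖ :=
            norm_integral_le_integral_norm _
        _ ≤ ∫ t in Set.Ioi x, C * (w' t * F t ^ n) := by
            apply integral_mono_of_nonneg
            · exact Filter.Eventually.of_forall (fun t => norm_nonneg _)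
            · exact ((g_int hw_int hw_nonneg n).const_mul C).restrict
            · rw [Filter.EventuallyLE, ae_restrict_iff' measurableSet_Ioi]
              exact Filter.Eventually.of_forall hbound
        _ = C * (F x ^ (n+1) / (n+1)) := by
            rw [integral_const_mul, key_identity_s5 hw_int hw_nonneg n x]
        _ = K2 m lam / (n+1).factorial * (K1 m lam * F x) ^ (n+1) := by
            rw [hC, mul_pow, Nat.factorial_succ]
            push_cast
            have hn1 : ((n:ℝ)+1) ≠ 0 := by positivity
            field_simp
  constructor
  · intro n _ x hx
    rw [hFeq x hx]
    exact main n x hx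
  · intro x hx
    have hb : ∀ n : ℕ, ‖χ n x‖ ≤ K2 m lam * ((K1 m lam * F x) ^ n / n.factorial) := by
      intro n
      calc ‖χ n x‖ ≤ K2 m lam / n.factorial * (K1 m lam * F x) ^ n := main n x hx
        _ = K2 m lam * ((K1 m lam * F x) ^ n / n.factorial) := by ring
    have hsum2 : Summable (fun n : ℕ => K2 m lam * ((K1 m lam * F x) ^ n / n.factorial)) :=
      (Real.summable_pow_div_factorial (K1 m lam * F x)).mul_left _
    have hs : Summable (fun n : ℕ => ‖χ n x‖) :=
      Summable.of_nonneg_of_le (fun n => norm_nonneg _) hb hsum2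
    refine ⟨hs, ?_⟩
    rw [hFeq x hx]
    calc ‖∑' n : ℕ, χ n x‖ ≤ ∑' n : ℕ, ‖χ n x‖ := norm_tsum_le_tsum_norm hs
      _ ≤ ∑' n : ℕ, K2 m lam * ((K1 m lam * F x) ^ n / n.factorial) :=
          Summable.tsum_le_tsum hb hs hsum2
      _ = K2 m lam * ∑' n : ℕ, (K1 m lam * F x) ^ n / n.factorial := tsum_mul_left
      _ = K2 m lam * Real.exp (K1 m lam * F x) := by
          rw [Real.exp_eq_exp_ℝ, NormedSpace.exp_eq_tsum_div]
end

section
/- Let γ>0, p∈ℕ, and let G_p(z) = z + d₀ + Σ_{n=1}^{p} d_n z^{−n} with complex coefficients d₀,…,d_p. Let f : ℂ → ℂ be entire and assume: (a) there are constants A, C₀ > 0 with |f(z)| ≤ C₀·e^{A|z|} for all z∈ℂ; (b) limsup_{y→+∞} (log|f(−iy)|)/y ≤ 2γ; (c) C_p := sup_{x∈ℝ, x≠0} |x^{p+1}·(f(x) − G_p(x))| < ∞. Then every zero z of f with Im z ≤ 0 and z ≠ 0 satisfies |z^{p+1}·G_p(z)| ≤ C_p·e^{−2γ·Im z}. -/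
open Filter Complex Topology

private lemma stmt6_pow_le_exp (t : ℝ) (ht : 0 ≤ t) (k : ℕ) : t ^ k ≤ Real.exp (k * t) := by
  calc t ^ k ≤ (Real.exp t) ^ k := pow_le_pow_left₀ ht (by linarith [Real.add_one_le_exp t]) k
    _ = Real.exp (k * t) := (Real.exp_nat_mul t k).symm

private lemma stmt6_tendsto (δ : ℝ) (hδ : 0 < δ) (n : ℕ) :
    Tendsto (fun x : ℝ => x ^ n * Real.exp (-δ * x)) atTop (𝓝 0) := by
  have h := (Real.tendsto_pow_mul_exp_neg_atTop_nhds_zero n).comp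
    (tendsto_id.const_mul_atTop hδ)
  have := h.div_const (δ ^ n)
  simp only [Function.comp] at this
  rw [zero_div] at this
  refine this.congr fun x => ?_
  field_simp [mul_pow]
  simp only [id]
  ring

set_option maxHeartbeats 1600000 in
theorem stmt6 (γ : ℝ) (hγ : 0 < γ) (p : ℕ) (d : ℕ → ℂ) (f : ℂ → ℂ)
    (hf : Differentiable ℂ f)
    (A C₀ : ℝ) (hA : 0 < A) (hC₀ : 0 < C₀)
    (hbd : ∀ z : ℂ, ‖f z‖ ≤ C₀ * Real.exp (A * ‖z‖))
    (htype : Filter.limsup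
        (fun y : ℝ => Real.log ‖f (-Complex.I * (y : ℂ))‖ / y) Filter.atTop
      ≤ 2 * γ)
    (Cp : ℝ)
    (hCp : ∀ x : ℝ, x ≠ 0 →
      ‖(x : ℂ) ^ (p + 1)
          * (f x - ((x : ℂ) + d 0 + ∑ n ∈ Finset.Icc 1 p, d n * (x : ℂ) ^ (-(n : ℤ))))‖ ≤ Cp) :
    ∀ z : ℂ, f z = 0 → z.im ≤ 0 → z ≠ 0 →
      ‖z ^ (p + 1) * (z + d 0 + ∑ n ∈ Finset.Icc 1 p, d n * z ^ (-(n : ℤ)))‖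
        ≤ Cp * Real.exp (-2 * γ * z.im) := by
  -- the polynomial Q and the entire function h
  set Q : ℂ → ℂ := fun u => u ^ (p+2) + d 0 * u ^ (p+1) + ∑ n ∈ Finset.Icc 1 p, d n * u ^ (p+1-n)
    with hQdef
  set h : ℂ → ℂ := fun u => u ^ (p+1) * f u - Q u with hhdef
  -- algebraic identity
  have L1 : ∀ u : ℂ, u ≠ 0 →
      u ^ (p+1) * (u + d 0 + ∑ n ∈ Finset.Icc 1 p, d n * u ^ (-(n:ℤ))) = Q u := by
    intro u hu
    rw [hQdef, mul_add, mul_add, Finset.mul_sum]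
    congr 1
    · congr 1 <;> ring
    · refine Finset.sum_congr rfl fun n hn => ?_
      obtain ⟨hn1, hn2⟩ := Finset.mem_Icc.mp hn
      have : u ^ (p+1) * u ^ (-(n:ℤ)) = u ^ (p+1-n) := by
        rw [← zpow_natCast u (p+1), ← zpow_add₀ hu, ← zpow_natCast u (p+1-n)]
        congr 1
        push_cast [Nat.cast_sub (by omega : n ≤ p+1)]
        ring
      rw [mul_left_comm, this]
  have hL2 : ∀ u : ℂ, u ≠ 0 →
      u ^ (p+1) * (f u - (u + d 0 + ∑ n ∈ Finset.Icc 1 p, d n * u ^ (-(n:ℤ)))) = h u := by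
    intro u hu
    rw [hhdef, mul_sub, L1 u hu]
  have hCp0 : 0 ≤ Cp := le_trans (norm_nonneg _) (hCp 1 one_ne_zero)
  -- differentiability of h
  have hQdiff : Differentiable ℂ Q := by
    rw [hQdef]
    apply Differentiable.add
    · exact (differentiable_pow _).add ((differentiable_const _).mul (differentiable_pow _))
    · exact Differentiable.fun_sum fun n _ => (differentiable_const _).mul (differentiable_pow _)
  have hhdiff : Differentiable ℂ h := ((differentiable_pow _).mul hf).sub hQdiff
  -- |h x| ≤ Cp for all real x
  have hhreal : ∀ x : ℝ, ‖h x‖ ≤ Cp := by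
    have hne : ∀ x : ℝ, x ≠ 0 → ‖h x‖ ≤ Cp := by
      intro x hx
      rw [← hL2 x (by exact_mod_cast Complex.ofReal_ne_zero.mpr hx)]
      exact hCp x hx
    intro x
    rcases eq_or_ne x 0 with rfl | hx
    · have hcont : Tendsto (fun x : ℝ => ‖h x‖)
          (𝓝[≠] (0:ℝ)) (𝓝 (‖h (0:ℝ)‖)) := by
        refine Tendsto.mono_left ?_ nhdsWithin_le_nhds
        exact (continuous_norm.comp
          (hhdiff.continuous.comp Complex.continuous_ofReal)).tendsto 0
      refine le_of_tendsto hcont ?_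
      filter_upwards [self_mem_nhdsWithin] with x hx using hne x hx
    · exact hne x hx
  -- bounds on Q
  set MQ : ℝ := 1 + ‖d 0‖ + ∑ n ∈ Finset.Icc 1 p, ‖d n‖ with hMQdef
  have hMQ1 : 1 ≤ MQ := by
    have : (0:ℝ) ≤ ∑ n ∈ Finset.Icc 1 p, ‖d n‖ :=
      Finset.sum_nonneg fun n _ => norm_nonneg _
    have h0 := norm_nonneg (d 0)
    rw [hMQdef]; linarith
  have hQle : ∀ u : ℂ, ‖Q u‖ ≤ MQ * max 1 (‖u‖) ^ (p+2) := by
    intro u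
    set m : ℝ := max 1 (‖u‖) with hm
    have hm1 : (1:ℝ) ≤ m := le_max_left _ _
    have hmu : ‖u‖ ≤ m := le_max_right _ _
    have hm0 : (0:ℝ) ≤ m := by linarith
    have hpow : ∀ k : ℕ, k ≤ p+2 → ‖u‖ ^ k ≤ m ^ (p+2) := by
      intro k hk
      calc ‖u‖ ^ k ≤ m ^ k := pow_le_pow_left₀ (norm_nonneg _) hmu k
        _ ≤ m ^ (p+2) := pow_le_pow_right₀ hm1 hk
    calc ‖Q u‖
        ≤ ‖u ^ (p+2) + d 0 * u ^ (p+1)‖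
            + ‖∑ n ∈ Finset.Icc 1 p, d n * u ^ (p+1-n)‖ := norm_add_le _ _
      _ ≤ (‖u‖ ^ (p+2) + ‖d 0‖ * ‖u‖ ^ (p+1))
            + ∑ n ∈ Finset.Icc 1 p, ‖d n‖ * ‖u‖ ^ (p+1-n) := by
          gcongr
          · calc ‖u ^ (p+2) + d 0 * u ^ (p+1)‖
                ≤ ‖u ^ (p+2)‖ + ‖d 0 * u ^ (p+1)‖ :=
                  norm_add_le _ _
              _ = ‖u‖ ^ (p+2) + ‖d 0‖ * ‖u‖ ^ (p+1) := by
                  rw [norm_pow, norm_mul, norm_pow]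
          · calc ‖∑ n ∈ Finset.Icc 1 p, d n * u ^ (p+1-n)‖
                ≤ ∑ n ∈ Finset.Icc 1 p, ‖d n * u ^ (p+1-n)‖ :=
                  norm_sum_le _ _
              _ = ∑ n ∈ Finset.Icc 1 p, ‖d n‖ * ‖u‖ ^ (p+1-n) := by
                  simp [norm_mul, norm_pow]
      _ ≤ (m ^ (p+2) + ‖d 0‖ * m ^ (p+2))
            + ∑ n ∈ Finset.Icc 1 p, ‖d n‖ * m ^ (p+2) := by
          refine add_le_add (add_le_add (hpow _ le_rfl)
            (mul_le_mul_of_nonneg_left (hpow _ (by omega)) (norm_nonneg _)))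
            (Finset.sum_le_sum fun n hn =>
              mul_le_mul_of_nonneg_left (hpow _ (by omega)) (norm_nonneg _))
      _ = MQ * m ^ (p+2) := by rw [hMQdef, ← Finset.sum_mul]; ring
  -- global exponential bound on h
  set Mh : ℝ := C₀ + MQ * Real.exp ((p:ℝ)+2) with hMhdef
  set B : ℝ := A + (p+2) with hBdef
  have hhle : ∀ u : ℂ, ‖h u‖ ≤ Mh * Real.exp (B * ‖u‖) := by
    intro u
    have hu0 : (0:ℝ) ≤ ‖u‖ := norm_nonneg _
    have t1 : ‖u ^ (p+1) * f u‖ ≤ C₀ * Real.exp (B * ‖u‖) := by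
      rw [norm_mul, norm_pow]
      calc ‖u‖ ^ (p+1) * ‖f u‖
          ≤ Real.exp (((p+1 : ℕ) : ℝ) * ‖u‖) * (C₀ * Real.exp (A * ‖u‖)) := by
            apply mul_le_mul (stmt6_pow_le_exp _ hu0 _) (hbd u) (norm_nonneg _)
              (Real.exp_nonneg _)
        _ ≤ C₀ * Real.exp (B * ‖u‖) := by
            rw [mul_left_comm, ← Real.exp_add]
            apply mul_le_mul_of_nonneg_left _ hC₀.le
            apply Real.exp_le_exp.mpr
            rw [hBdef]; push_cast; nlinarith
    have t2 : ‖Q u‖ ≤ MQ * Real.exp (p+2) * Real.exp (B * ‖u‖) := by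
      refine (hQle u).trans ?_
      have hm1 : (1:ℝ) ≤ max 1 (‖u‖) := le_max_left _ _
      have : max 1 (‖u‖) ^ (p+2)
          ≤ Real.exp (((p:ℝ)+2) * max 1 (‖u‖)) := by
        exact_mod_cast stmt6_pow_le_exp _ (by linarith : (0:ℝ) ≤ max 1 (‖u‖)) (p+2)
      have h2 : ((p:ℝ)+2) * max 1 (‖u‖) ≤ (p+2) + (p+2) * ‖u‖ := by
        rcases max_cases 1 (‖u‖) with ⟨he, hle⟩ | ⟨he, hle⟩ <;> rw [he] <;> nlinarith
      calc MQ * max 1 (‖u‖) ^ (p+2)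
          ≤ MQ * Real.exp (((p:ℝ)+2) + ((p:ℝ)+2) * ‖u‖) := by
            refine mul_le_mul_of_nonneg_left (this.trans (Real.exp_le_exp.mpr ?_)) (by linarith)
            exact_mod_cast h2
        _ ≤ MQ * Real.exp ((p:ℝ)+2) * Real.exp (B * ‖u‖) := by
            rw [Real.exp_add, ← mul_assoc]
            apply mul_le_mul_of_nonneg_left (Real.exp_le_exp.mpr _)
              (by positivity)
            rw [hBdef]; nlinarith
    calc ‖h u‖ ≤ ‖u ^ (p+1) * f u‖ + ‖Q u‖ := by
          rw [hhdef]
          simpa using norm_sub_le (u ^ (p+1) * f u) (Q u)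
      _ ≤ C₀ * Real.exp (B * ‖u‖)
            + MQ * Real.exp ((p:ℝ)+2) * Real.exp (B * ‖u‖) :=
          add_le_add t1 t2
      _ = Mh * Real.exp (B * ‖u‖) := by rw [hMhdef]; ring
  -- boundedness of the limsup quantity
  have hubdd : IsBoundedUnder (· ≤ ·) atTop
      (fun y : ℝ => Real.log (‖f (-Complex.I * (y:ℂ))‖) / y) := by
    refine ⟨|Real.log C₀| + A, eventually_map.2 ?_⟩
    filter_upwards [eventually_ge_atTop (1:ℝ)] with y hy
    have hy0 : (0:ℝ) < y := by linarith
    have habs : ‖-Complex.I * (y:ℂ)‖ = y := by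
      rw [norm_mul]
      simp [Complex.norm_real, _root_.abs_of_nonneg hy0.le]
    rcases eq_or_lt_of_le (norm_nonneg (f (-Complex.I * y))) with h0 | h0
    · rw [← h0]
      simp only [Real.log_zero, zero_div]
      positivity
    · have hlog : Real.log (‖f (-Complex.I*y)‖) ≤ Real.log C₀ + A * y := by
        calc Real.log (‖f (-Complex.I*y)‖)
            ≤ Real.log (C₀ * Real.exp (A * ‖-Complex.I*(y:ℂ)‖)) :=
              Real.log_le_log h0 (hbd _)
          _ = Real.log C₀ + A * y := by
              rw [Real.log_mul hC₀.ne' (Real.exp_ne_zero _), Real.log_exp, habs]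
      rw [div_le_iff₀ hy0]
      nlinarith [le_abs_self (Real.log C₀), abs_nonneg (Real.log C₀)]
  -- the key Phragmen-Lindelof estimate
  have key : ∀ z : ℂ, z.im ≤ 0 → ‖h z‖ ≤ Cp * Real.exp (-2 * γ * z.im) := by
    intro z hz
    have hkey : ∀ ε : ℝ, 0 < ε → ‖h z‖ ≤ Cp * Real.exp (-(2*γ+ε) * z.im) := by
      intro ε hε
      set c : ℝ := 2*γ + ε with hc
      have hc0 : 0 < c := by rw [hc]; linarith
      set F : ℂ → ℂ := fun w => h (-Complex.I * w) * Complex.exp (((-c : ℝ) : ℂ) * w) with hF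
      have hFnorm : ∀ w : ℂ, ‖F w‖
          = ‖h (-Complex.I * w)‖ * Real.exp (-c * w.re) := by
        intro w
        rw [hF]
        simp only [norm_mul, Complex.norm_exp, Complex.re_ofReal_mul]
      have hPL : ‖F (Complex.I * z)‖ ≤ Cp := by
        refine PhragmenLindelof.right_half_plane_of_bounded_on_real ?_ ?_ ?_ ?_ ?_
        · refine Differentiable.diffContOnCl ?_
          exact (hhdiff.comp ((differentiable_const _).mul differentiable_id)).mul
            (((differentiable_const _).mul differentiable_id).cexp)
        · refine ⟨1, one_lt_two, B + c, ?_⟩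
          refine Asymptotics.IsBigO.of_bound Mh ?_
          refine Filter.Eventually.of_forall fun w => ?_
          have h1 : ‖h (-Complex.I*w)‖ ≤ Mh * Real.exp (B * ‖w‖) := by
            have := hhle (-Complex.I*w)
            rwa [norm_mul, norm_neg, Complex.norm_I, one_mul] at this
          have h2 : Real.exp (-c * w.re) ≤ Real.exp (c * ‖w‖) := by
            apply Real.exp_le_exp.mpr
            have h3 := Complex.abs_re_le_norm w
            have h4 := neg_abs_le w.re
            nlinarith [norm_nonneg w]
          rw [hFnorm]
          have : ‖Real.exp ((B + c) * ‖w‖ ^ (1:ℝ))‖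
              = Real.exp (B * ‖w‖) * Real.exp (c * ‖w‖) := by
            rw [Real.norm_eq_abs, Real.abs_exp, Real.rpow_one, ← Real.exp_add, add_mul]
          rw [this]
          calc ‖h (-Complex.I * w)‖ * Real.exp (-c * w.re)
              ≤ (Mh * Real.exp (B * ‖w‖)) * Real.exp (c * ‖w‖) :=
                mul_le_mul h1 h2 (Real.exp_nonneg _) (by positivity)
            _ = Mh * (Real.exp (B * ‖w‖) * Real.exp (c * ‖w‖)) := by ring
        · -- bounded on the real ray
          have hev : ∀ᶠ y : ℝ in atTop,
              Real.log (‖f (-Complex.I * (y:ℂ))‖)/y < 2*γ + ε/2 :=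
            eventually_lt_of_limsup_lt (lt_of_le_of_lt htype (by linarith)) hubdd
          have hsq : ∀ᶠ x : ℝ in atTop,
              ‖F (x:ℂ)‖ ≤ (1+MQ) * (x ^ (p+2) * Real.exp (-(ε/2) * x)) := by
            filter_upwards [hev, eventually_ge_atTop (1:ℝ)] with x hx h1x
            have hx0 : (0:ℝ) < x := by linarith
            have habsx : ‖-Complex.I * (x:ℂ)‖ = x := by
              rw [norm_mul]
              simp [Complex.norm_real, _root_.abs_of_nonneg hx0.le]
            have hfb : ‖f (-Complex.I*x)‖ ≤ Real.exp ((2*γ+ε/2) * x) := by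
              rcases eq_or_lt_of_le
                  (norm_nonneg (f (-Complex.I*x))) with h0|h0
              · rw [← h0]; positivity
              · have hlt : Real.log (‖f (-Complex.I*x)‖) < (2*γ+ε/2) * x := by
                  rw [div_lt_iff₀ hx0] at hx
                  exact hx
                calc ‖f (-Complex.I*x)‖
                    = Real.exp (Real.log (‖f (-Complex.I*x)‖)) :=
                      (Real.exp_log h0).symm
                  _ ≤ Real.exp ((2*γ+ε/2)*x) := Real.exp_le_exp.mpr hlt.le
            have hQx : ‖Q (-Complex.I*x)‖ ≤ MQ * x^(p+2) := by
              have := hQle (-Complex.I*x)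
              rwa [habsx, max_eq_right h1x] at this
            have hhx : ‖h (-Complex.I*x)‖
                ≤ x^(p+1) * Real.exp ((2*γ+ε/2)*x) + MQ * x^(p+2) := by
              rw [hhdef]
              calc ‖(-Complex.I*x) ^ (p+1) * f (-Complex.I*x) - Q (-Complex.I*x)‖
                  ≤ ‖(-Complex.I*x) ^ (p+1) * f (-Complex.I*x)‖
                      + ‖Q (-Complex.I*x)‖ := by
                    simpa using
                      norm_sub_le ((-Complex.I*(x:ℂ)) ^ (p+1) * f (-Complex.I*x)) (Q (-Complex.I*x))
                _ ≤ x^(p+1) * Real.exp ((2*γ+ε/2)*x) + MQ * x^(p+2) := by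
                    refine add_le_add ?_ hQx
                    rw [norm_mul, norm_pow, habsx]
                    exact mul_le_mul_of_nonneg_left hfb (by positivity)
            rw [hFnorm, Complex.ofReal_re]
            calc ‖h (-Complex.I * x)‖ * Real.exp (-c * x)
                ≤ (x^(p+1) * Real.exp ((2*γ+ε/2)*x) + MQ * x^(p+2)) * Real.exp (-c * x) :=
                  mul_le_mul_of_nonneg_right hhx (Real.exp_nonneg _)
              _ ≤ (1+MQ) * (x ^ (p+2) * Real.exp (-(ε/2) * x)) := by
                  rw [add_mul]
                  have e1 : x^(p+1) * Real.exp ((2*γ+ε/2)*x) * Real.exp (-c * x)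
                      = x^(p+1) * Real.exp (-(ε/2) * x) := by
                    rw [mul_assoc, ← Real.exp_add, hc]
                    ring_nf
                  have e2 : x^(p+1) * Real.exp (-(ε/2) * x)
                      ≤ x^(p+2) * Real.exp (-(ε/2) * x) :=
                    mul_le_mul_of_nonneg_right (pow_le_pow_right₀ h1x (by omega))
                      (Real.exp_nonneg _)
                  have e3 : MQ * x^(p+2) * Real.exp (-c * x)
                      ≤ MQ * (x^(p+2) * Real.exp (-(ε/2) * x)) := by
                    rw [mul_assoc]
                    refine mul_le_mul_of_nonneg_left ?_ (by linarith)
                    refine mul_le_mul_of_nonneg_left ?_ (by positivity)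
                    apply Real.exp_le_exp.mpr
                    rw [hc]
                    nlinarith
                  rw [e1]
                  nlinarith [e2, e3]
          have h0 : Tendsto (fun x : ℝ => (1+MQ) * (x^(p+2) * Real.exp (-(ε/2)*x)))
              atTop (𝓝 0) := by
            have := (stmt6_tendsto (ε/2) (by linarith) (p+2)).const_mul (1+MQ)
            simpa using this
          exact (squeeze_zero' (Filter.Eventually.of_forall fun x => norm_nonneg _)
            hsq h0).isBoundedUnder_le
        · -- bound on the imaginary axis
          intro x
          have hxI : -Complex.I * ((x:ℂ) * Complex.I) = (x:ℂ) := by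
            rw [mul_comm (x:ℂ) Complex.I, ← mul_assoc, neg_mul, Complex.I_mul_I, neg_neg, one_mul]
          rw [hFnorm, hxI]
          have : ((x:ℂ) * Complex.I).re = 0 := by simp
          rw [this, mul_zero, Real.exp_zero, mul_one]
          exact hhreal x
        · simp only [Complex.mul_re, Complex.I_re, Complex.I_im, zero_mul, one_mul, zero_sub,
            neg_nonneg]
          exact hz
      -- unpack the conclusion
      have hIzz : -Complex.I * (Complex.I * z) = z := by
        rw [← mul_assoc, neg_mul, Complex.I_mul_I, neg_neg, one_mul]
      rw [hFnorm, hIzz] at hPL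
      have hIzre : (Complex.I * z).re = -z.im := by
        simp [Complex.mul_re]
      rw [hIzre] at hPL
      -- hPL : abs (h z) * exp (-c * -z.im) ≤ Cp
      have e1 : ‖h z‖
          = (‖h z‖ * Real.exp (-c * -z.im)) * Real.exp (-(c * z.im)) := by
        rw [mul_assoc, ← Real.exp_add]
        have : -c * -z.im + -(c*z.im) = 0 := by ring
        rw [this, Real.exp_zero, mul_one]
      rw [e1]
      calc (‖h z‖ * Real.exp (-c * -z.im)) * Real.exp (-(c * z.im))
          ≤ Cp * Real.exp (-(c * z.im)) :=
            mul_le_mul_of_nonneg_right hPL (Real.exp_nonneg _)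
        _ = Cp * Real.exp (-(2*γ+ε) * z.im) := by rw [hc]; ring_nf
    -- let ε → 0
    have ht : Tendsto (fun ε : ℝ => Cp * Real.exp (-(2*γ+ε) * z.im)) (𝓝[>] (0:ℝ))
        (𝓝 (Cp * Real.exp (-2 * γ * z.im))) := by
      refine Tendsto.mono_left ?_ nhdsWithin_le_nhds
      have hcont : Continuous fun ε : ℝ => Cp * Real.exp (-(2*γ+ε) * z.im) := by
        continuity
      have := hcont.tendsto 0
      have heq : Cp * Real.exp (-(2*γ+0) * z.im) = Cp * Real.exp (-2 * γ * z.im) := by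
        ring_nf
      rwa [heq] at this
    refine ge_of_tendsto ht ?_
    filter_upwards [self_mem_nhdsWithin] with ε hε using hkey ε hε
  -- conclusion
  intro z hfz hzim hz0
  rw [L1 z hz0]
  have habsQ : ‖Q z‖ = ‖h z‖ := by
    rw [hhdef]
    simp [hfz]
  rw [habsQ]
  exact key z hzim
end

section
/- Let γ>0 and d₀∈ℂ. Let f : ℂ → ℂ be entire and assume: (a) there are constants A, C > 0 with |f(z)| ≤ C·e^{A|z|} for all z∈ℂ; (b) limsup_{y→+∞} (log|f(−iy)|)/y ≤ 2γ; (c) C₀ := sup_{x∈ℝ, x≠0} |x·(f(x) − x − d₀)| < ∞. Then every zero z of f with Im z ≤ 0 and z ≠ 0 satisfies |z·(z + d₀)| ≤ C₀·e^{−2γ·Im z}. -/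
open Filter

open Complex

lemma aux1 {c y : ℝ} (hc : 0 < c) (hy : 0 ≤ y) : y * Real.exp (-(c*y)) ≤ 1/c := by
  have h1 := Real.add_one_le_exp (c*y)
  have h3 := Real.exp_pos (-(c*y))
  have h5 : Real.exp (-(c*y)) * (c*y+1) ≤ Real.exp (-(c*y)) * Real.exp (c*y) :=
    mul_le_mul_of_nonneg_left h1 h3.le
  have h2 : Real.exp (-(c*y)) * Real.exp (c*y) = 1 := by rw [← Real.exp_add]; simp
  rw [le_div_iff₀ hc]
  nlinarith

lemma aux2 {c y : ℝ} (hc : 0 < c) (hy : 0 ≤ y) : y^2 * Real.exp (-(c*y)) ≤ (2/c)^2 := by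
  have h1 := aux1 (half_pos hc) hy
  have h2 : y^2 * Real.exp (-(c*y)) = (y * Real.exp (-(c/2*y)))^2 := by
    rw [mul_pow, ← Real.exp_nat_mul]; ring_nf
  rw [h2]
  calc (y * Real.exp (-(c/2*y)))^2 ≤ (1/(c/2))^2 := by
        apply pow_le_pow_left₀ (by positivity) h1
    _ = (2/c)^2 := by rw [one_div_div]

lemma key (γ ε : ℝ) (hγ : 0 < γ) (hε : 0 < ε) (d₀ : ℂ) (f : ℂ → ℂ)
    (hf : Differentiable ℂ f)
    (A C : ℝ) (hA : 0 < A) (hC : 0 < C)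
    (hbd : ∀ z : ℂ, ‖f z‖ ≤ C * Real.exp (A * ‖z‖))
    (htype : Filter.limsup
        (fun y : ℝ => Real.log (‖f (-Complex.I * (y : ℂ))‖) / y) Filter.atTop
      ≤ 2 * γ)
    (C₀ : ℝ)
    (hC₀ : ∀ x : ℝ, x ≠ 0 → ‖(x : ℂ) * (f x - (x : ℂ) - d₀)‖ ≤ C₀) :
    ∀ z : ℂ, f z = 0 → z.im ≤ 0 →
      ‖z * (z + d₀)‖ ≤ C₀ * Real.exp (-(2 * γ + ε) * z.im) := by
  intro z hz hzim
  set σ : ℝ := 2 * γ + ε with hσdef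
  have hσ : 0 < σ := by positivity
  set D : ℝ := ‖d₀‖ with hDdef
  have hD : 0 ≤ D := norm_nonneg _
  set H : ℂ → ℂ := fun ζ =>
    (-I * ζ) * (f (-I * ζ) - (-I * ζ) - d₀) * Complex.exp (((-σ : ℝ) : ℂ) * ζ) with hHdef
  -- norm formula
  have hHnorm : ∀ ζ : ℂ, ‖H ζ‖ =
      ‖ζ‖ * ‖f (-I * ζ) - (-I * ζ) - d₀‖ * Real.exp (-σ * ζ.re) := by
    intro ζ
    simp [hHdef, norm_mul, Complex.norm_exp]
  -- middle factor bound
  have htri : ∀ ζ : ℂ, ‖f (-I * ζ) - (-I * ζ) - d₀‖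
      ≤ ‖f (-I * ζ)‖ + ‖ζ‖ + D := by
    intro ζ
    calc ‖f (-I * ζ) - (-I * ζ) - d₀‖
        ≤ ‖f (-I * ζ) - (-I * ζ)‖ + D := by
          simpa [hDdef] using norm_sub_le (f (-I * ζ) - (-I * ζ)) d₀
      _ ≤ ‖f (-I * ζ)‖ + ‖-I * ζ‖ + D := by
          have := norm_sub_le (f (-I * ζ)) (-I * ζ)
          linarith
      _ = ‖f (-I * ζ)‖ + ‖ζ‖ + D := by
          simp [map_mul]
  have hC₀0 : 0 ≤ C₀ := le_trans (norm_nonneg _) (hC₀ 1 one_ne_zero)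
  -- differentiability
  have hHdiff : Differentiable ℂ H := by
    apply Differentiable.mul
    · apply Differentiable.mul
      · fun_prop
      · apply Differentiable.sub
        · apply Differentiable.sub
          · exact hf.comp (by fun_prop)
          · fun_prop
        · fun_prop
    · fun_prop
  have hd : DiffContOnCl ℂ H {w : ℂ | 0 < w.re} := hHdiff.diffContOnCl
  -- growth condition
  have hexp : ∃ c < (2 : ℝ), ∃ B, H =O[Bornology.cobounded ℂ ⊓ Filter.principal {w : ℂ | 0 < w.re}]
      fun w => Real.exp (B * ‖w‖ ^ c) := by
    refine ⟨1, one_lt_two, A + 2 + σ, Asymptotics.IsBigO.of_bound (C + 1 + D) ?_⟩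
    refine Eventually.of_forall fun ζ => ?_
    set r : ℝ := ‖ζ‖ with hrdef
    have hr0 : 0 ≤ r := norm_nonneg _
    have hrexp : r ≤ Real.exp r := (le_add_of_nonneg_right zero_le_one).trans (Real.add_one_le_exp r)
    have hre : -σ * ζ.re ≤ σ * r := by
      have h1 : |ζ.re| ≤ r := Complex.abs_re_le_norm ζ
      have h2 : -ζ.re ≤ |ζ.re| := neg_le_abs _
      nlinarith
    rw [hHnorm, Real.norm_eq_abs, abs_of_pos (Real.exp_pos _), Real.rpow_one]
    calc r * ‖f (-I * ζ) - (-I * ζ) - d₀‖ * Real.exp (-σ * ζ.re)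
        ≤ Real.exp r * (C * Real.exp (A * r) + r + D) * Real.exp (σ * r) := by
          have hmid : ‖f (-I * ζ) - (-I * ζ) - d₀‖
              ≤ C * Real.exp (A * r) + r + D := by
            have h1 := htri ζ
            have h2 := hbd (-I * ζ)
            have h3 : ‖-I * ζ‖ = r := by simp [hrdef, map_mul]
            rw [h3] at h2
            linarith
          have hmid0 : (0:ℝ) ≤ ‖f (-I * ζ) - (-I * ζ) - d₀‖ :=
            norm_nonneg _
          apply mul_le_mul
          · exact mul_le_mul hrexp hmid hmid0 (Real.exp_pos r).le
          · exact Real.exp_le_exp.mpr hre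
          · exact (Real.exp_pos _).le
          · positivity
      _ ≤ Real.exp r * ((C + 1 + D) * Real.exp ((A + 1) * r)) * Real.exp (σ * r) := by
          have e1 : C * Real.exp (A * r) ≤ C * Real.exp ((A + 1) * r) :=
            mul_le_mul_of_nonneg_left (Real.exp_le_exp.mpr (by nlinarith)) hC.le
          have e2 : r ≤ Real.exp ((A + 1) * r) := by
            refine hrexp.trans (Real.exp_le_exp.mpr ?_)
            nlinarith
          have e3 : D ≤ D * Real.exp ((A + 1) * r) := by
            nlinarith [Real.one_le_exp (by positivity : (0:ℝ) ≤ (A + 1) * r)]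
          have emid : C * Real.exp (A * r) + r + D ≤ (C + 1 + D) * Real.exp ((A + 1) * r) := by
            have := Real.one_le_exp (by positivity : (0:ℝ) ≤ (A + 1) * r)
            nlinarith
          apply mul_le_mul_of_nonneg_right _ (Real.exp_pos _).le
          exact mul_le_mul_of_nonneg_left emid (Real.exp_pos r).le
      _ = (C + 1 + D) * Real.exp ((A + 2 + σ) * r) := by
          have hh : Real.exp r * Real.exp ((A + 1) * r) * Real.exp (σ * r)
              = Real.exp ((A + 2 + σ) * r) := by
            rw [← Real.exp_add, ← Real.exp_add]; congr 1; ring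
          rw [← hh]; ring
  -- bound on the imaginary axis
  have him : ∀ x : ℝ, ‖H ((x : ℂ) * I)‖ ≤ C₀ := by
    intro x
    have hx1 : (-I : ℂ) * ((x : ℂ) * I) = (x : ℂ) := by
      rw [show (-I : ℂ) * ((x : ℂ) * I) = (x : ℂ) * (-(I * I)) by ring, Complex.I_mul_I]
      ring
    have hre0 : ((x : ℂ) * I).re = 0 := by simp
    rw [hHnorm, hx1, hre0]
    rw [mul_zero, Real.exp_zero, mul_one]
    rcases eq_or_ne x 0 with rfl | hx
    · simpa using hC₀0
    · have := hC₀ x hx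
      rw [norm_mul] at this
      calc ‖(x : ℂ) * I‖ * ‖f x - (x : ℂ) - d₀‖
          = ‖(x : ℂ)‖ * ‖f x - (x : ℂ) - d₀‖ := by simp [map_mul]
        _ ≤ C₀ := this
  -- boundedness on the real axis
  have hrebdd : IsBoundedUnder (· ≤ ·) atTop fun x : ℝ => ‖H x‖ := by
    -- limsup bound gives eventual bound
    have hlogbdd : IsBoundedUnder (· ≤ ·) atTop
        (fun y : ℝ => Real.log (‖f (-I * (y : ℂ))‖) / y) := by
      apply isBoundedUnder_of_eventually_le (a := |Real.log C| + A)
      filter_upwards [eventually_ge_atTop (max 1 ((1 + |Real.log C|) / A))] with y hy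
      have hy1 : (1 : ℝ) ≤ y := le_trans (le_max_left _ _) hy
      have hy0 : 0 < y := by linarith
      have hlog : Real.log (‖f (-I * (y : ℂ))‖) ≤ Real.log C + A * y := by
        rcases (norm_nonneg (f (-I * (y : ℂ)))).eq_or_lt with h0 | hpos
        · rw [← h0, Real.log_zero]
          have : (1 + |Real.log C|) / A ≤ y := le_trans (le_max_right _ _) hy
          have hAy : 1 + |Real.log C| ≤ A * y := by
            rw [div_le_iff₀ hA] at this; linarith
          nlinarith [neg_abs_le (Real.log C)]
        · have h2 := hbd (-I * (y : ℂ))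
          have h3 : ‖-I * (y : ℂ)‖ = y := by
            simp [map_mul, Complex.norm_real, abs_of_pos hy0]
          rw [h3] at h2
          calc Real.log (‖f (-I * (y : ℂ))‖)
              ≤ Real.log (C * Real.exp (A * y)) := Real.log_le_log hpos h2
            _ = Real.log C + A * y := by
                rw [Real.log_mul (ne_of_gt hC) (Real.exp_ne_zero _), Real.log_exp]
      rw [div_le_iff₀ hy0]
      nlinarith [le_abs_self (Real.log C), abs_nonneg (Real.log C)]
    have hev : ∀ᶠ y : ℝ in atTop,
        Real.log (‖f (-I * (y : ℂ))‖) / y < 2 * γ + ε / 2 :=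
      eventually_lt_of_limsup_lt (lt_of_le_of_lt htype (by linarith)) hlogbdd
    apply isBoundedUnder_of_eventually_le (a := 1 / (ε/2) + (2/σ)^2 + D * (1/σ))
    filter_upwards [hev, eventually_ge_atTop (1 : ℝ)] with y h1 hy1
    have hy0 : 0 < y := by linarith
    have hfe : ‖f (-I * (y : ℂ))‖ ≤ Real.exp ((2 * γ + ε / 2) * y) := by
      rcases (norm_nonneg (f (-I * (y : ℂ)))).eq_or_lt with h0 | hpos
      · rw [← h0]; exact (Real.exp_pos _).le
      · rw [← Real.log_le_iff_le_exp hpos]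
        rw [div_lt_iff₀ hy0] at h1
        linarith
    have hyre : ((y : ℂ)).re = y := Complex.ofReal_re y
    rw [hHnorm, hyre]
    have habs : ‖(y : ℂ)‖ = y := by
      rw [Complex.norm_real, Real.norm_eq_abs, abs_of_pos hy0]
    rw [habs]
    have hmid := htri (y : ℂ)
    rw [habs] at hmid
    calc y * ‖f (-I * (y : ℂ)) - (-I * (y : ℂ)) - d₀‖ * Real.exp (-σ * y)
        ≤ y * (Real.exp ((2 * γ + ε / 2) * y) + y + D) * Real.exp (-σ * y) := by
          apply mul_le_mul_of_nonneg_right _ (Real.exp_pos _).le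
          apply mul_le_mul_of_nonneg_left _ hy0.le
          linarith
      _ = y * (Real.exp ((2 * γ + ε / 2) * y) * Real.exp (-(σ * y)))
            + y^2 * Real.exp (-(σ * y)) + D * (y * Real.exp (-(σ * y))) := by
          rw [show -σ * y = -(σ * y) by ring]; ring
      _ = y * Real.exp (-(ε/2 * y)) + y^2 * Real.exp (-(σ * y))
            + D * (y * Real.exp (-(σ * y))) := by
          have e1 : Real.exp ((2 * γ + ε / 2) * y) * Real.exp (-(σ * y)) =
              Real.exp (-(ε/2 * y)) := by
            rw [← Real.exp_add]; congr 1; rw [hσdef]; ring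
          rw [e1]
      _ ≤ 1 / (ε/2) + (2/σ)^2 + D * (1/σ) := by
          have t1 : y * Real.exp (-(ε/2 * y)) ≤ 1/(ε/2) := aux1 (half_pos hε) hy0.le
          have t2 : y^2 * Real.exp (-(σ * y)) ≤ (2/σ)^2 := aux2 hσ hy0.le
          have t3 : y * Real.exp (-(σ * y)) ≤ 1/σ := aux1 hσ hy0.le
          have t3' : D * (y * Real.exp (-(σ * y))) ≤ D * (1/σ) :=
            mul_le_mul_of_nonneg_left t3 hD
          linarith
  -- apply Phragmen-Lindelof
  have hzre : 0 ≤ (I * z).re := by simp [Complex.mul_re]; linarith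
  have hPL := PhragmenLindelof.right_half_plane_of_bounded_on_real hd hexp hrebdd him hzre
  -- compute the norm at I * z
  have hIz : (-I : ℂ) * (I * z) = z := by
    rw [show (-I : ℂ) * (I * z) = -(I * I) * z by ring, Complex.I_mul_I]; ring
  have hIzre : (I * z).re = -z.im := by simp [Complex.mul_re]
  rw [hHnorm, hIz, hIzre, hz] at hPL
  have habsIz : ‖I * z‖ = ‖z‖ := by simp [map_mul]
  rw [habsIz] at hPL
  have hval : ‖0 - z - d₀‖ = ‖z + d₀‖ := by
    rw [show (0 : ℂ) - z - d₀ = -(z + d₀) by ring, norm_neg]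
  rw [hval] at hPL
  have : ‖z‖ * ‖z + d₀‖ * Real.exp (-σ * -z.im) ≤ C₀ := hPL
  rw [norm_mul]
  have hexppos := Real.exp_pos (-σ * -z.im)
  rw [show -(2 * γ + ε) * z.im = -(-σ * -z.im) by rw [hσdef]; ring, Real.exp_neg]
  rw [← le_div_iff₀ hexppos] at this
  rwa [div_eq_mul_inv] at this

theorem stmt7 (γ : ℝ) (hγ : 0 < γ) (d₀ : ℂ) (f : ℂ → ℂ)
    (hf : Differentiable ℂ f)
    (A C : ℝ) (hA : 0 < A) (hC : 0 < C)
    (hbd : ∀ z : ℂ, ‖f z‖ ≤ C * Real.exp (A * ‖z‖))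
    (htype : Filter.limsup
        (fun y : ℝ => Real.log (‖f (-Complex.I * (y : ℂ))‖) / y) Filter.atTop
      ≤ 2 * γ)
    (C₀ : ℝ)
    (hC₀ : ∀ x : ℝ, x ≠ 0 → ‖(x : ℂ) * (f x - (x : ℂ) - d₀)‖ ≤ C₀) :
    ∀ z : ℂ, f z = 0 → z.im ≤ 0 → z ≠ 0 →
      ‖z * (z + d₀)‖ ≤ C₀ * Real.exp (-2 * γ * z.im) := by
  intro z hz hzim _
  have hlim : Filter.Tendsto (fun ε : ℝ => C₀ * Real.exp (-(2 * γ + ε) * z.im))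
      (nhdsWithin 0 (Set.Ioi 0)) (nhds (C₀ * Real.exp (-2 * γ * z.im))) := by
    have hcont : Continuous fun ε : ℝ => C₀ * Real.exp (-(2 * γ + ε) * z.im) := by
      continuity
    have := (hcont.tendsto 0).mono_left (nhdsWithin_le_nhds (s := Set.Ioi (0:ℝ)))
    simpa using this
  refine ge_of_tendsto hlim ?_
  filter_upwards [self_mem_nhdsWithin] with ε hε
  exact key γ ε hγ hε d₀ f hf A C hA hC hbd htype C₀ hC₀ z hz hzim
end

section
/- Let γ>0 and d₀, d₁ ∈ ℂ. Let f : ℂ → ℂ be entire and assume: (a) there are constants A, C > 0 with |f(z)| ≤ C·e^{A|z|} for all z∈ℂ; (b) limsup_{y→+∞} (log|f(−iy)|)/y ≤ 2γ; (c) C₁ := sup_{x∈ℝ, x≠0} |x²·(f(x) − x − d₀ − d₁·x^{−1})| < ∞. Then every zero z of f with Im z ≤ 0 and z ≠ 0 satisfies |z·(z² + d₀·z + d₁)| ≤ C₁·e^{−2γ·Im z}. -/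
open Filter Topology Real

private lemma aux_tendsto (n : ℕ) {c : ℝ} (hc : 0 < c) :
    Tendsto (fun y : ℝ => y ^ n * Real.exp (-(c * y))) atTop (𝓝 0) := by
  have h1 : Tendsto (fun y : ℝ => c * y) atTop atTop :=
    Tendsto.const_mul_atTop hc tendsto_id
  have h2 := (tendsto_pow_mul_exp_neg_atTop_nhds_zero n).comp h1
  have h3 := h2.const_mul ((c⁻¹) ^ n)
  rw [mul_zero] at h3
  refine h3.congr fun y => ?_
  simp only [Function.comp]
  field_simp [mul_pow]
  ring_nf; rw [← mul_pow, mul_inv_cancel₀ hc.ne', one_pow, one_mul]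

set_option maxHeartbeats 1000000 in
theorem stmt8 (γ : ℝ) (hγ : 0 < γ) (d₀ d₁ : ℂ) (f : ℂ → ℂ)
    (hf : Differentiable ℂ f)
    (A C : ℝ) (hA : 0 < A) (hC : 0 < C)
    (hbd : ∀ z : ℂ, ‖f z‖ ≤ C * Real.exp (A * ‖z‖))
    (htype : Filter.limsup
        (fun y : ℝ => Real.log (‖f (-Complex.I * (y : ℂ))‖) / y) Filter.atTop
      ≤ 2 * γ)
    (C₁ : ℝ)
    (hC₁ : ∀ x : ℝ, x ≠ 0 →
      ‖(x : ℂ) ^ 2 * (f x - (x : ℂ) - d₀ - d₁ * (x : ℂ)⁻¹)‖ ≤ C₁) :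
    ∀ z : ℂ, f z = 0 → z.im ≤ 0 → z ≠ 0 →
      ‖z * (z ^ 2 + d₀ * z + d₁)‖ ≤ C₁ * Real.exp (-2 * γ * z.im) := by
  intro z hfz hzim hz0
  set a₀ := ‖d₀‖ with ha₀
  set a₁ := ‖d₁‖ with ha₁
  have ha₀0 : 0 ≤ a₀ := norm_nonneg _
  have ha₁0 : 0 ≤ a₁ := norm_nonneg _
  set g : ℂ → ℂ := fun w => w ^ 2 * f w - w ^ 3 - d₀ * w ^ 2 - d₁ * w with hgdef
  have hgd : Differentiable ℂ g := by
    apply Differentiable.sub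
    apply Differentiable.sub
    apply Differentiable.sub
    · exact (differentiable_id.pow 2).mul hf
    · exact differentiable_id.pow 3
    · exact (differentiable_id.pow 2).const_mul d₀
    · exact differentiable_id.const_mul d₁
  have hC₁0 : 0 ≤ C₁ := (norm_nonneg _).trans (hC₁ 1 one_ne_zero)
  have tri : ∀ p q : ℂ, ‖p - q‖ ≤ ‖p‖ + ‖q‖ := fun p q => by
    simpa [sub_eq_add_neg] using norm_add_le p (-q)
  -- g bounded by C₁ on the real axis
  have hgre : ∀ x : ℝ, ‖g x‖ ≤ C₁ := by
    intro x
    rcases eq_or_ne x 0 with rfl | hx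
    · simpa [hgdef] using hC₁0
    · have hxc : (x : ℂ) ≠ 0 := Complex.ofReal_ne_zero.2 hx
      have : g x = (x : ℂ) ^ 2 * (f x - x - d₀ - d₁ * (x : ℂ)⁻¹) := by
        simp only [hgdef]
        field_simp
      rw [this]
      exact hC₁ x hx
  -- growth bound for g
  have hgrow : ∀ u : ℂ, ‖g u‖ ≤
      (C + 1 + a₀ + a₁) * Real.exp ((A + 3) * ‖u‖) := by
    intro u
    set r := ‖u‖ with hr
    have hr0 : 0 ≤ r := norm_nonneg u
    have hre : r ≤ Real.exp r := by have := Real.add_one_le_exp r; linarith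
    have h1 : (1 : ℝ) ≤ Real.exp r := Real.one_le_exp hr0
    have hA1 : (1 : ℝ) ≤ Real.exp (A * r) := Real.one_le_exp (by positivity)
    set e1 := Real.exp r with he1
    set eA := Real.exp (A * r) with heA
    have hsplit : Real.exp ((A + 3) * r) = eA * e1 ^ 3 := by
      rw [heA, he1, show (A + 3) * r = A * r + (3 : ℕ) * r by push_cast; ring,
        Real.exp_add, Real.exp_nat_mul]
    have step1 : ‖g u‖ ≤ r ^ 2 * (C * eA) + r ^ 3 + a₀ * r ^ 2 + a₁ * r := by
      simp only [hgdef]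
      calc ‖u ^ 2 * f u - u ^ 3 - d₀ * u ^ 2 - d₁ * u‖
          ≤ ‖u ^ 2 * f u - u ^ 3 - d₀ * u ^ 2‖ + ‖d₁ * u‖ :=
            tri _ _
        _ ≤ ‖u ^ 2 * f u - u ^ 3‖ + ‖d₀ * u ^ 2‖
              + ‖d₁ * u‖ := by gcongr; exact tri _ _
        _ ≤ ‖u ^ 2 * f u‖ + ‖u ^ 3‖ + ‖d₀ * u ^ 2‖
              + ‖d₁ * u‖ := by gcongr; exact tri _ _
        _ = r ^ 2 * ‖f u‖ + r ^ 3 + a₀ * r ^ 2 + a₁ * r := by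
            simp [map_mul, map_pow, ha₀, ha₁, hr]
        _ ≤ r ^ 2 * (C * eA) + r ^ 3 + a₀ * r ^ 2 + a₁ * r := by
            gcongr
            exact hbd u
    have he23 : e1 ^ 2 ≤ e1 ^ 3 := pow_le_pow_right₀ h1 (by norm_num)
    have he13 : e1 ≤ e1 ^ 3 := by
      calc e1 = e1 ^ 1 := (pow_one _).symm
        _ ≤ e1 ^ 3 := pow_le_pow_right₀ h1 (by norm_num)
    have t2 : e1 ^ 3 ≤ eA * e1 ^ 3 := le_mul_of_one_le_left (by positivity) hA1
    have step2 : r ^ 2 * (C * eA) + r ^ 3 + a₀ * r ^ 2 + a₁ * r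
        ≤ e1 ^ 2 * (C * eA) + e1 ^ 3 + a₀ * e1 ^ 2 + a₁ * e1 := by
      gcongr
    have t1 : e1 ^ 2 * (C * eA) ≤ e1 ^ 3 * (C * eA) :=
      mul_le_mul_of_nonneg_right he23 (by positivity)
    have t3 : a₀ * e1 ^ 2 ≤ a₀ * (eA * e1 ^ 3) :=
      mul_le_mul_of_nonneg_left (he23.trans t2) ha₀0
    have t4 : a₁ * e1 ≤ a₁ * (eA * e1 ^ 3) :=
      mul_le_mul_of_nonneg_left (he13.trans t2) ha₁0
    rw [hsplit]
    nlinarith [step1, step2, t1, t2, t3, t4]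
  -- limsup consequence
  have hub : IsBoundedUnder (· ≤ ·) atTop
      (fun y : ℝ => Real.log (‖f (-Complex.I * (y : ℂ))‖) / y) := by
    refine isBoundedUnder_of_eventually_le (a := |Real.log C| + A) ?_
    filter_upwards [eventually_ge_atTop 1] with y hy
    have hy0 : (0 : ℝ) < y := lt_of_lt_of_le one_pos hy
    have habs : ‖-Complex.I * (y : ℂ)‖ = y := by
      simp [map_mul, Complex.norm_real, abs_of_nonneg hy0.le]
    rcases (norm_nonneg (f (-Complex.I * (y : ℂ)))).eq_or_lt with h0 | h0
    · rw [← h0, Real.log_zero, zero_div]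
      positivity
    · have hlog : Real.log (‖f (-Complex.I * (y : ℂ))‖) ≤ Real.log C + A * y := by
        have hb := hbd (-Complex.I * (y : ℂ))
        rw [habs] at hb
        calc Real.log (‖f (-Complex.I * (y : ℂ))‖)
            ≤ Real.log (C * Real.exp (A * y)) := Real.log_le_log h0 hb
          _ = Real.log C + A * y := by rw [Real.log_mul hC.ne' (Real.exp_ne_zero _),
              Real.log_exp]
      rw [div_le_iff₀ hy0]
      nlinarith [le_abs_self (Real.log C), abs_nonneg (Real.log C)]
  -- main estimate for each ε > 0
  have key : ∀ ε : ℝ, 0 < ε →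
      ‖g z‖ ≤ C₁ * Real.exp (-((2 * γ + ε) * z.im)) := by
    intro ε hε
    have hc0 : (0 : ℝ) < 2 * γ + ε := by linarith
    set F : ℂ → ℂ :=
      fun w => g (-Complex.I * w) * Complex.exp ((-(2 * γ + ε) : ℝ) * w) with hFdef
    have hFd : Differentiable ℂ F := by
      apply Differentiable.mul
      · exact hgd.comp (differentiable_id.const_mul _)
      · exact Differentiable.cexp (differentiable_id.const_mul _)
    have hFnorm : ∀ w : ℂ, ‖F w‖ = ‖g (-Complex.I * w)‖
        * Real.exp (-(2 * γ + ε) * w.re) := by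
      intro w
      simp only [hFdef, norm_mul, Complex.norm_exp,
        Complex.re_ofReal_mul]
    have hexp : ∃ c < (2 : ℝ), ∃ B, F =O[Bornology.cobounded ℂ ⊓ 𝓟 {z : ℂ | 0 < z.re}]
        fun w => Real.exp (B * ‖w‖ ^ c) := by
      refine ⟨1, one_lt_two, A + 3, Asymptotics.IsBigO.of_bound (C + 1 + a₀ + a₁) ?_⟩
      refine eventually_inf_principal.2 (Eventually.of_forall fun w hw => ?_)
      have hw' : (0 : ℝ) < w.re := hw
      have habsw : ‖-Complex.I * w‖ = ‖w‖ := by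
        simp [map_mul]
      rw [hFnorm]
      have hle1 : Real.exp (-(2 * γ + ε) * w.re) ≤ 1 := by
        rw [Real.exp_le_one_iff]
        nlinarith
      calc ‖g (-Complex.I * w)‖ * Real.exp (-(2 * γ + ε) * w.re)
          ≤ ‖g (-Complex.I * w)‖ * 1 := by
            gcongr
        _ = ‖g (-Complex.I * w)‖ := mul_one _
        _ ≤ (C + 1 + a₀ + a₁) * Real.exp ((A + 3) * ‖w‖) := by
            rw [← habsw]; exact hgrow _
        _ ≤ (C + 1 + a₀ + a₁) * ‖Real.exp ((A + 3) * ‖w‖ ^ (1 : ℝ))‖ := by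
            rw [Real.norm_eq_abs, abs_of_pos (Real.exp_pos _), Real.rpow_one]
    -- bound on the positive real axis
    have hev : ∀ᶠ y : ℝ in atTop,
        Real.log (‖f (-Complex.I * (y : ℂ))‖) / y < 2 * γ + ε / 2 :=
      eventually_lt_of_limsup_lt (lt_of_le_of_lt htype (by linarith)) hub
    set M : ℝ → ℝ := fun y => y ^ 2 * Real.exp (-(ε / 2 * y)) +
        (y ^ 3 * Real.exp (-((2 * γ + ε) * y)) + (a₀ * (y ^ 2 * Real.exp (-((2 * γ + ε) * y)))
          + a₁ * (y * Real.exp (-((2 * γ + ε) * y))))) with hMdef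
    have hM0 : Tendsto M atTop (𝓝 0) := by
      have t1 := aux_tendsto 2 (half_pos hε)
      have t2 := aux_tendsto 3 hc0
      have t3 := (aux_tendsto 2 hc0).const_mul a₀
      have t4 := (aux_tendsto 1 hc0).const_mul a₁
      have := t1.add (t2.add (t3.add t4))
      simpa using this
    have hFbound : ∀ᶠ y : ℝ in atTop, ‖F ((y : ℝ) : ℂ)‖ ≤ M y := by
      filter_upwards [hev, eventually_ge_atTop 1] with y hylog hy1
      have hy0 : (0 : ℝ) < y := lt_of_lt_of_le one_pos hy1
      have habs : ‖-Complex.I * (y : ℂ)‖ = y := by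
        simp [map_mul, Complex.norm_real, abs_of_nonneg hy0.le]
      have hfy : ‖f (-Complex.I * (y : ℂ))‖ ≤ Real.exp ((2 * γ + ε / 2) * y) := by
        rcases (norm_nonneg (f (-Complex.I * (y : ℂ)))).eq_or_lt with h0 | h0
        · rw [← h0]; exact (Real.exp_pos _).le
        · have h2 := (div_lt_iff₀ hy0).1 hylog
          calc ‖f (-Complex.I * (y : ℂ))‖
              = Real.exp (Real.log (‖f (-Complex.I * (y : ℂ))‖)) :=
                (Real.exp_log h0).symm
            _ ≤ Real.exp ((2 * γ + ε / 2) * y) := Real.exp_le_exp.2 h2.le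
      have hgy : ‖g (-Complex.I * (y : ℂ))‖ ≤
          y ^ 2 * Real.exp ((2 * γ + ε / 2) * y) + y ^ 3 + a₀ * y ^ 2 + a₁ * y := by
        simp only [hgdef]
        calc ‖(-Complex.I * y) ^ 2 * f (-Complex.I * y) - (-Complex.I * y) ^ 3
              - d₀ * (-Complex.I * y) ^ 2 - d₁ * (-Complex.I * y)‖
            ≤ ‖(-Complex.I * y) ^ 2 * f (-Complex.I * y) - (-Complex.I * y) ^ 3
              - d₀ * (-Complex.I * y) ^ 2‖ + ‖d₁ * (-Complex.I * y)‖ := tri _ _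
          _ ≤ ‖(-Complex.I * y) ^ 2 * f (-Complex.I * y) - (-Complex.I * y) ^ 3‖
              + ‖d₀ * (-Complex.I * y) ^ 2‖
              + ‖d₁ * (-Complex.I * y)‖ := by gcongr; exact tri _ _
          _ ≤ ‖(-Complex.I * y) ^ 2 * f (-Complex.I * y)‖
              + ‖(-Complex.I * y) ^ 3‖
              + ‖d₀ * (-Complex.I * y) ^ 2‖
              + ‖d₁ * (-Complex.I * y)‖ := by gcongr; exact tri _ _
          _ = y ^ 2 * ‖f (-Complex.I * y)‖ + y ^ 3 + a₀ * y ^ 2 + a₁ * y := by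
              simp [map_mul, map_pow, habs, ha₀, ha₁, Complex.norm_real, abs_of_nonneg hy0.le]
          _ ≤ y ^ 2 * Real.exp ((2 * γ + ε / 2) * y) + y ^ 3 + a₀ * y ^ 2 + a₁ * y := by
              gcongr
      rw [hFnorm]
      have hexpeq : Real.exp ((2 * γ + ε / 2) * y) * Real.exp (-((2 * γ + ε) * y))
          = Real.exp (-(ε / 2 * y)) := by
        rw [← Real.exp_add]; ring_nf
      rw [show -(2 * γ + ε) * ((y : ℂ)).re = -((2 * γ + ε) * y) by rw [Complex.ofReal_re]; ring]
      calc ‖g (-Complex.I * (y : ℂ))‖ * Real.exp (-((2 * γ + ε) * y))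
          ≤ (y ^ 2 * Real.exp ((2 * γ + ε / 2) * y) + y ^ 3 + a₀ * y ^ 2 + a₁ * y)
              * Real.exp (-((2 * γ + ε) * y)) := by
            gcongr
        _ = M y := by
            rw [hMdef]
            simp only
            rw [← hexpeq]
            ring
    have hre : IsBoundedUnder (· ≤ ·) atTop fun x : ℝ => ‖F ((x : ℝ) : ℂ)‖ :=
      (hM0.isBoundedUnder_le).mono_le hFbound
    have him : ∀ x : ℝ, ‖F ((x : ℝ) * Complex.I)‖ ≤ C₁ := by
      intro x
      have harg : -Complex.I * ((x : ℂ) * Complex.I) = (x : ℂ) := by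
        calc -Complex.I * ((x : ℂ) * Complex.I) = -(Complex.I * Complex.I) * x := by ring
          _ = (x : ℂ) := by rw [Complex.I_mul_I]; ring
      rw [hFnorm, harg]
      have : ((x : ℂ) * Complex.I).re = 0 := by simp
      rw [this, mul_zero, Real.exp_zero, mul_one]
      exact hgre x
    have hwre : 0 ≤ (Complex.I * z).re := by
      simp [Complex.mul_re]
      linarith
    have hPL := PhragmenLindelof.right_half_plane_of_bounded_on_real
      hFd.diffContOnCl hexp hre him hwre
    have hFz : ‖F (Complex.I * z)‖ = ‖g z‖ * Real.exp ((2 * γ + ε) * z.im) := by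
      have harg : -Complex.I * (Complex.I * z) = z := by
        calc -Complex.I * (Complex.I * z) = -(Complex.I * Complex.I) * z := by ring
          _ = z := by rw [Complex.I_mul_I]; ring
      rw [hFnorm, harg]
      have : (Complex.I * z).re = -z.im := by simp [Complex.mul_re]
      rw [this]
      ring_nf
    rw [hFz] at hPL
    have h2 : ‖g z‖ ≤ C₁ / Real.exp ((2 * γ + ε) * z.im) :=
      (le_div_iff₀ (Real.exp_pos _)).2 hPL
    rwa [div_eq_mul_inv, ← Real.exp_neg] at h2
  -- take the limit ε → 0⁺
  have hconv : Tendsto (fun ε : ℝ => C₁ * Real.exp (-((2 * γ + ε) * z.im))) (𝓝[>] 0)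
      (𝓝 (C₁ * Real.exp (-(2 * γ * z.im)))) := by
    have hcont : Continuous fun ε : ℝ => C₁ * Real.exp (-((2 * γ + ε) * z.im)) := by
      fun_prop
    have := hcont.tendsto 0
    simp only [add_zero] at this
    exact this.mono_left nhdsWithin_le_nhds
  have final : ‖g z‖ ≤ C₁ * Real.exp (-(2 * γ * z.im)) := by
    refine ge_of_tendsto hconv ?_
    filter_upwards [self_mem_nhdsWithin] with ε hε
    exact key ε hε
  have hgz : g z = -(z * (z ^ 2 + d₀ * z + d₁)) := by
    simp only [hgdef]
    rw [hfz]
    ring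
  calc ‖z * (z ^ 2 + d₀ * z + d₁)‖ = ‖g z‖ := by
        rw [hgz, norm_neg]
    _ ≤ C₁ * Real.exp (-(2 * γ * z.im)) := final
    _ = C₁ * Real.exp (-2 * γ * z.im) := by ring_nf
end

section
/- Let m>0, λ∈ℂ, and let p₁,p₂,q : [0,∞)→ℝ. Suppose f=(f₁,f₂):[0,∞)→ℂ² is differentiable and satisfies the Dirac system, g=(g₁,g₂):[0,∞)→ℂ² is differentiable and satisfies g₁' + q g₁ − (m − p₂ + λ) g₂ = f₂ and g₂' − q g₂ − (m + p₁ − λ) g₁ = −f₁ on [0,∞). If moreover x ↦ f₁(x)² + f₂(x)² is integrable on [0,∞) and g₁(x)f₂(x) − g₂(x)f₁(x) → 0 as x → ∞, then g₁(0)·f₂(0) − g₂(0)·f₁(0) = − ∫_0^∞ ( f₁(t)² + f₂(t)² ) dt. -/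
open MeasureTheory

theorem stmt11 (m : ℝ) (hm : 0 < m) (lam : ℂ) (p₁ p₂ q : ℝ → ℝ) (f₁ f₂ g₁ g₂ : ℝ → ℂ)
    (hf₁ : ∀ x ∈ Set.Ici (0 : ℝ), HasDerivWithinAt f₁
      (-(q x : ℂ) * f₁ x + ((m : ℂ) - (p₂ x : ℂ) + lam) * f₂ x) (Set.Ici 0) x)
    (hf₂ : ∀ x ∈ Set.Ici (0 : ℝ), HasDerivWithinAt f₂
      ((q x : ℂ) * f₂ x + ((m : ℂ) + (p₁ x : ℂ) - lam) * f₁ x) (Set.Ici 0) x)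
    (hg₁ : ∀ x ∈ Set.Ici (0 : ℝ), HasDerivWithinAt g₁
      (-(q x : ℂ) * g₁ x + ((m : ℂ) - (p₂ x : ℂ) + lam) * g₂ x + f₂ x) (Set.Ici 0) x)
    (hg₂ : ∀ x ∈ Set.Ici (0 : ℝ), HasDerivWithinAt g₂
      ((q x : ℂ) * g₂ x + ((m : ℂ) + (p₁ x : ℂ) - lam) * g₁ x - f₁ x) (Set.Ici 0) x)
    (hint : IntegrableOn (fun t : ℝ => (f₁ t) ^ 2 + (f₂ t) ^ 2) (Set.Ioi 0))
    (hlim : Filter.Tendsto (fun x : ℝ => g₁ x * f₂ x - g₂ x * f₁ x)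
      Filter.atTop (nhds 0)) :
    g₁ 0 * f₂ 0 - g₂ 0 * f₁ 0 = -∫ t in Set.Ioi (0 : ℝ), ((f₁ t) ^ 2 + (f₂ t) ^ 2) := by
  set W : ℝ → ℂ := fun x => g₁ x * f₂ x - g₂ x * f₁ x with hW
  have hWderiv : ∀ x ∈ Set.Ici (0 : ℝ),
      HasDerivWithinAt W ((f₁ x) ^ 2 + (f₂ x) ^ 2) (Set.Ici 0) x := by
    intro x hx
    have h := (((hg₁ x hx).mul (hf₂ x hx)).sub ((hg₂ x hx).mul (hf₁ x hx)))
    convert h using 1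
    · rfl
    · rfl
    · ring
  have hderiv : ∀ x ∈ Set.Ioi (0 : ℝ),
      HasDerivAt W ((f₁ x) ^ 2 + (f₂ x) ^ 2) x := by
    intro x hx
    exact (hWderiv x (Set.mem_Ici.mpr (le_of_lt hx))).hasDerivAt (Ici_mem_nhds hx)
  have hcont : ContinuousWithinAt W (Set.Ici 0) 0 :=
    (hWderiv 0 Set.self_mem_Ici).continuousWithinAt
  have key := integral_Ioi_of_hasDerivAt_of_tendsto hcont hderiv hint hlim
  rw [key]
  simp [hW]
end

section
/- Let m>0, γ>0, and let p₁,p₂,q : [0,∞)→ℝ be continuously differentiable on [0,γ] and vanish on (γ,∞). Let λ be real with |λ|>m, k = k(λ) ∈ ℝ∖{0}, and define M, N, 𝕄, 𝕟, σ₃ as in the context; set W(t) = 2ik·𝕟(t) + 𝕄'(t) − 𝕄(t)·𝕟(t) − |M(t)|²·I₂ and A(x) = I₂ − (1/(2ik))·σ₃·𝕄(x). Assume |k| ≥ sup_{x∈[0,γ]} |M(x)|. Then: (1) for each x, A(x) is invertible with operator norm ‖A(x)^{−1}‖ ≤ 2; (2) defining Y⁰(x) = A(x)^{−1}·e^{ikxσ₃}·(1,0)ᵀ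 and recursively Y^{n+1}(x) = (1/(2ik))·A(x)^{−1}·∫_x^γ e^{iσ₃k(x−t)}·W(t)·Yⁿ(t) dt, one has for every n ≥ 0 and x ∈ [0,γ]: ‖Yⁿ(x)‖ ≤ (2/(n!·|k|ⁿ))·( ∫_x^γ ‖W(s)‖ ds )ⁿ, where ‖·‖ denotes the Euclidean norm on ℂ² and the associated operator norm on 2×2 matrices. -/
open MeasureTheory Matrix

/-- `v = (p₁ + p₂)/2`. -/
noncomputable def vfun (p₁ p₂ : ℝ → ℝ) (x : ℝ) : ℝ := (p₁ x + p₂ x) / 2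

/-- `p = (p₁ − p₂)/2`. -/
noncomputable def pfun (p₁ p₂ : ℝ → ℝ) (x : ℝ) : ℝ := (p₁ x - p₂ x) / 2

/-- `σ₃`. -/
def sigma3 : Matrix (Fin 2) (Fin 2) ℂ := !![1, 0; 0, -1]

/-- `e^{ikθσ₃} = diag(e^{ikθ}, e^{−ikθ})`. -/
noncomputable def Emat (k θ : ℝ) : Matrix (Fin 2) (Fin 2) ℂ :=
  !![Complex.exp (Complex.I * (k : ℂ) * (θ : ℂ)), 0;
     0, Complex.exp (-(Complex.I * (k : ℂ) * (θ : ℂ)))]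

lemma clm_apply' (X : Matrix (Fin 2) (Fin 2) ℂ) (v : EuclideanSpace ℂ (Fin 2)) :
    Matrix.toEuclideanCLM (𝕜 := ℂ) X v
      = (WithLp.equiv 2 (Fin 2 → ℂ)).symm (X.mulVec (WithLp.equiv 2 (Fin 2 → ℂ) v)) := by
  rfl

lemma norm2_eq' (y : EuclideanSpace ℂ (Fin 2)) : ‖y‖ = Real.sqrt (‖y 0‖^2 + ‖y 1‖^2) := by
  rw [EuclideanSpace.norm_eq]; norm_num [Fin.sum_univ_two]

lemma opnorm2_le (X : Matrix (Fin 2) (Fin 2) ℂ) (r : ℝ) (hr : 0 ≤ r)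
    (h : ∀ u : Fin 2 → ℂ, ‖X.mulVec u 0‖^2 + ‖X.mulVec u 1‖^2 ≤ r^2 * (‖u 0‖^2 + ‖u 1‖^2)) :
    ‖Matrix.toEuclideanCLM (𝕜 := ℂ) X‖ ≤ r := by
  apply ContinuousLinearMap.opNorm_le_bound _ hr
  intro v
  rw [clm_apply', norm2_eq', norm2_eq' v]
  have h1 := h (WithLp.equiv 2 (Fin 2 → ℂ) v)
  have h2 : ∀ w : Fin 2 → ℂ, ∀ i, ((WithLp.equiv 2 (Fin 2 → ℂ)).symm w) i = w i := fun _ _ => rfl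
  rw [h2, h2]
  calc Real.sqrt (‖X.mulVec (WithLp.equiv 2 (Fin 2 → ℂ) v) 0‖^2
        + ‖X.mulVec (WithLp.equiv 2 (Fin 2 → ℂ) v) 1‖^2)
      ≤ Real.sqrt (r^2 * (‖(WithLp.equiv 2 (Fin 2 → ℂ) v) 0‖^2
        + ‖(WithLp.equiv 2 (Fin 2 → ℂ) v) 1‖^2)) := Real.sqrt_le_sqrt h1
    _ = r * Real.sqrt (‖v 0‖^2 + ‖v 1‖^2) := by
        rw [Real.sqrt_mul (sq_nonneg r), Real.sqrt_sq hr]; rfl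

lemma opnorm_antidiag (b c : ℂ) (r : ℝ) (hb : ‖b‖ ≤ r) (hc : ‖c‖ ≤ r) (hr : 0 ≤ r) :
    ‖Matrix.toEuclideanCLM (𝕜 := ℂ) !![0, b; c, 0]‖ ≤ r := by
  apply opnorm2_le _ r hr
  intro u
  have h0 : (!![0, b; c, 0]).mulVec u 0 = b * u 1 := by
    simp [Matrix.mulVec, dotProduct, Fin.sum_univ_two]
  have h1 : (!![0, b; c, 0]).mulVec u 1 = c * u 0 := by
    simp [Matrix.mulVec, dotProduct, Fin.sum_univ_two]
  rw [h0, h1, norm_mul, norm_mul]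
  have e1 : ‖b‖^2 ≤ r^2 := pow_le_pow_left₀ (norm_nonneg b) hb 2
  have e2 : ‖c‖^2 ≤ r^2 := pow_le_pow_left₀ (norm_nonneg c) hc 2
  nlinarith [sq_nonneg (‖u 0‖), sq_nonneg (‖u 1‖)]

lemma opnorm_diag (a d : ℂ) (r : ℝ) (ha : ‖a‖ ≤ r) (hd : ‖d‖ ≤ r) (hr : 0 ≤ r) :
    ‖Matrix.toEuclideanCLM (𝕜 := ℂ) !![a, 0; 0, d]‖ ≤ r := by
  apply opnorm2_le _ r hr
  intro u
  have h0 : (!![a, 0; 0, d]).mulVec u 0 = a * u 0 := by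
    simp [Matrix.mulVec, dotProduct, Fin.sum_univ_two]
  have h1 : (!![a, 0; 0, d]).mulVec u 1 = d * u 1 := by
    simp [Matrix.mulVec, dotProduct, Fin.sum_univ_two]
  rw [h0, h1, norm_mul, norm_mul]
  have e1 : ‖a‖^2 ≤ r^2 := pow_le_pow_left₀ (norm_nonneg a) ha 2
  have e2 : ‖d‖^2 ≤ r^2 := pow_le_pow_left₀ (norm_nonneg d) hd 2
  nlinarith [sq_nonneg (‖u 0‖), sq_nonneg (‖u 1‖)]

lemma inv_bound (X : Matrix (Fin 2) (Fin 2) ℂ)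
    (h : ‖Matrix.toEuclideanCLM (n := Fin 2) (𝕜 := ℂ) X‖ ≤ 1/2) :
    IsUnit (1 - X) ∧ ‖Matrix.toEuclideanCLM (n := Fin 2) (𝕜 := ℂ) ((1 - X)⁻¹)‖ ≤ 2 := by
  set e := Matrix.toEuclideanCLM (n := Fin 2) (𝕜 := ℂ) with he
  set T := e X with hTdef
  have hT : ‖T‖ < 1 := lt_of_le_of_lt h (by norm_num)
  have hmap : e (1 - X) = 1 - T := by rw [map_sub, _root_.map_one]
  have hu : IsUnit (1 - T) := isUnit_one_sub_of_norm_lt_one hT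
  have hunit : IsUnit (1 - X) := by
    have h2 := hu.map e.symm
    rwa [← hmap, StarAlgEquiv.symm_apply_apply] at h2
  refine ⟨hunit, ?_⟩
  have hdet : IsUnit (1 - X).det := (Matrix.isUnit_iff_isUnit_det _).mp hunit
  have hinv2 : (1 - X)⁻¹ * (1 - X) = 1 := Matrix.nonsing_inv_mul _ hdet
  set S := e ((1 - X)⁻¹) with hS
  have hSeq : S * (1 - T) = 1 := by rw [← hmap, ← _root_.map_mul, hinv2, _root_.map_one]
  have hSval : S = ∑' n : ℕ, T ^ n := by
    have h1 : ((1 : _) - T) * (∑' n : ℕ, T ^ n) = 1 := mul_neg_geom_series T hT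
    calc S = S * (((1 : _) - T) * ∑' n : ℕ, T ^ n) := by rw [h1, mul_one]
      _ = (S * ((1 : _) - T)) * ∑' n : ℕ, T ^ n := by rw [mul_assoc]
      _ = ∑' n : ℕ, T ^ n := by rw [hSeq, one_mul]
  have hbound := tsum_geometric_le_of_norm_lt_one T hT
  have hone : ‖(1 : EuclideanSpace ℂ (Fin 2) →L[ℂ] EuclideanSpace ℂ (Fin 2))‖ = 1 :=
    ContinuousLinearMap.norm_id
  have h2 : (1:ℝ)/2 ≤ 1 - ‖T‖ := by linarith
  have h3 : (1 - ‖T‖)⁻¹ ≤ 2 := by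
    have := one_div_le_one_div_of_le (by norm_num : (0:ℝ) < 1/2) h2
    rw [one_div] at this; linarith
  calc ‖e ((1-X)⁻¹)‖ = ‖∑' n : ℕ, T ^ n‖ := by rw [← hSval]
    _ ≤ ‖(1 : EuclideanSpace ℂ (Fin 2) →L[ℂ] EuclideanSpace ℂ (Fin 2))‖ - 1 + (1 - ‖T‖)⁻¹ :=
        hbound
    _ ≤ 2 := by rw [hone]; linarith

lemma W_entries (κ Nv Nc Mv Mc Dv Dc r : ℂ) :
    κ • !![Nv, 0; 0, Nc] + !![0, Dc; Dv, 0] - !![0, Mc; Mv, 0] * !![Nv, 0; 0, Nc]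
        - r • (1 : Matrix (Fin 2) (Fin 2) ℂ)
      = !![κ * Nv - r, Dc - Mc * Nc; Dv - Mv * Nv, κ * Nc - r] := by
  ext i j
  fin_cases i <;> fin_cases j <;>
    simp [Matrix.mul_apply, Fin.sum_univ_two, Matrix.one_apply]

lemma sigma3_mul (a b : ℂ) : sigma3 * !![0, a; b, 0] = !![0, a; -b, 0] := by
  ext i j
  fin_cases i <;> fin_cases j <;>
    simp [sigma3, Matrix.mul_apply, Fin.sum_univ_two]

lemma continuousOn_mat2 {s : Set ℝ} (f g h i : ℝ → ℂ) (hf : ContinuousOn f s)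
    (hg : ContinuousOn g s) (hh : ContinuousOn h s) (hi : ContinuousOn i s) :
    ContinuousOn (fun x => !![f x, g x; h x, i x]) s := by
  rw [continuousOn_iff_continuous_restrict] at *
  apply continuous_matrix
  intro a b
  fin_cases a <;> fin_cases b <;> simp <;> assumption

noncomputable def matCLM : Matrix (Fin 2) (Fin 2) ℂ
    →ₗ[ℂ] (EuclideanSpace ℂ (Fin 2) →L[ℂ] EuclideanSpace ℂ (Fin 2)) :=
  { toFun := fun X => Matrix.toEuclideanCLM (n := Fin 2) (𝕜 := ℂ) X,
    map_add' := fun X Y => map_add _ X Y,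
    map_smul' := fun c X => map_smul _ c X }

lemma primitive_hasDerivAt (g : ℝ → ℝ) (hg : Continuous g) (γ t : ℝ) :
    HasDerivAt (fun u => ∫ s in u..γ, g s) (-(g t)) t := by
  have h1 : HasDerivAt (fun u => ∫ s in γ..u, g s) (g t) t :=
    intervalIntegral.integral_hasDerivAt_right (hg.intervalIntegrable _ _)
      hg.stronglyMeasurable.stronglyMeasurableAtFilter hg.continuousAt
  have h2 : (fun u => ∫ s in u..γ, g s) = fun u => -∫ s in γ..u, g s := by
    funext u; rw [intervalIntegral.integral_symm]
  rw [h2]; exact h1.neg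

lemma ftc_pow (g : ℝ → ℝ) (hg : Continuous g) (γ : ℝ) (n : ℕ) (x : ℝ) :
    ∫ t in x..γ, g t * (∫ s in t..γ, g s) ^ n
      = (∫ s in x..γ, g s) ^ (n + 1) / ((n : ℝ) + 1) := by
  set F : ℝ → ℝ := fun t => ∫ s in t..γ, g s with hFdef
  have hF : ∀ t, HasDerivAt F (-(g t)) t := fun t => primitive_hasDerivAt g hg γ t
  have hFc : Continuous F := continuous_iff_continuousAt.mpr fun t => (hF t).continuousAt
  set φ : ℝ → ℝ := fun t => g t * F t ^ n with hφdef
  have hφc : Continuous φ := hg.mul (hFc.pow n)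
  have hψ : ∀ y : ℝ, HasDerivAt (fun u => (∫ t in u..γ, φ t) - F u ^ (n+1) / ((n:ℝ)+1)) 0 y := by
    intro y
    have h1' : HasDerivAt (fun u => ∫ t in u..γ, φ t) (-(φ y)) y :=
      primitive_hasDerivAt φ hφc γ y
    have h3 : HasDerivAt (fun u => F u ^ (n+1) / ((n:ℝ)+1))
        ((((n:ℝ)+1) * F y ^ n * (-(g y))) / ((n:ℝ)+1)) y := by
      have := ((hF y).pow (n+1)).div_const ((n:ℝ)+1)
      simpa using this
    have h4 := h1'.sub h3
    have h5 : -(φ y) - ((((n:ℝ)+1) * F y ^ n * (-(g y))) / ((n:ℝ)+1)) = 0 := by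
      have hne : ((n:ℝ)+1) ≠ 0 := by positivity
      field_simp [hφdef]
      ring
    rwa [h5] at h4
  have hconst : ∀ y : ℝ, (∫ t in y..γ, φ t) - F y ^ (n+1) / ((n:ℝ)+1)
      = (∫ t in γ..γ, φ t) - F γ ^ (n+1) / ((n:ℝ)+1) :=
    fun y => is_const_of_deriv_eq_zero (fun z => (hψ z).differentiableAt)
      (fun z => (hψ z).deriv) y γ
  have hγ0 : F γ = 0 := intervalIntegral.integral_same
  have := hconst x
  rw [intervalIntegral.integral_same, hγ0] at this
  have h0 : (0:ℝ) ^ (n+1) = 0 := by simp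
  rw [h0] at this
  simp only [zero_div, sub_zero] at this
  linarith [this]

set_option maxHeartbeats 1000000 in
set_option synthInstance.maxHeartbeats 400000 in
theorem stmt19 (m γ : ℝ) (hm : 0 < m) (hγ : 0 < γ) (p₁ p₂ q : ℝ → ℝ)
    (hp₁ : ContDiffOn ℝ 1 p₁ (Set.Icc 0 γ)) (hp₂ : ContDiffOn ℝ 1 p₂ (Set.Icc 0 γ))
    (hq : ContDiffOn ℝ 1 q (Set.Icc 0 γ))
    (hp₁0 : ∀ x > γ, p₁ x = 0) (hp₂0 : ∀ x > γ, p₂ x = 0) (hq0 : ∀ x > γ, q x = 0)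
    (lam : ℝ) (hlam : m < |lam|)
    (k : ℝ) (hk : (k : ℂ) = qmom m (lam : ℂ)) (hk0 : k ≠ 0)
    (M N : ℝ → ℂ)
    (hM : ∀ t : ℝ, M t
      = Complex.exp (-Complex.I * ((∫ s in (0 : ℝ)..t, vfun p₁ p₂ s) : ℂ))
        * (((q t : ℂ) + Complex.I * (pfun p₁ p₂ t : ℂ))
          + (Complex.I / 2) * ((p₂ t : ℂ) * ((k / (lam + m) - 1 : ℝ) : ℂ)
            - (p₁ t : ℂ) * (((lam + m) / k - 1 : ℝ) : ℂ))))
    (hN : ∀ t : ℝ, N t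
      = (Complex.I / 2) * ((p₂ t : ℂ) * ((k / (lam + m) - 1 : ℝ) : ℂ)
          + (p₁ t : ℂ) * (((lam + m) / k - 1 : ℝ) : ℂ)))
    (MM NN W A : ℝ → Matrix (Fin 2) (Fin 2) ℂ)
    (hMM : ∀ t : ℝ, MM t = !![0, (starRingEnd ℂ) (M t); M t, 0])
    (hNN : ∀ t : ℝ, NN t = !![N t, 0; 0, (starRingEnd ℂ) (N t)])
    (hW : ∀ t : ℝ, W t
      = (2 * Complex.I * (k : ℂ)) • NN t
        + !![0, (starRingEnd ℂ) (deriv M t); deriv M t, 0]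
        - MM t * NN t
        - (((‖M t‖) ^ 2 : ℝ) : ℂ) • (1 : Matrix (Fin 2) (Fin 2) ℂ))
    (hA : ∀ x : ℝ, A x = 1 - (1 / (2 * Complex.I * (k : ℂ))) • (sigma3 * MM x))
    (hkM : ∀ x ∈ Set.Icc (0 : ℝ) γ, ‖M x‖ ≤ |k|)
    (Y : ℕ → ℝ → EuclideanSpace ℂ (Fin 2))
    (hY0 : ∀ x : ℝ, Y 0 x
      = Matrix.toEuclideanCLM (𝕜 := ℂ) ((A x)⁻¹)
          ((WithLp.equiv 2 (Fin 2 → ℂ)).symm ![Complex.exp (Complex.I * (k : ℂ) * (x : ℂ)), 0]))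
    (hYs : ∀ n : ℕ, ∀ x : ℝ, Y (n + 1) x
      = (1 / (2 * Complex.I * (k : ℂ))) • Matrix.toEuclideanCLM (𝕜 := ℂ) ((A x)⁻¹)
          (∫ t in x..γ, Matrix.toEuclideanCLM (𝕜 := ℂ) (Emat k (x - t))
            (Matrix.toEuclideanCLM (𝕜 := ℂ) (W t) (Y n t)))) :
    (∀ x ∈ Set.Icc (0 : ℝ) γ,
      IsUnit (A x) ∧ ‖Matrix.toEuclideanCLM (𝕜 := ℂ) ((A x)⁻¹)‖ ≤ 2) ∧
    (∀ n : ℕ, ∀ x ∈ Set.Icc (0 : ℝ) γ,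
      ‖Y n x‖
        ≤ (2 / (n.factorial * |k| ^ n))
          * (∫ s in x..γ, ‖Matrix.toEuclideanCLM (𝕜 := ℂ) (W s)‖) ^ n) := by
  classical
  have hγle : (0:ℝ) ≤ γ := hγ.le
  have hkpos : (0:ℝ) < |k| := abs_pos.mpr hk0
  have hcnorm : ‖(1 / (2 * Complex.I * (k:ℂ)))‖ = 1/(2*|k|) := by
    simp [norm_div, Complex.norm_real, Real.norm_eq_abs]
  -- Part 1
  have part1 : ∀ x ∈ Set.Icc (0:ℝ) γ,
      IsUnit (A x) ∧ ‖Matrix.toEuclideanCLM (𝕜 := ℂ) ((A x)⁻¹)‖ ≤ 2 := by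
    intro x hx
    have h1 : sigma3 * MM x = !![0, (starRingEnd ℂ) (M x); -(M x), 0] := by
      rw [hMM]; exact sigma3_mul _ _
    have hBn : ‖Matrix.toEuclideanCLM (n := Fin 2) (𝕜 := ℂ)
        ((1 / (2 * Complex.I * (k:ℂ))) • (sigma3 * MM x))‖ ≤ 1/2 := by
      have hms : Matrix.toEuclideanCLM (n := Fin 2) (𝕜 := ℂ)
          ((1 / (2 * Complex.I * (k:ℂ))) • (sigma3 * MM x))
          = (1 / (2 * Complex.I * (k:ℂ))) • Matrix.toEuclideanCLM (n := Fin 2) (𝕜 := ℂ)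
            (sigma3 * MM x) := map_smul _ _ _
      have hns := norm_smul (1 / (2 * Complex.I * (k:ℂ)))
        (Matrix.toEuclideanCLM (n := Fin 2) (𝕜 := ℂ) (sigma3 * MM x))
      rw [hms, hns, h1, hcnorm]
      have h2 : ‖Matrix.toEuclideanCLM (n := Fin 2) (𝕜 := ℂ)
          !![0, (starRingEnd ℂ) (M x); -(M x), 0]‖ ≤ ‖M x‖ := by
        apply opnorm_antidiag
        · simp
        · simp
        · exact norm_nonneg _
      calc 1/(2*|k|) * ‖Matrix.toEuclideanCLM (n := Fin 2) (𝕜 := ℂ)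
            !![0, (starRingEnd ℂ) (M x); -(M x), 0]‖
          ≤ 1/(2*|k|) * |k| := by
            apply mul_le_mul_of_nonneg_left (le_trans h2 (hkM x hx)) (by positivity)
        _ = 1/2 := by field_simp
    have := inv_bound _ hBn
    rw [hA x]
    exact this
  refine ⟨part1, ?_⟩
  -- notation for derivative model
  set ca : ℂ := ((k / (lam + m) - 1 : ℝ) : ℂ) with hca
  set cb : ℂ := (((lam + m) / k - 1 : ℝ) : ℂ) with hcb
  have hIcc := uniqueDiffOn_Icc hγ
  have hp₁c : ContinuousOn p₁ (Set.Icc 0 γ) := hp₁.continuousOn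
  have hp₂c : ContinuousOn p₂ (Set.Icc 0 γ) := hp₂.continuousOn
  have hqc : ContinuousOn q (Set.Icc 0 γ) := hq.continuousOn
  have hvc : ContinuousOn (vfun p₁ p₂) (Set.Icc 0 γ) := by
    have := (hp₁c.add hp₂c).div_const (2:ℝ)
    exact this
  have hcoe : ∀ (f : ℝ → ℝ), ContinuousOn f (Set.Icc 0 γ) →
      ContinuousOn (fun t => ((f t : ℝ) : ℂ)) (Set.Icc 0 γ) :=
    fun f hf => Complex.continuous_ofReal.comp_continuousOn hf
  have hvcC : ContinuousOn (fun s => ((vfun p₁ p₂ s : ℝ) : ℂ)) (Set.Icc 0 γ) := hcoe _ hvc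
  set V : ℝ → ℂ := fun t => ∫ s in (0:ℝ)..t, ((vfun p₁ p₂ s : ℝ) : ℂ) with hVdef
  have hVc : ContinuousOn V (Set.Icc 0 γ) := by
    have hint : IntegrableOn (fun s => ((vfun p₁ p₂ s : ℝ) : ℂ)) (Set.uIcc 0 γ) := by
      rw [Set.uIcc_of_le hγle]; exact hvcC.integrableOn_compact isCompact_Icc
    have := intervalIntegral.continuousOn_primitive_interval hint
    rwa [Set.uIcc_of_le hγle] at this
  have hVd : ∀ t ∈ Set.Ioo (0:ℝ) γ, HasDerivAt V ((vfun p₁ p₂ t : ℝ) : ℂ) t := by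
    intro t ht
    apply intervalIntegral.integral_hasDerivAt_right
    · apply ContinuousOn.intervalIntegrable
      apply hvcC.mono
      rw [Set.uIcc_of_le ht.1.le]
      exact Set.Icc_subset_Icc le_rfl ht.2.le
    · exact (ContinuousOn.stronglyMeasurableAtFilter isOpen_Ioo
        (hvcC.mono Set.Ioo_subset_Icc_self)) t ht
    · exact hvcC.continuousAt (Icc_mem_nhds ht.1 ht.2)
  set q' : ℝ → ℝ := derivWithin q (Set.Icc 0 γ) with hq'def
  set p₁' : ℝ → ℝ := derivWithin p₁ (Set.Icc 0 γ) with hp₁'def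
  set p₂' : ℝ → ℝ := derivWithin p₂ (Set.Icc 0 γ) with hp₂'def
  have hq'c : ContinuousOn q' (Set.Icc 0 γ) := hq.continuousOn_derivWithin hIcc le_rfl
  have hp₁'c : ContinuousOn p₁' (Set.Icc 0 γ) := hp₁.continuousOn_derivWithin hIcc le_rfl
  have hp₂'c : ContinuousOn p₂' (Set.Icc 0 γ) := hp₂.continuousOn_derivWithin hIcc le_rfl
  have hderiv : ∀ (f : ℝ → ℝ), ContDiffOn ℝ 1 f (Set.Icc 0 γ) →
      ∀ t ∈ Set.Ioo (0:ℝ) γ, HasDerivAt f (derivWithin f (Set.Icc 0 γ) t) t := by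
    intro f hf t ht
    have hmem : Set.Icc (0:ℝ) γ ∈ nhds t := Icc_mem_nhds ht.1 ht.2
    have hd := ((hf.differentiableOn one_ne_zero) t ⟨ht.1.le, ht.2.le⟩).differentiableAt hmem
    have heq : derivWithin f (Set.Icc 0 γ) t = deriv f t := derivWithin_of_mem_nhds hmem
    rw [heq]
    exact hd.hasDerivAt
  have hqd := hderiv q hq
  have hp₁d := hderiv p₁ hp₁
  have hp₂d := hderiv p₂ hp₂
  set G : ℝ → ℂ := fun t => ((q t : ℂ) + Complex.I * ((pfun p₁ p₂ t : ℝ) : ℂ))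
      + (Complex.I/2) * ((p₂ t : ℂ) * ca - (p₁ t : ℂ) * cb) with hGdef
  have hMeq : ∀ t, M t = Complex.exp (-Complex.I * V t) * G t := fun t => hM t
  set G' : ℝ → ℂ := fun t => ((q' t : ℂ) + Complex.I * (((p₁' t - p₂' t)/2 : ℝ) : ℂ))
      + (Complex.I/2) * ((p₂' t : ℂ) * ca - (p₁' t : ℂ) * cb) with hG'def
  have hGd : ∀ t ∈ Set.Ioo (0:ℝ) γ, HasDerivAt G (G' t) t := by
    intro t ht
    have h1 := (hqd t ht).ofReal_comp
    have hp : HasDerivAt (pfun p₁ p₂) ((p₁' t - p₂' t)/2) t :=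
      ((hp₁d t ht).sub (hp₂d t ht)).div_const 2
    have h2 := hp.ofReal_comp
    have h3 := ((((hp₂d t ht).ofReal_comp.mul_const ca).sub
      ((hp₁d t ht).ofReal_comp.mul_const cb)).const_mul (Complex.I/2))
    exact ((h1.add (h2.const_mul Complex.I)).add h3)
  set DD : ℝ → ℂ := fun t => Complex.exp (-Complex.I * V t)
      * ((-Complex.I * ((vfun p₁ p₂ t : ℝ) : ℂ)) * G t + G' t) with hDDdef
  have hMd : ∀ t ∈ Set.Ioo (0:ℝ) γ, HasDerivAt M (DD t) t := by
    intro t ht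
    have hE : HasDerivAt (fun u => Complex.exp (-Complex.I * V u))
        (Complex.exp (-Complex.I * V t) * (-Complex.I * ((vfun p₁ p₂ t : ℝ) : ℂ))) t := by
      have h1 := (hVd t ht).const_mul (-Complex.I)
      exact h1.cexp
    have h2 : HasDerivAt (fun u => Complex.exp (-Complex.I * V u) * G u) _ t := hE.mul (hGd t ht)
    have h3 : (fun u => Complex.exp (-Complex.I * V u) * G u) = M :=
      funext fun u => (hMeq u).symm
    rw [h3] at h2
    convert h2 using 1
    simp only [hDDdef]
    ring
  have hDt : ∀ t ∈ Set.Ioo (0:ℝ) γ, deriv M t = DD t := fun t ht => (hMd t ht).deriv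
  -- continuity of the models
  have hpc : ContinuousOn (pfun p₁ p₂) (Set.Icc 0 γ) := (hp₁c.sub hp₂c).div_const 2
  have hGc : ContinuousOn G (Set.Icc 0 γ) := by
    apply ContinuousOn.add
    · exact (hcoe q hqc).add (continuousOn_const.mul (hcoe _ hpc))
    · exact continuousOn_const.mul (((hcoe _ hp₂c).mul continuousOn_const).sub
        ((hcoe _ hp₁c).mul continuousOn_const))
  have hG'c : ContinuousOn G' (Set.Icc 0 γ) := by
    apply ContinuousOn.add
    · exact (hcoe _ hq'c).add (continuousOn_const.mul
        (hcoe _ ((hp₁'c.sub hp₂'c).div_const 2)))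
    · exact continuousOn_const.mul (((hcoe _ hp₂'c).mul continuousOn_const).sub
        ((hcoe _ hp₁'c).mul continuousOn_const))
  have hexpc : ContinuousOn (fun t => Complex.exp (-Complex.I * V t))
      (Set.Icc 0 γ) :=
    Complex.continuous_exp.comp_continuousOn (continuousOn_const.mul hVc)
  have hMc : ContinuousOn M (Set.Icc 0 γ) := by
    have : M = fun t => Complex.exp (-Complex.I * V t) * G t := funext hMeq
    rw [this]
    exact hexpc.mul hGc
  have hDDc : ContinuousOn DD (Set.Icc 0 γ) := by
    apply hexpc.mul
    exact ((continuousOn_const.mul (hcoe _ hvc)).mul hGc).add hG'c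
  have hNc : ContinuousOn N (Set.Icc 0 γ) := by
    have : N = fun t => (Complex.I / 2) * ((p₂ t : ℂ) * ca + (p₁ t : ℂ) * cb) := funext hN
    rw [this]
    exact continuousOn_const.mul (((hcoe _ hp₂c).mul continuousOn_const).add
      ((hcoe _ hp₁c).mul continuousOn_const))
  -- the model of W
  set WWf : ℝ → Matrix (Fin 2) (Fin 2) ℂ := fun t =>
    !![2 * Complex.I * (k:ℂ) * N t - (((‖M t‖)^2 : ℝ) : ℂ),
       (starRingEnd ℂ) (DD t) - (starRingEnd ℂ) (M t) * (starRingEnd ℂ) (N t);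
       DD t - M t * N t,
       2 * Complex.I * (k:ℂ) * ((starRingEnd ℂ) (N t)) - (((‖M t‖)^2 : ℝ) : ℂ)]
    with hWWdef
  have hWeq : ∀ t ∈ Set.Ioo (0:ℝ) γ, W t = WWf t := by
    intro t ht
    rw [hW t, hMM t, hNN t, hDt t ht]
    exact W_entries _ _ _ _ _ _ _ _
  have hstarc : ∀ (f : ℝ → ℂ), ContinuousOn f (Set.Icc 0 γ) →
      ContinuousOn (fun t => (starRingEnd ℂ) (f t)) (Set.Icc 0 γ) :=
    fun f hf => (Complex.continuous_conj).comp_continuousOn hf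
  have habsc : ContinuousOn (fun t => (((‖M t‖)^2 : ℝ) : ℂ)) (Set.Icc 0 γ) := by
    apply hcoe
    exact (continuous_norm.comp_continuousOn hMc).pow 2
  have hWWc : ContinuousOn WWf (Set.Icc 0 γ) := by
    apply continuousOn_mat2
    · exact (continuousOn_const.mul hNc).sub habsc
    · exact (hstarc _ hDDc).sub ((hstarc _ hMc).mul (hstarc _ hNc))
    · exact hDDc.sub (hMc.mul hNc)
    · exact (continuousOn_const.mul (hstarc _ hNc)).sub habsc
  -- the continuous norm function
  set gne : ℝ → ℝ := Set.IccExtend hγle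
    (fun t : Set.Icc (0:ℝ) γ => ‖Matrix.toEuclideanCLM (n := Fin 2) (𝕜 := ℂ) (WWf t)‖)
    with hgnedef
  have hgc : Continuous gne := by
    apply Continuous.Icc_extend'
    have h1 : Continuous ((Set.Icc (0:ℝ) γ).restrict WWf) :=
      continuousOn_iff_continuous_restrict.mp hWWc
    exact (matCLM.continuous_of_finiteDimensional.comp h1).norm
  have hgnn : ∀ t, 0 ≤ gne t := fun t => norm_nonneg _
  have hgeq : ∀ t ∈ Set.Ioo (0:ℝ) γ, ‖Matrix.toEuclideanCLM (𝕜 := ℂ) (W t)‖ = gne t := by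
    intro t ht
    have htm : t ∈ Set.Icc (0:ℝ) γ := Set.Ioo_subset_Icc_self ht
    rw [hWeq t ht, hgnedef, Set.IccExtend_of_mem hγle _ htm]
  have hae : ∀ᵐ (t : ℝ), t ≠ γ := by
    rw [MeasureTheory.ae_iff]
    have : {a : ℝ | ¬ a ≠ γ} = {γ} := by ext a; simp
    rw [this]
    exact Real.volume_singleton
  have hIeq : ∀ x ∈ Set.Icc (0:ℝ) γ,
      (∫ s in x..γ, ‖Matrix.toEuclideanCLM (𝕜 := ℂ) (W s)‖) = ∫ s in x..γ, gne s := by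
    intro x hx
    apply intervalIntegral.integral_congr_ae
    filter_upwards [hae] with t ht hmem
    rw [Set.uIoc_of_le hx.2] at hmem
    exact hgeq t ⟨lt_of_le_of_lt hx.1 hmem.1, lt_of_le_of_ne hmem.2 ht⟩
  set F : ℝ → ℝ := fun t => ∫ s in t..γ, gne s with hFdef
  have hFc : Continuous F := continuous_iff_continuousAt.mpr
    fun t => (primitive_hasDerivAt gne hgc γ t).continuousAt
  -- main induction
  have main : ∀ n, ∀ x ∈ Set.Icc (0:ℝ) γ,
      ‖Y n x‖ ≤ 2/((n.factorial : ℝ) * |k|^n) * F x ^ n := by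
    intro n
    induction n with
    | zero =>
      intro x hx
      rw [hY0 x]
      have h1 := (part1 x hx).2
      have h2 : ‖(WithLp.equiv 2 (Fin 2 → ℂ)).symm
          ![Complex.exp (Complex.I * (k:ℂ) * (x:ℂ)), 0]‖ = 1 := by
        rw [norm2_eq']
        have e0 : ((WithLp.equiv 2 (Fin 2 → ℂ)).symm
            ![Complex.exp (Complex.I * (k:ℂ) * (x:ℂ)), 0]) 0
            = Complex.exp (Complex.I * (k:ℂ) * (x:ℂ)) := rfl
        have e1 : ((WithLp.equiv 2 (Fin 2 → ℂ)).symm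
            ![Complex.exp (Complex.I * (k:ℂ) * (x:ℂ)), 0]) 1 = 0 := rfl
        rw [e0, e1]
        have : ‖Complex.exp (Complex.I * (k:ℂ) * (x:ℂ))‖ = 1 := by
          rw [Complex.norm_exp]
          simp [Complex.mul_re]
        rw [this]
        simp
      calc ‖Matrix.toEuclideanCLM (𝕜 := ℂ) ((A x)⁻¹) ((WithLp.equiv 2 (Fin 2 → ℂ)).symm
            ![Complex.exp (Complex.I * (k:ℂ) * (x:ℂ)), 0])‖
          ≤ ‖Matrix.toEuclideanCLM (𝕜 := ℂ) ((A x)⁻¹)‖ * 1 := by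
            rw [← h2]; exact ContinuousLinearMap.le_opNorm _ _
        _ ≤ 2 := by rw [mul_one]; exact h1
        _ = 2/((Nat.factorial 0 : ℝ) * |k|^0) * F x ^ 0 := by norm_num
    | succ n ih =>
      intro x hx
      rw [hYs n x, norm_smul, hcnorm]
      set J := ∫ t in x..γ, Matrix.toEuclideanCLM (𝕜 := ℂ) (Emat k (x - t))
        (Matrix.toEuclideanCLM (𝕜 := ℂ) (W t) (Y n t)) with hJdef
      set C : ℝ := 2/((n.factorial : ℝ) * |k|^n) with hCdef
      have hC : 0 ≤ C := by positivity
      have h1 : ‖Matrix.toEuclideanCLM (𝕜 := ℂ) ((A x)⁻¹) J‖ ≤ 2 * ‖J‖ := by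
        calc ‖Matrix.toEuclideanCLM (𝕜 := ℂ) ((A x)⁻¹) J‖
            ≤ ‖Matrix.toEuclideanCLM (𝕜 := ℂ) ((A x)⁻¹)‖ * ‖J‖ :=
              ContinuousLinearMap.le_opNorm _ _
          _ ≤ 2 * ‖J‖ := mul_le_mul_of_nonneg_right (part1 x hx).2 (norm_nonneg J)
      have h2 : ‖J‖ ≤ ∫ t in x..γ, ‖Matrix.toEuclideanCLM (𝕜 := ℂ) (Emat k (x - t))
          (Matrix.toEuclideanCLM (𝕜 := ℂ) (W t) (Y n t))‖ :=
        intervalIntegral.norm_integral_le_integral_norm hx.2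
      have h3 : (∫ t in x..γ, ‖Matrix.toEuclideanCLM (𝕜 := ℂ) (Emat k (x - t))
          (Matrix.toEuclideanCLM (𝕜 := ℂ) (W t) (Y n t))‖)
          ≤ ∫ t in x..γ, gne t * (C * F t ^ n) := by
        rw [intervalIntegral.integral_of_le hx.2, intervalIntegral.integral_of_le hx.2]
        apply MeasureTheory.integral_mono_of_nonneg
        · exact Filter.Eventually.of_forall fun t => norm_nonneg _
        · have hcont : Continuous fun t => gne t * (C * F t ^ n) :=
            hgc.mul (continuous_const.mul (hFc.pow n))
          exact hcont.integrableOn_Ioc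
        · refine (MeasureTheory.ae_restrict_iff' measurableSet_Ioc).mpr ?_
          filter_upwards [hae] with t htne hmem
          have htIoo : t ∈ Set.Ioo (0:ℝ) γ :=
            ⟨lt_of_le_of_lt hx.1 hmem.1, lt_of_le_of_ne hmem.2 htne⟩
          have htIcc : t ∈ Set.Icc (0:ℝ) γ := Set.Ioo_subset_Icc_self htIoo
          have hb1 : ‖Matrix.toEuclideanCLM (𝕜 := ℂ) (Emat k (x - t))‖ ≤ 1 := by
            have he : Emat k (x - t)
                = !![Complex.exp (Complex.I * (k:ℂ) * ((x - t : ℝ):ℂ)), 0;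
                     0, Complex.exp (-(Complex.I * (k:ℂ) * ((x - t : ℝ):ℂ)))] := rfl
            rw [he]
            apply opnorm_diag <;>
              simp [Complex.norm_exp, Complex.mul_re]
          calc ‖Matrix.toEuclideanCLM (𝕜 := ℂ) (Emat k (x - t)) (Matrix.toEuclideanCLM (𝕜 := ℂ) (W t) (Y n t))‖ ≤ ‖Matrix.toEuclideanCLM (𝕜 := ℂ) (Emat k (x - t))‖ * ‖Matrix.toEuclideanCLM (𝕜 := ℂ) (W t) (Y n t)‖ :=
                ContinuousLinearMap.le_opNorm _ _
            _ ≤ 1 * (‖Matrix.toEuclideanCLM (𝕜 := ℂ) (W t)‖ * ‖Y n t‖) := by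
                apply mul_le_mul hb1 (ContinuousLinearMap.le_opNorm _ _)
                  (norm_nonneg _) zero_le_one
            _ = gne t * ‖Y n t‖ := by rw [one_mul, hgeq t htIoo]
            _ ≤ gne t * (C * F t ^ n) :=
                mul_le_mul_of_nonneg_left (ih t htIcc) (hgnn t)
      have h4 : (∫ t in x..γ, gne t * (C * F t ^ n)) = C * (F x ^ (n+1) / ((n:ℝ)+1)) := by
        have hre : (fun t => gne t * (C * F t ^ n)) = fun t => C * (gne t * F t ^ n) := by
          funext t; ring
        rw [hre, intervalIntegral.integral_const_mul]
        rw [ftc_pow gne hgc γ n x]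
      have hfinal : 1/(2*|k|) * ‖Matrix.toEuclideanCLM (𝕜 := ℂ) ((A x)⁻¹) J‖
          ≤ 1/(2*|k|) * (2 * (C * (F x ^ (n+1) / ((n:ℝ)+1)))) := by
        apply mul_le_mul_of_nonneg_left _ (by positivity)
        calc ‖Matrix.toEuclideanCLM (𝕜 := ℂ) ((A x)⁻¹) J‖ ≤ 2 * ‖J‖ := h1
          _ ≤ 2 * (C * (F x ^ (n+1) / ((n:ℝ)+1))) := by
              apply mul_le_mul_of_nonneg_left _ (by norm_num)
              calc ‖J‖ ≤ _ := h2
                _ ≤ ∫ t in x..γ, gne t * (C * F t ^ n) := h3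
                _ = C * (F x ^ (n+1) / ((n:ℝ)+1)) := h4
      calc 1/(2*|k|) * ‖Matrix.toEuclideanCLM (𝕜 := ℂ) ((A x)⁻¹) J‖
          ≤ 1/(2*|k|) * (2 * (C * (F x ^ (n+1) / ((n:ℝ)+1)))) := hfinal
        _ = 2/(((n+1).factorial : ℝ) * |k|^(n+1)) * F x ^ (n+1) := by
            rw [hCdef, Nat.factorial_succ]
            have hfac : ((n.factorial : ℝ)) ≠ 0 := by positivity
            have hk' : |k| ≠ 0 := ne_of_gt hkpos
            push_cast
            field_simp
            ring
  intro n x hx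
  rw [hIeq x hx]
  exact main n x hx
end
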